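/- arXiv:1501.00754 — 10 statements merged into one kernel-verified Lean document; each statement's English description precedes it below -/
import Mathlib

section
/- The map a ↦ τ'_a is a Lie algebra homomorphism from g into Cl(g,κ) equipped with the commutator bracket: τ'_{[a,b]} = τ'_a·τ'_b − τ'_b·τ'_a for all a, b ∈ g. -/
open CliffordAlgebra in
/-- The map `a ↦ τ'_a` is a Lie algebra homomorphism from `g` into
`Cl(g,κ)` with the commutator bracket: `τ'_{[a,b]} = τ'_a·τ'_b − τ'_b·τ'_a`. -/
theorem statement2 (g : Type*) [LieRing g] [LieAlgebra ℂ g] [FiniteDimensional ℂ g]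
    (κ : LinearMap.BilinForm ℂ g)
    (hsymm : ∀ a b : g, κ a b = κ b a)
    (hinv : ∀ a b c : g, κ ⁅a, b⁆ c = κ a ⁅b, c⁆)
    (hnd : κ.Nondegenerate)
    (m : ℕ) (e : Module.Basis (Fin m) ℂ g) (e' : Fin m → g)
    (hdual : ∀ i j, κ (e i) (e' j) = if i = j then (1 : ℂ) else 0)
    (τ' : g → CliffordAlgebra (LinearMap.BilinMap.toQuadraticMap κ))
    (hτ' : ∀ a : g, τ' a = (4 : ℂ)⁻¹ •
      ∑ i : Fin m, ι (LinearMap.BilinMap.toQuadraticMap κ) ⁅a, e i⁆ *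
        ι (LinearMap.BilinMap.toQuadraticMap κ) (e' i)) :
    ∀ a b : g, τ' ⁅a, b⁆ = τ' a * τ' b - τ' b * τ' a := by
  intro a b
  set I : g →ₗ[ℂ] CliffordAlgebra (LinearMap.BilinMap.toQuadraticMap κ) :=
    ι (LinearMap.BilinMap.toQuadraticMap κ) with hIdef
  -- anticommutation relation
  have hanti : ∀ x y : g, I x * I y
      = algebraMap ℂ (CliffordAlgebra (LinearMap.BilinMap.toQuadraticMap κ)) (2 * κ x y)
        - I y * I x := by
    intro x y
    rw [eq_sub_iff_add_eq, hIdef, ι_mul_ι_add_swap,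
      LinearMap.BilinMap.polar_toQuadraticMap, hsymm y x]
    ring_nf
  -- bracket with a linear combination
  have hlin : ∀ (c : g) (f : Fin m → ℂ) (v : Fin m → g),
      I ⁅c, ∑ i, f i • v i⁆ = ∑ i, f i • I ⁅c, v i⁆ := by
    intro c f v
    have h := map_sum (I ∘ₗ (LieAlgebra.ad ℂ g c)) (fun i => f i • v i) Finset.univ
    simp only [LinearMap.comp_apply, LieAlgebra.ad_apply, map_smul] at h
    exact h
  -- I of a linear combination
  have hIlin : ∀ (f : Fin m → ℂ) (v : Fin m → g),
      I (∑ i, f i • v i) = ∑ i, f i • I (v i) := by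
    intro f v
    rw [map_sum]
    exact Finset.sum_congr rfl fun i _ => map_smul _ _ _
  -- first expansion lemma
  have hspan1 : ∀ x : g, ∑ i, κ x (e' i) • e i = x := by
    intro x
    have h : (∑ i, (κ.flip (e' i)).smulRight (e i) : g →ₗ[ℂ] g) = LinearMap.id := by
      apply e.ext
      intro j
      simp only [LinearMap.sum_apply, LinearMap.smulRight_apply, LinearMap.flip_apply,
        LinearMap.id_apply, hdual]
      simp [hdual, ite_smul]
    have := congrFun (congrArg (fun f : g →ₗ[ℂ] g => (f : g → g)) h) x
    simpa using this
  -- expansion identity for κ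
  have hκexp : ∀ y x : g, κ y x = ∑ i, κ y (e' i) * κ (e i) x := by
    intro y x
    conv_lhs => rw [← hspan1 y]
    simp
  -- second expansion lemma
  have hspan2 : ∀ x : g, ∑ i, κ (e i) x • e' i = x := by
    intro x
    have h1 : ((∑ i, κ (e i) x • e' i) - x) = 0 := by
      apply hnd.1
      intro n
      rw [hsymm, map_sub, map_sum, sub_eq_zero]
      simp only [map_smul, smul_eq_mul]
      rw [hκexp n x]
      exact Finset.sum_congr rfl fun i _ => mul_comm _ _
    exact sub_eq_zero.mp h1
  -- triple product commutator
  have hC : ∀ u v w : g, I u * I v * I w - I w * (I u * I v)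
      = (2 * κ v w) • I u - (2 * κ u w) • I v := by
    intro u v w
    have h2 : I w * I u
        = algebraMap ℂ (CliffordAlgebra (LinearMap.BilinMap.toQuadraticMap κ)) (2 * κ u w)
          - I u * I w := by
      rw [hanti u w]; abel
    calc I u * I v * I w - I w * (I u * I v)
        = I u * (I v * I w) - (I w * I u) * I v := by rw [mul_assoc, mul_assoc]
      _ = I u * (algebraMap ℂ _ (2 * κ v w) - I w * I v)
          - (algebraMap ℂ _ (2 * κ u w) - I u * I w) * I v := by
          rw [← hanti v w, ← h2]
      _ = (2 * κ v w) • I u - (2 * κ u w) • I v := by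
          simp only [mul_sub, sub_mul, ← mul_assoc, ← Algebra.commutes, ← Algebra.smul_def]
          abel
  -- τ' acts as a derivation on generators
  have hD : ∀ x : g, τ' a * I x - I x * τ' a = I ⁅a, x⁆ := by
    intro x
    rw [hτ' a]
    rw [smul_mul_assoc, mul_smul_comm, ← smul_sub, Finset.sum_mul, Finset.mul_sum,
      ← Finset.sum_sub_distrib]
    have hterm : ∀ i ∈ Finset.univ,
        I ⁅a, e i⁆ * I (e' i) * I x - I x * (I ⁅a, e i⁆ * I (e' i))
        = (2 * κ (e' i) x) • I ⁅a, e i⁆ - (2 * κ ⁅a, e i⁆ x) • I (e' i) :=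
      fun i _ => hC _ _ _
    rw [Finset.sum_congr rfl hterm, Finset.sum_sub_distrib]
    have hsum1 : ∑ i, (2 * κ (e' i) x) • I ⁅a, e i⁆ = (2 : ℂ) • I ⁅a, x⁆ := by
      have h : ∀ i ∈ Finset.univ, (2 * κ (e' i) x) • I ⁅a, e i⁆
          = (2 : ℂ) • (κ x (e' i) • I ⁅a, e i⁆) := by
        intro i _
        rw [hsymm (e' i) x, smul_smul]
      rw [Finset.sum_congr rfl h, ← Finset.smul_sum, ← hlin a (fun i => κ x (e' i)) e,
        hspan1]
    have hsum2 : ∑ i, (2 * κ ⁅a, e i⁆ x) • I (e' i) = (-2 : ℂ) • I ⁅a, x⁆ := by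
      have hco : ∀ i, κ ⁅a, e i⁆ x = -(κ (e i) ⁅a, x⁆) := by
        intro i
        rw [← hinv (e i) a x, ← lie_skew (e i) a, map_neg, LinearMap.neg_apply, neg_neg]
      have h : ∀ i ∈ Finset.univ, (2 * κ ⁅a, e i⁆ x) • I (e' i)
          = (-2 : ℂ) • (κ (e i) ⁅a, x⁆ • I (e' i)) := by
        intro i _
        rw [hco i, smul_smul]
        ring_nf
      rw [Finset.sum_congr rfl h, ← Finset.smul_sum,
        ← hIlin (fun i => κ (e i) ⁅a, x⁆) e', hspan2]
    rw [hsum1, hsum2, ← sub_smul, smul_smul]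
    norm_num
  -- derivation on products of two generators
  have hder : ∀ x y : g, τ' a * (I x * I y) - I x * I y * τ' a
      = I ⁅a, x⁆ * I y + I x * I ⁅a, y⁆ := by
    intro x y
    have h1 := hD x
    have h2 := hD y
    calc τ' a * (I x * I y) - I x * I y * τ' a
        = (τ' a * I x - I x * τ' a) * I y + I x * (τ' a * I y - I y * τ' a) := by
          noncomm_ring
      _ = I ⁅a, x⁆ * I y + I x * I ⁅a, y⁆ := by rw [h1, h2]
  -- the key exchange identity
  have hE : ∑ i, I ⁅b, e i⁆ * I ⁅a, e' i⁆ = -∑ j, I ⁅b, ⁅a, e j⁆⁆ * I (e' j) := by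
    have hco : ∀ i j, κ (e j) ⁅a, e' i⁆ = -(κ ⁅a, e j⁆ (e' i)) := by
      intro i j
      rw [← hinv (e j) a (e' i), ← lie_skew a (e j), map_neg, LinearMap.neg_apply, neg_neg]
    have hstep : ∀ i, I ⁅a, e' i⁆ = ∑ j, (-(κ ⁅a, e j⁆ (e' i))) • I (e' j) := by
      intro i
      conv_lhs => rw [← hspan2 ⁅a, e' i⁆]
      rw [hIlin (fun j => κ (e j) ⁅a, e' i⁆) e']
      exact Finset.sum_congr rfl fun j _ => by rw [hco i j]
    calc ∑ i, I ⁅b, e i⁆ * I ⁅a, e' i⁆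
        = ∑ i, ∑ j, (-(κ ⁅a, e j⁆ (e' i))) • (I ⁅b, e i⁆ * I (e' j)) := by
          refine Finset.sum_congr rfl fun i _ => ?_
          rw [hstep i, Finset.mul_sum]
          exact Finset.sum_congr rfl fun j _ => by rw [mul_smul_comm]
      _ = ∑ j, (∑ i, (-(κ ⁅a, e j⁆ (e' i))) • I ⁅b, e i⁆) * I (e' j) := by
          rw [Finset.sum_comm]
          refine Finset.sum_congr rfl fun j _ => ?_
          rw [Finset.sum_mul]
          exact Finset.sum_congr rfl fun i _ => by rw [smul_mul_assoc]
      _ = -∑ j, I ⁅b, ⁅a, e j⁆⁆ * I (e' j) := by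
          rw [← Finset.sum_neg_distrib]
          refine Finset.sum_congr rfl fun j _ => ?_
          have h1 : ∑ i, (κ ⁅a, e j⁆ (e' i)) • I ⁅b, e i⁆ = I ⁅b, ⁅a, e j⁆⁆ := by
            rw [← hlin b (fun i => κ ⁅a, e j⁆ (e' i)) e, hspan1]
          have h2 : ∑ i, (-(κ ⁅a, e j⁆ (e' i))) • I ⁅b, e i⁆ = -I ⁅b, ⁅a, e j⁆⁆ := by
            rw [← h1, ← Finset.sum_neg_distrib]
            exact Finset.sum_congr rfl fun i _ => by rw [neg_smul]
          rw [h2, neg_mul]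
  -- put everything together
  rw [hτ' ⁅a, b⁆, hτ' b]
  rw [mul_smul_comm, smul_mul_assoc, ← smul_sub, Finset.mul_sum, Finset.sum_mul,
    ← Finset.sum_sub_distrib]
  congr 1
  have hterm : ∀ i ∈ Finset.univ,
      τ' a * (I ⁅b, e i⁆ * I (e' i)) - I ⁅b, e i⁆ * I (e' i) * τ' a
      = I ⁅a, ⁅b, e i⁆⁆ * I (e' i) + I ⁅b, e i⁆ * I ⁅a, e' i⁆ :=
    fun i _ => hder _ _
  rw [Finset.sum_congr rfl hterm, Finset.sum_add_distrib, hE, ← sub_eq_add_neg,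
    ← Finset.sum_sub_distrib]
  refine Finset.sum_congr rfl fun i _ => ?_
  rw [← sub_mul, ← map_sub, lie_lie]
end

section
/- For every a ∈ g one has τ'_a = −(1/4)(Θ·ι(a) + ι(a)·Θ) in Cl(g,κ). -/
private lemma triple_anti {A : Type*} [Ring A] [Algebra ℂ A] (x y z w : A) (α β γ : ℂ)
    (h1 : w * x = α • (1:A) - x * w)
    (h2 : w * y = β • (1:A) - y * w)
    (h3 : w * z = γ • (1:A) - z * w) :
    w * (x * y * z) + (x * y * z) * w
      = α • (y * z) - β • (x * z) + γ • (x * y) := by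
  have e1 : w * (x * y * z) = (w * x) * y * z := by noncomm_ring
  rw [e1, h1]
  have e2 : x * w * y * z = x * (w * y) * z := by noncomm_ring
  rw [sub_mul, sub_mul, e2, h2]
  have e3 : x * (y * w) * z = x * y * (w * z) := by noncomm_ring
  rw [mul_sub, sub_mul, e3, h3]
  simp only [smul_mul_assoc, one_mul, mul_smul_comm, mul_sub, mul_one, mul_assoc]
  abel

open CliffordAlgebra in
/-- For every `a ∈ g` one has
`τ'_a = −(1/4)(Θ·ι(a) + ι(a)·Θ)` in `Cl(g,κ)`, where
`Θ = (1/6) Σ_{i,j,k} κ(e_i,[e_j,e_k]) ι(e^i)ι(e^j)ι(e^k)`. -/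
theorem statement3 (g : Type*) [LieRing g] [LieAlgebra ℂ g] [FiniteDimensional ℂ g]
    (κ : LinearMap.BilinForm ℂ g)
    (hsymm : ∀ a b : g, κ a b = κ b a)
    (hinv : ∀ a b c : g, κ ⁅a, b⁆ c = κ a ⁅b, c⁆)
    (hnd : κ.Nondegenerate)
    (m : ℕ) (e : Module.Basis (Fin m) ℂ g) (e' : Fin m → g)
    (hdual : ∀ i j, κ (e i) (e' j) = if i = j then (1 : ℂ) else 0)
    (τ' : g → CliffordAlgebra (LinearMap.BilinMap.toQuadraticMap κ))
    (hτ' : ∀ a : g, τ' a = (4 : ℂ)⁻¹ •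
      ∑ i : Fin m, ι (LinearMap.BilinMap.toQuadraticMap κ) ⁅a, e i⁆ *
        ι (LinearMap.BilinMap.toQuadraticMap κ) (e' i))
    (Θ : CliffordAlgebra (LinearMap.BilinMap.toQuadraticMap κ))
    (hΘ : Θ = (6 : ℂ)⁻¹ •
      ∑ i : Fin m, ∑ j : Fin m, ∑ k : Fin m, κ (e i) ⁅e j, e k⁆ •
        (ι (LinearMap.BilinMap.toQuadraticMap κ) (e' i) *
          ι (LinearMap.BilinMap.toQuadraticMap κ) (e' j) *
          ι (LinearMap.BilinMap.toQuadraticMap κ) (e' k))) :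
    ∀ a : g, τ' a = -((4 : ℂ)⁻¹ •
      (Θ * ι (LinearMap.BilinMap.toQuadraticMap κ) a +
        ι (LinearMap.BilinMap.toQuadraticMap κ) a * Θ)) := by
  intro a
  rw [hτ' a, hΘ]
  set Q := LinearMap.BilinMap.toQuadraticMap κ with hQ
  -- anticommutation relations
  have hac : ∀ x y : g, ι Q x * ι Q y
      = (κ x y + κ y x) • (1 : CliffordAlgebra Q) - ι Q y * ι Q x := by
    intro x y
    rw [CliffordAlgebra.ι_mul_ι_comm, hQ, LinearMap.BilinMap.polar_toQuadraticMap,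
      Algebra.algebraMap_eq_smul_one]
  have hac2 : ∀ x : g, ι Q a * ι Q x
      = (2 * κ a x) • (1 : CliffordAlgebra Q) - ι Q x * ι Q a := by
    intro x
    rw [hac a x, hsymm x a, ← two_mul]
  -- expansion in the dual basis
  have hdual' : ∀ i j, κ (e' i) (e j) = if j = i then (1:ℂ) else 0 := fun i j => by
    rw [hsymm, hdual]
  have hexp : ∀ x : g, ∑ k : Fin m, κ x (e k) • e' k = x := by
    intro x
    have h0 : ∀ y, κ ((∑ k : Fin m, κ x (e k) • e' k) - x) y = 0 := by
      intro y
      have hb : ∀ j, κ ((∑ k : Fin m, κ x (e k) • e' k) - x) (e j) = 0 := by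
        intro j
        simp only [map_sub, map_sum, map_smul, LinearMap.sub_apply, LinearMap.coe_sum,
          Finset.sum_apply, LinearMap.smul_apply, smul_eq_mul, hdual']
        simp
      calc κ ((∑ k : Fin m, κ x (e k) • e' k) - x) y
          = κ ((∑ k : Fin m, κ x (e k) • e' k) - x) (∑ j, e.repr y j • e j) := by
            rw [Module.Basis.sum_repr e y]
        _ = 0 := by simp only [map_sum, map_smul, hb, smul_eq_mul, mul_zero,
              Finset.sum_const_zero]
    exact sub_eq_zero.mp (hnd.1 _ h0)
  have hiexp : ∀ x : g, ι Q x = ∑ k : Fin m, κ x (e k) • ι Q (e' k) := by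
    intro x
    conv_lhs => rw [← hexp x]
    simp [map_sum, map_smul]
  -- contraction identity
  have hcontr : ∀ w : g, ∑ i : Fin m, κ a (e' i) * κ (e i) w = κ a w := by
    intro w
    conv_rhs => rw [← hexp w]
    rw [map_sum]
    refine Finset.sum_congr rfl fun i _ => ?_
    rw [map_smul, smul_eq_mul, hsymm (e i) w, mul_comm]
  -- total antisymmetry of the structure constants
  have cswap : ∀ i j k, κ (e j) ⁅e i, e k⁆ = -κ (e i) ⁅e j, e k⁆ := by
    intro i j k
    have hsk : (⁅e j, e i⁆ : g) = -⁅e i, e j⁆ := (lie_skew _ _).symm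
    rw [← hinv, ← hinv, hsk, map_neg, LinearMap.neg_apply]
  have ccyc : ∀ i j k, κ (e j) ⁅e k, e i⁆ = κ (e i) ⁅e j, e k⁆ := by
    intro i j k
    rw [← hinv, hsymm]
  -- the trace of ad a vanishes
  have htr : ∑ i : Fin m, κ ⁅a, e i⁆ (e' i) = 0 := by
    have hM : ∀ i k, κ ⁅a, e i⁆ (e k) = -κ ⁅a, e k⁆ (e i) := by
      intro i k
      rw [hinv, hinv, ← lie_skew (e i) (e k), map_neg]
    have step : ∀ i, κ ⁅a, e i⁆ (e' i)
        = ∑ k : Fin m, κ ⁅a, e i⁆ (e k) * κ (e' k) (e' i) := by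
      intro i
      conv_lhs => rw [show (⁅a, e i⁆ : g) = ∑ k : Fin m, κ ⁅a, e i⁆ (e k) • e' k from
        (hexp _).symm]
      simp [map_sum, map_smul, LinearMap.sum_apply]
    have hTT : (∑ i : Fin m, κ ⁅a, e i⁆ (e' i)) = -∑ i : Fin m, κ ⁅a, e i⁆ (e' i) :=
      calc ∑ i : Fin m, κ ⁅a, e i⁆ (e' i)
          = ∑ i : Fin m, ∑ k : Fin m, κ ⁅a, e i⁆ (e k) * κ (e' k) (e' i) :=
            Finset.sum_congr rfl fun i _ => step i
        _ = ∑ k : Fin m, ∑ i : Fin m, κ ⁅a, e i⁆ (e k) * κ (e' k) (e' i) := Finset.sum_comm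
        _ = ∑ k : Fin m, ∑ i : Fin m, -(κ ⁅a, e k⁆ (e i) * κ (e' i) (e' k)) := by
            refine Finset.sum_congr rfl fun k _ => Finset.sum_congr rfl fun i _ => ?_
            rw [hM i k, hsymm (e' k) (e' i)]; ring
        _ = -∑ i : Fin m, κ ⁅a, e i⁆ (e' i) := by
            simp only [Finset.sum_neg_distrib]
            exact neg_inj.mpr (Finset.sum_congr rfl fun k _ => (step k).symm)
    linear_combination hTT / 2
  -- triple anticommutator
  have hanti : ∀ i j k : Fin m,
      ι Q a * (ι Q (e' i) * ι Q (e' j) * ι Q (e' k))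
        + (ι Q (e' i) * ι Q (e' j) * ι Q (e' k)) * ι Q a
      = (2 * κ a (e' i)) • (ι Q (e' j) * ι Q (e' k))
        - (2 * κ a (e' j)) • (ι Q (e' i) * ι Q (e' k))
        + (2 * κ a (e' k)) • (ι Q (e' i) * ι Q (e' j)) :=
    fun i j k => triple_anti _ _ _ _ _ _ _ (hac2 (e' i)) (hac2 (e' j)) (hac2 (e' k))
  -- rotation of triple sums
  have hrot : ∀ (f : Fin m → Fin m → Fin m → CliffordAlgebra Q),
      ∑ i : Fin m, ∑ j : Fin m, ∑ k : Fin m, f i j k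
        = ∑ i : Fin m, ∑ j : Fin m, ∑ k : Fin m, f j k i := by
    intro f
    calc ∑ i : Fin m, ∑ j : Fin m, ∑ k : Fin m, f i j k
        = ∑ i : Fin m, ∑ k : Fin m, ∑ j : Fin m, f i j k :=
          Finset.sum_congr rfl fun i _ => Finset.sum_comm
      _ = ∑ k : Fin m, ∑ i : Fin m, ∑ j : Fin m, f i j k := Finset.sum_comm
  have hrot' : ∀ (f : Fin m → Fin m → Fin m → CliffordAlgebra Q),
      ∑ i : Fin m, ∑ j : Fin m, ∑ k : Fin m, f i j k
        = ∑ i : Fin m, ∑ j : Fin m, ∑ k : Fin m, f k i j := by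
    intro f
    calc ∑ i : Fin m, ∑ j : Fin m, ∑ k : Fin m, f i j k
        = ∑ j : Fin m, ∑ i : Fin m, ∑ k : Fin m, f i j k := Finset.sum_comm
      _ = ∑ i : Fin m, ∑ j : Fin m, ∑ k : Fin m, f k i j :=
          Finset.sum_congr rfl fun _ _ => Finset.sum_comm
  -- second sum equals minus the first
  have hswap2 : (∑ i : Fin m, ∑ j : Fin m, ∑ k : Fin m,
        (κ (e i) ⁅e j, e k⁆ * (2 * κ a (e' j))) • (ι Q (e' i) * ι Q (e' k)))
      = -∑ i : Fin m, ∑ j : Fin m, ∑ k : Fin m,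
        (κ (e i) ⁅e j, e k⁆ * (2 * κ a (e' i))) • (ι Q (e' j) * ι Q (e' k)) :=
    calc (∑ i : Fin m, ∑ j : Fin m, ∑ k : Fin m,
          (κ (e i) ⁅e j, e k⁆ * (2 * κ a (e' j))) • (ι Q (e' i) * ι Q (e' k)))
        = ∑ i : Fin m, ∑ j : Fin m, ∑ k : Fin m,
          (κ (e j) ⁅e i, e k⁆ * (2 * κ a (e' i))) • (ι Q (e' j) * ι Q (e' k)) :=
          Finset.sum_comm
      _ = ∑ i : Fin m, ∑ j : Fin m, ∑ k : Fin m,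
          -((κ (e i) ⁅e j, e k⁆ * (2 * κ a (e' i))) • (ι Q (e' j) * ι Q (e' k))) := by
          refine Finset.sum_congr rfl fun i _ => Finset.sum_congr rfl fun j _ =>
            Finset.sum_congr rfl fun k _ => ?_
          rw [cswap i j k, neg_mul, neg_smul]
      _ = -∑ i : Fin m, ∑ j : Fin m, ∑ k : Fin m,
          (κ (e i) ⁅e j, e k⁆ * (2 * κ a (e' i))) • (ι Q (e' j) * ι Q (e' k)) := by
          simp only [Finset.sum_neg_distrib]
  -- third sum equals the first
  have hswap3 : (∑ i : Fin m, ∑ j : Fin m, ∑ k : Fin m,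
        (κ (e i) ⁅e j, e k⁆ * (2 * κ a (e' k))) • (ι Q (e' i) * ι Q (e' j)))
      = ∑ i : Fin m, ∑ j : Fin m, ∑ k : Fin m,
        (κ (e i) ⁅e j, e k⁆ * (2 * κ a (e' i))) • (ι Q (e' j) * ι Q (e' k)) :=
    calc (∑ i : Fin m, ∑ j : Fin m, ∑ k : Fin m,
          (κ (e i) ⁅e j, e k⁆ * (2 * κ a (e' k))) • (ι Q (e' i) * ι Q (e' j)))
        = ∑ i : Fin m, ∑ j : Fin m, ∑ k : Fin m,
          (κ (e j) ⁅e k, e i⁆ * (2 * κ a (e' i))) • (ι Q (e' j) * ι Q (e' k)) :=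
          hrot _
      _ = ∑ i : Fin m, ∑ j : Fin m, ∑ k : Fin m,
          (κ (e i) ⁅e j, e k⁆ * (2 * κ a (e' i))) • (ι Q (e' j) * ι Q (e' k)) := by
          refine Finset.sum_congr rfl fun i _ => Finset.sum_congr rfl fun j _ =>
            Finset.sum_congr rfl fun k _ => ?_
          rw [ccyc i j k]
  -- Step B: the anticommutator of ι(a) with Θ
  have hB : ι Q a * ((6:ℂ)⁻¹ • ∑ i : Fin m, ∑ j : Fin m, ∑ k : Fin m, κ (e i) ⁅e j, e k⁆ •
            (ι Q (e' i) * ι Q (e' j) * ι Q (e' k)))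
        + ((6:ℂ)⁻¹ • ∑ i : Fin m, ∑ j : Fin m, ∑ k : Fin m, κ (e i) ⁅e j, e k⁆ •
            (ι Q (e' i) * ι Q (e' j) * ι Q (e' k))) * ι Q a
      = ∑ j : Fin m, ι Q (e' j) * ι Q ⁅a, e j⁆ :=
    calc ι Q a * ((6:ℂ)⁻¹ • ∑ i : Fin m, ∑ j : Fin m, ∑ k : Fin m, κ (e i) ⁅e j, e k⁆ •
            (ι Q (e' i) * ι Q (e' j) * ι Q (e' k)))
        + ((6:ℂ)⁻¹ • ∑ i : Fin m, ∑ j : Fin m, ∑ k : Fin m, κ (e i) ⁅e j, e k⁆ •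
            (ι Q (e' i) * ι Q (e' j) * ι Q (e' k))) * ι Q a
        = (6:ℂ)⁻¹ • ∑ i : Fin m, ∑ j : Fin m, ∑ k : Fin m, κ (e i) ⁅e j, e k⁆ •
            (ι Q a * (ι Q (e' i) * ι Q (e' j) * ι Q (e' k))
              + (ι Q (e' i) * ι Q (e' j) * ι Q (e' k)) * ι Q a) := by
          simp only [mul_smul_comm, smul_mul_assoc, Finset.mul_sum, Finset.sum_mul,
            smul_add, Finset.sum_add_distrib]
      _ = (6:ℂ)⁻¹ • ∑ i : Fin m, ∑ j : Fin m, ∑ k : Fin m,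
            ((κ (e i) ⁅e j, e k⁆ * (2 * κ a (e' i))) • (ι Q (e' j) * ι Q (e' k))
              - (κ (e i) ⁅e j, e k⁆ * (2 * κ a (e' j))) • (ι Q (e' i) * ι Q (e' k))
              + (κ (e i) ⁅e j, e k⁆ * (2 * κ a (e' k))) • (ι Q (e' i) * ι Q (e' j))) := by
          refine congrArg _ (Finset.sum_congr rfl fun i _ => Finset.sum_congr rfl fun j _ =>
            Finset.sum_congr rfl fun k _ => ?_)
          rw [hanti i j k, smul_add, smul_sub, smul_smul, smul_smul, smul_smul]
      _ = (6:ℂ)⁻¹ • ((∑ i : Fin m, ∑ j : Fin m, ∑ k : Fin m,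
            (κ (e i) ⁅e j, e k⁆ * (2 * κ a (e' i))) • (ι Q (e' j) * ι Q (e' k)))
          - (∑ i : Fin m, ∑ j : Fin m, ∑ k : Fin m,
            (κ (e i) ⁅e j, e k⁆ * (2 * κ a (e' j))) • (ι Q (e' i) * ι Q (e' k)))
          + ∑ i : Fin m, ∑ j : Fin m, ∑ k : Fin m,
            (κ (e i) ⁅e j, e k⁆ * (2 * κ a (e' k))) • (ι Q (e' i) * ι Q (e' j))) := by
          simp only [Finset.sum_add_distrib, Finset.sum_sub_distrib]
      _ = (6:ℂ)⁻¹ • (((3:ℂ)) • ∑ i : Fin m, ∑ j : Fin m, ∑ k : Fin m,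
            (κ (e i) ⁅e j, e k⁆ * (2 * κ a (e' i))) • (ι Q (e' j) * ι Q (e' k))) := by
          rw [hswap2, hswap3, sub_neg_eq_add]
          module
      _ = (2:ℂ)⁻¹ • ∑ i : Fin m, ∑ j : Fin m, ∑ k : Fin m,
            (κ (e i) ⁅e j, e k⁆ * (2 * κ a (e' i))) • (ι Q (e' j) * ι Q (e' k)) := by
          rw [smul_smul]; norm_num
      _ = (2:ℂ)⁻¹ • ∑ i : Fin m, ∑ j : Fin m, ∑ k : Fin m,
            (κ (e k) ⁅e i, e j⁆ * (2 * κ a (e' k))) • (ι Q (e' i) * ι Q (e' j)) := by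
          rw [hrot' (fun i j k => (κ (e i) ⁅e j, e k⁆ * (2 * κ a (e' i))) •
            (ι Q (e' j) * ι Q (e' k)))]
      _ = ∑ i : Fin m, ∑ j : Fin m, κ ⁅a, e i⁆ (e j) • (ι Q (e' i) * ι Q (e' j)) := by
          rw [Finset.smul_sum]
          refine Finset.sum_congr rfl fun i _ => ?_
          rw [Finset.smul_sum]
          refine Finset.sum_congr rfl fun j _ => ?_
          rw [← Finset.sum_smul, smul_smul]
          have hsc : (∑ k : Fin m, κ (e k) ⁅e i, e j⁆ * (2 * κ a (e' k)))
              = 2 * κ a ⁅e i, e j⁆ := by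
            rw [← hcontr ⁅e i, e j⁆, Finset.mul_sum]
            exact Finset.sum_congr rfl fun k _ => by ring
          rw [hsc]
          have : (2:ℂ)⁻¹ * (2 * κ a ⁅e i, e j⁆) = κ ⁅a, e i⁆ (e j) := by
            rw [← hinv]; ring
          rw [this]
      _ = ∑ j : Fin m, ι Q (e' j) * ι Q ⁅a, e j⁆ := by
          refine Finset.sum_congr rfl fun i _ => ?_
          rw [hiexp ⁅a, e i⁆, Finset.mul_sum]
          exact Finset.sum_congr rfl fun j _ => (mul_smul_comm _ _ _).symm
  -- Step A
  have hS : ∑ i : Fin m, ι Q ⁅a, e i⁆ * ι Q (e' i)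
      = -∑ i : Fin m, ι Q (e' i) * ι Q ⁅a, e i⁆ :=
    calc ∑ i : Fin m, ι Q ⁅a, e i⁆ * ι Q (e' i)
        = ∑ i : Fin m, ((2 * κ ⁅a, e i⁆ (e' i)) • (1 : CliffordAlgebra Q)
            - ι Q (e' i) * ι Q ⁅a, e i⁆) := by
          refine Finset.sum_congr rfl fun i _ => ?_
          rw [hac ⁅a, e i⁆ (e' i), hsymm (e' i) ⁅a, e i⁆, ← two_mul]
      _ = (∑ i : Fin m, 2 * κ ⁅a, e i⁆ (e' i)) • (1 : CliffordAlgebra Q)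
            - ∑ i : Fin m, ι Q (e' i) * ι Q ⁅a, e i⁆ := by
          rw [Finset.sum_sub_distrib, Finset.sum_smul]
      _ = -∑ i : Fin m, ι Q (e' i) * ι Q ⁅a, e i⁆ := by
          rw [← Finset.mul_sum, htr, mul_zero, zero_smul, zero_sub]
  -- finish
  have hfull : ((6:ℂ)⁻¹ • ∑ i : Fin m, ∑ j : Fin m, ∑ k : Fin m, κ (e i) ⁅e j, e k⁆ •
            (ι Q (e' i) * ι Q (e' j) * ι Q (e' k))) * ι Q a
        + ι Q a * ((6:ℂ)⁻¹ • ∑ i : Fin m, ∑ j : Fin m, ∑ k : Fin m, κ (e i) ⁅e j, e k⁆ •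
            (ι Q (e' i) * ι Q (e' j) * ι Q (e' k)))
      = ∑ j : Fin m, ι Q (e' j) * ι Q ⁅a, e j⁆ := by
    rw [add_comm]; exact hB
  rw [hfull, hS, smul_neg]
end

section
/- Suppose h ∈ g and scalars λ_1,…,λ_n satisfy [h,b_j] = λ_j b_j and [h,b̄_j] = −λ_j b̄_j for all j. Then (1/4)(Θ·ι(h) + ι(h)·Θ) = −(1/4) Σ_{j=1}^n λ_j (ι(b_j)ι(b̄_j) − ι(b̄_j)ι(b_j)) in Cl(g,κ). -/
open CliffordAlgebra in
lemma aux_anticomm {R M : Type*} [CommRing R] [AddCommGroup M] [Module R M]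
    (Q : QuadraticForm R M) (x y z w : M) :
    (ι Q x * ι Q y * ι Q z) * ι Q w + ι Q w * (ι Q x * ι Q y * ι Q z) =
      QuadraticMap.polar Q z w • (ι Q x * ι Q y)
        - QuadraticMap.polar Q y w • (ι Q x * ι Q z)
        + QuadraticMap.polar Q x w • (ι Q y * ι Q z) := by
  have sw : ∀ a c : M, ι Q c * ι Q a =
      QuadraticMap.polar Q a c • (1 : CliffordAlgebra Q) - ι Q a * ι Q c := by
    intro a c
    rw [ι_mul_ι_comm, Algebra.algebraMap_eq_smul_one, QuadraticMap.polar_comm]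
  have st1 : ι Q w * (ι Q x * ι Q y * ι Q z)
      = QuadraticMap.polar Q x w • (ι Q y * ι Q z) - ι Q x * ι Q w * ι Q y * ι Q z := by
    have e1 : ι Q w * (ι Q x * ι Q y * ι Q z)
        = ((ι Q w * ι Q x) * ι Q y) * ι Q z := by noncomm_ring
    rw [e1, sw x w, sub_mul, sub_mul, smul_mul_assoc, smul_mul_assoc, one_mul, mul_assoc]
  have st2 : ι Q x * ι Q w * ι Q y * ι Q z
      = QuadraticMap.polar Q y w • (ι Q x * ι Q z) - ι Q x * ι Q y * ι Q w * ι Q z := by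
    rw [mul_assoc (ι Q x) (ι Q w) (ι Q y), sw y w, mul_sub, mul_smul_comm, mul_one,
      sub_mul, smul_mul_assoc, ← mul_assoc]
  have st3 : ι Q x * ι Q y * ι Q w * ι Q z
      = QuadraticMap.polar Q z w • (ι Q x * ι Q y) - ι Q x * ι Q y * ι Q z * ι Q w := by
    rw [mul_assoc (ι Q x * ι Q y) (ι Q w) (ι Q z), sw z w, mul_sub, mul_smul_comm, mul_one,
      ← mul_assoc]
  rw [st1, st2, st3]
  abel

lemma aux_cyc3 {α β : Type*} [Fintype α] [AddCommMonoid β] (f : α → α → α → β) :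
    ∑ i, ∑ j, ∑ k, f i j k = ∑ i, ∑ j, ∑ k, f k i j := by
  conv_lhs => rw [Finset.sum_comm]
  exact Finset.sum_congr rfl fun j _ => Finset.sum_comm

lemma aux_sw12 {α β : Type*} [Fintype α] [AddCommMonoid β] (f : α → α → α → β) :
    ∑ i, ∑ j, ∑ k, f i j k = ∑ i, ∑ j, ∑ k, f j i k := by
  conv_lhs => rw [Finset.sum_comm]

open CliffordAlgebra in
/-- `dim_ℂ g = 2n`, with basis `b_1,…,b_n,b̄_1,…,b̄_n` such that
`κ(b_i,b_j) = 0`, `κ(b̄_i,b̄_j) = 0`, `κ(b_i,b̄_j) = δ_{ij}` (so the `κ`-dual basis is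
`b̄_1,…,b̄_n,b_1,…,b_n`).  If `h ∈ g` satisfies `[h,b_j] = λ_j b_j` and
`[h,b̄_j] = −λ_j b̄_j`, then `(1/4)(Θ·ι(h) + ι(h)·Θ) =
−(1/4) Σ_j λ_j (ι(b_j)ι(b̄_j) − ι(b̄_j)ι(b_j))`. -/
theorem statement5 (g : Type*) [LieRing g] [LieAlgebra ℂ g] [FiniteDimensional ℂ g]
    (κ : LinearMap.BilinForm ℂ g)
    (hsymm : ∀ a b : g, κ a b = κ b a)
    (hinv : ∀ a b c : g, κ ⁅a, b⁆ c = κ a ⁅b, c⁆)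
    (hnd : κ.Nondegenerate)
    (n : ℕ) (B : Module.Basis (Fin n ⊕ Fin n) ℂ g)
    (b bb : Fin n → g)
    (hb : ∀ i, b i = B (Sum.inl i)) (hbb : ∀ i, bb i = B (Sum.inr i))
    (hbiso : ∀ i j, κ (b i) (b j) = 0)
    (hbbiso : ∀ i j, κ (bb i) (bb j) = 0)
    (hpair : ∀ i j, κ (b i) (bb j) = if i = j then (1 : ℂ) else 0)
    (Θ : CliffordAlgebra (LinearMap.BilinMap.toQuadraticMap κ))
    (hΘ : Θ = (6 : ℂ)⁻¹ •
      ∑ i : Fin n ⊕ Fin n, ∑ j : Fin n ⊕ Fin n, ∑ k : Fin n ⊕ Fin n,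
        κ (B i) ⁅B j, B k⁆ •
          (ι (LinearMap.BilinMap.toQuadraticMap κ) (B i.swap) *
            ι (LinearMap.BilinMap.toQuadraticMap κ) (B j.swap) *
            ι (LinearMap.BilinMap.toQuadraticMap κ) (B k.swap)))
    (h : g) (lam : Fin n → ℂ)
    (hhb : ∀ j, ⁅h, b j⁆ = lam j • b j)
    (hhbb : ∀ j, ⁅h, bb j⁆ = -(lam j) • bb j) :
    (4 : ℂ)⁻¹ • (Θ * ι (LinearMap.BilinMap.toQuadraticMap κ) h +
        ι (LinearMap.BilinMap.toQuadraticMap κ) h * Θ) =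
    -((4 : ℂ)⁻¹ • ∑ j : Fin n, lam j •
        (ι (LinearMap.BilinMap.toQuadraticMap κ) (b j) *
            ι (LinearMap.BilinMap.toQuadraticMap κ) (bb j) -
          ι (LinearMap.BilinMap.toQuadraticMap κ) (bb j) *
            ι (LinearMap.BilinMap.toQuadraticMap κ) (b j))) := by
  set Q := LinearMap.BilinMap.toQuadraticMap κ with hQ
  -- polar values
  have hpol : ∀ a c : g, QuadraticMap.polar Q a c = 2 * κ a c := by
    intro a c
    rw [hQ, LinearMap.BilinMap.polar_toQuadraticMap, hsymm c a]
    ring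
  -- orthogonality table
  have horth : ∀ i m : Fin n ⊕ Fin n, κ (B i) (B m) = if i = m.swap then 1 else 0 := by
    rintro (a | a) (c | c) <;>
      simp only [Sum.swap_inl, Sum.swap_inr, ← hb, ← hbb] <;>
      simp [hbiso, hbbiso, hpair, hsymm (bb a) (b c), eq_comm]
  -- expansion of κ h
  have hexp : ∀ v : g, (∑ i : Fin n ⊕ Fin n, κ h (B i.swap) * κ (B i) v) = κ h v := by
    have hLM : (∑ i : Fin n ⊕ Fin n, κ h (B i.swap) • (κ (B i) : g →ₗ[ℂ] ℂ)) = κ h := by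
      refine B.ext fun m => ?_
      rw [LinearMap.sum_apply]
      simp only [LinearMap.smul_apply, horth, smul_eq_mul, mul_ite, mul_one, mul_zero]
      rw [Finset.sum_ite_eq' Finset.univ m.swap (fun i => κ h (B i.swap))]
      simp [Sum.swap_swap]
    intro v
    conv_rhs => rw [← hLM]
    simp [LinearMap.sum_apply]
  -- antisymmetry / cyclic symmetry of structure constants
  have ccyc : ∀ i j k, κ (B j) ⁅B k, B i⁆ = κ (B i) ⁅B j, B k⁆ := by
    intro i j k
    rw [← hinv, hsymm]
  have casym : ∀ i j k, κ (B j) ⁅B i, B k⁆ = -κ (B i) ⁅B j, B k⁆ := by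
    intro i j k
    rw [← hinv, ← lie_skew, map_neg, LinearMap.neg_apply, hinv]
  set T : CliffordAlgebra Q := ∑ i : Fin n ⊕ Fin n, ∑ j : Fin n ⊕ Fin n, ∑ k : Fin n ⊕ Fin n,
      κ (B i) ⁅B j, B k⁆ • (ι Q (B i.swap) * ι Q (B j.swap) * ι Q (B k.swap)) with hT
  -- the main anticommutator computation
  have expand : T * ι Q h + ι Q h * T
      = ∑ i : Fin n ⊕ Fin n, ∑ j : Fin n ⊕ Fin n, ∑ k : Fin n ⊕ Fin n,
          ((κ (B i) ⁅B j, B k⁆ * (2 * κ (B k.swap) h)) • (ι Q (B i.swap) * ι Q (B j.swap))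
            - (κ (B i) ⁅B j, B k⁆ * (2 * κ (B j.swap) h)) • (ι Q (B i.swap) * ι Q (B k.swap))
            + (κ (B i) ⁅B j, B k⁆ * (2 * κ (B i.swap) h)) • (ι Q (B j.swap) * ι Q (B k.swap))) := by
    rw [hT]
    simp only [Finset.sum_mul, Finset.mul_sum, smul_mul_assoc, mul_smul_comm,
      ← Finset.sum_add_distrib]
    refine Finset.sum_congr rfl fun i _ => Finset.sum_congr rfl fun j _ =>
      Finset.sum_congr rfl fun k _ => ?_
    rw [← smul_add, aux_anticomm, hpol, hpol, hpol]
    simp only [smul_sub, smul_add, smul_smul]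
  -- split into three triple sums
  rw [hΘ]
  simp only [Finset.sum_add_distrib, Finset.sum_sub_distrib] at expand
  -- term SA equals term SC after a cyclic relabeling
  have hSA : (∑ i : Fin n ⊕ Fin n, ∑ j : Fin n ⊕ Fin n, ∑ k : Fin n ⊕ Fin n,
        (κ (B i) ⁅B j, B k⁆ * (2 * κ (B k.swap) h)) • (ι Q (B i.swap) * ι Q (B j.swap)))
      = ∑ i : Fin n ⊕ Fin n, ∑ j : Fin n ⊕ Fin n, ∑ k : Fin n ⊕ Fin n,
        (κ (B i) ⁅B j, B k⁆ * (2 * κ (B i.swap) h)) • (ι Q (B j.swap) * ι Q (B k.swap)) := by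
    rw [aux_cyc3 (fun i j k => (κ (B i) ⁅B j, B k⁆ * (2 * κ (B k.swap) h)) •
        (ι Q (B i.swap) * ι Q (B j.swap))),
      aux_cyc3 (fun i j k => (κ (B k) ⁅B i, B j⁆ * (2 * κ (B j.swap) h)) •
        (ι Q (B k.swap) * ι Q (B i.swap)))]
    refine Finset.sum_congr rfl fun i _ => Finset.sum_congr rfl fun j _ =>
      Finset.sum_congr rfl fun k _ => ?_
    rw [ccyc]
  have hSB : (∑ i : Fin n ⊕ Fin n, ∑ j : Fin n ⊕ Fin n, ∑ k : Fin n ⊕ Fin n,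
        (κ (B i) ⁅B j, B k⁆ * (2 * κ (B j.swap) h)) • (ι Q (B i.swap) * ι Q (B k.swap)))
      = -∑ i : Fin n ⊕ Fin n, ∑ j : Fin n ⊕ Fin n, ∑ k : Fin n ⊕ Fin n,
        (κ (B i) ⁅B j, B k⁆ * (2 * κ (B i.swap) h)) • (ι Q (B j.swap) * ι Q (B k.swap)) := by
    rw [aux_sw12 (fun i j k => (κ (B i) ⁅B j, B k⁆ * (2 * κ (B j.swap) h)) •
        (ι Q (B i.swap) * ι Q (B k.swap)))]
    rw [← Finset.sum_neg_distrib]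
    refine Finset.sum_congr rfl fun i _ => ?_
    rw [← Finset.sum_neg_distrib]
    refine Finset.sum_congr rfl fun j _ => ?_
    rw [← Finset.sum_neg_distrib]
    refine Finset.sum_congr rfl fun k _ => ?_
    rw [casym]
    simp [neg_smul]
  rw [hSA, hSB, sub_neg_eq_add] at expand
  -- contract the i-index
  have hSC : (∑ i : Fin n ⊕ Fin n, ∑ j : Fin n ⊕ Fin n, ∑ k : Fin n ⊕ Fin n,
        (κ (B i) ⁅B j, B k⁆ * (2 * κ (B i.swap) h)) • (ι Q (B j.swap) * ι Q (B k.swap)))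
      = (2 : ℂ) • ∑ j : Fin n ⊕ Fin n, ∑ k : Fin n ⊕ Fin n,
          κ h ⁅B j, B k⁆ • (ι Q (B j.swap) * ι Q (B k.swap)) := by
    rw [aux_cyc3 (fun i j k => (κ (B i) ⁅B j, B k⁆ * (2 * κ (B i.swap) h)) •
        (ι Q (B j.swap) * ι Q (B k.swap)))]
    rw [Finset.smul_sum]
    refine Finset.sum_congr rfl fun i _ => ?_
    rw [Finset.smul_sum]
    refine Finset.sum_congr rfl fun j _ => ?_
    rw [← Finset.sum_smul]
    rw [smul_smul]
    congr 1
    rw [← hexp ⁅B i, B j⁆, Finset.mul_sum]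
    refine Finset.sum_congr rfl fun k _ => ?_
    rw [hsymm (B k.swap) h]
    ring
  rw [hSC] at expand
  -- evaluate the contracted double sum
  have hD : (∑ j : Fin n ⊕ Fin n, ∑ k : Fin n ⊕ Fin n,
        κ h ⁅B j, B k⁆ • (ι Q (B j.swap) * ι Q (B k.swap)))
      = -∑ j : Fin n, lam j • (ι Q (b j) * ι Q (bb j) - ι Q (bb j) * ι Q (b j)) := by
    have c1 : ∀ (a : Fin n) (k : Fin n ⊕ Fin n),
        κ h ⁅B (Sum.inl a), B k⁆ = lam a * (if Sum.inr a = k then 1 else 0) := by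
      intro a k
      rw [← hinv, ← hb, hhb, map_smul, LinearMap.smul_apply, smul_eq_mul, hb, horth]
      congr 1
      rcases k <;> simp [eq_comm]
    have c2 : ∀ (a : Fin n) (k : Fin n ⊕ Fin n),
        κ h ⁅B (Sum.inr a), B k⁆ = -lam a * (if Sum.inl a = k then 1 else 0) := by
      intro a k
      rw [← hinv, ← hbb, hhbb, map_smul, LinearMap.smul_apply, smul_eq_mul, hbb, horth]
      congr 1
      rcases k <;> simp [eq_comm]
    rw [Fintype.sum_sum_type]
    have p1 : (∑ a : Fin n, ∑ k : Fin n ⊕ Fin n,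
        κ h ⁅B (Sum.inl a), B k⁆ • (ι Q (B (Sum.inl a).swap) * ι Q (B k.swap)))
        = ∑ a : Fin n, lam a • (ι Q (bb a) * ι Q (b a)) := by
      refine Finset.sum_congr rfl fun a _ => ?_
      simp only [c1, mul_ite, mul_one, mul_zero, ite_smul, zero_smul]
      rw [Finset.sum_ite_eq Finset.univ (Sum.inr a)
        (fun k => lam a • (ι Q (B (Sum.inl a).swap) * ι Q (B k.swap)))]
      simp [hb, hbb]
    have p2 : (∑ a : Fin n, ∑ k : Fin n ⊕ Fin n,
        κ h ⁅B (Sum.inr a), B k⁆ • (ι Q (B (Sum.inr a).swap) * ι Q (B k.swap)))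
        = ∑ a : Fin n, (-lam a) • (ι Q (b a) * ι Q (bb a)) := by
      refine Finset.sum_congr rfl fun a _ => ?_
      simp only [c2, mul_ite, mul_one, mul_zero, ite_smul, zero_smul]
      rw [Finset.sum_ite_eq Finset.univ (Sum.inl a)
        (fun k => (-lam a) • (ι Q (B (Sum.inr a).swap) * ι Q (B k.swap)))]
      simp [hb, hbb]
    rw [p1, p2, ← Finset.sum_neg_distrib, ← Finset.sum_add_distrib]
    refine Finset.sum_congr rfl fun a _ => ?_
    module
  rw [hD] at expand
  rw [smul_mul_assoc, mul_smul_comm, ← smul_add, expand]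
  module
end

section
/- With u := ι(b̄_1)···ι(b̄_n) and ρ := (1/2) Σ_{j=1}^n [b_j,b̄_j], one has (1/4)(Θ·u − (−1)^n u·Θ) = (1/2)(ι(ρ)·u + (−1)^n u·ι(ρ)) in Cl(g,κ). -/
namespace Stmt6Aux
open CliffordAlgebra

variable {g : Type*} [AddCommGroup g] [Module ℂ g] {Q : QuadraticForm ℂ g}
variable {α : Type*} {v : α → g}

lemma left_ann (h0 : ∀ i, Q (v i) = 0)
    (h1 : ∀ i j, QuadraticMap.polar Q (v i) (v j) = 0) :
    ∀ (L : List α) (p : α), p ∈ L →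
      ι Q (v p) * (L.map fun j => ι Q (v j)).prod = 0 := by
  intro L
  induction L with
  | nil => simp
  | cons h T IH =>
    intro p hp
    rw [List.map_cons, List.prod_cons, ← mul_assoc]
    rcases List.mem_cons.mp hp with rfl | hpT
    · rw [ι_sq_scalar, h0, map_zero, zero_mul]
    · rw [ι_mul_ι_comm, h1, map_zero, zero_sub, neg_mul, mul_assoc, IH p hpT, mul_zero, neg_zero]

lemma comm_prod (h1 : ∀ i j, QuadraticMap.polar Q (v i) (v j) = 0) :
    ∀ (L : List α) (p : α),
      ι Q (v p) * (L.map fun j => ι Q (v j)).prod =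
        ((-1 : ℂ) ^ L.length) • ((L.map fun j => ι Q (v j)).prod * ι Q (v p)) := by
  intro L
  induction L with
  | nil => intro p; simp
  | cons h T IH =>
    intro p
    rw [List.map_cons, List.prod_cons, ← mul_assoc, ι_mul_ι_comm, h1, map_zero, zero_sub,
      neg_mul, mul_assoc, IH p, mul_smul_comm, List.length_cons, pow_succ]
    rw [mul_comm ((-1:ℂ)^T.length) (-1), mul_smul, neg_one_smul, mul_assoc]

lemma right_ann (h0 : ∀ i, Q (v i) = 0)
    (h1 : ∀ i j, QuadraticMap.polar Q (v i) (v j) = 0)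
    (L : List α) (p : α) (hp : p ∈ L) :
    (L.map fun j => ι Q (v j)).prod * ι Q (v p) = 0 := by
  have h := comm_prod h1 L p
  rw [left_ann h0 h1 L p hp] at h
  have h2 : ((-1 : ℂ) ^ L.length) ≠ 0 := by simp [pow_ne_zero]
  exact (smul_eq_zero.mp h.symm).resolve_left h2

end Stmt6Aux



open CliffordAlgebra in
/-- With `u := ι(b̄_1)···ι(b̄_n)` and `ρ := (1/2) Σ_j [b_j,b̄_j]`,
one has `(1/4)(Θ·u − (−1)^n u·Θ) = (1/2)(ι(ρ)·u + (−1)^n u·ι(ρ))` in `Cl(g,κ)`. -/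
theorem statement6 (g : Type*) [LieRing g] [LieAlgebra ℂ g] [FiniteDimensional ℂ g]
    (κ : LinearMap.BilinForm ℂ g)
    (hsymm : ∀ a b : g, κ a b = κ b a)
    (hinv : ∀ a b c : g, κ ⁅a, b⁆ c = κ a ⁅b, c⁆)
    (hnd : κ.Nondegenerate)
    (n : ℕ) (B : Module.Basis (Fin n ⊕ Fin n) ℂ g)
    (b bb : Fin n → g)
    (hb : ∀ i, b i = B (Sum.inl i)) (hbb : ∀ i, bb i = B (Sum.inr i))
    (hbiso : ∀ i j, κ (b i) (b j) = 0)
    (hbbiso : ∀ i j, κ (bb i) (bb j) = 0)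
    (hpair : ∀ i j, κ (b i) (bb j) = if i = j then (1 : ℂ) else 0)
    (hsubalg : ∀ i j, ⁅b i, b j⁆ ∈ Submodule.span ℂ (Set.range b))
    (hsubalgbar : ∀ i j, ⁅bb i, bb j⁆ ∈ Submodule.span ℂ (Set.range bb))
    (Θ : CliffordAlgebra (LinearMap.BilinMap.toQuadraticMap κ))
    (hΘ : Θ = (6 : ℂ)⁻¹ •
      ∑ i : Fin n ⊕ Fin n, ∑ j : Fin n ⊕ Fin n, ∑ k : Fin n ⊕ Fin n,
        κ (B i) ⁅B j, B k⁆ •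
          (ι (LinearMap.BilinMap.toQuadraticMap κ) (B i.swap) *
            ι (LinearMap.BilinMap.toQuadraticMap κ) (B j.swap) *
            ι (LinearMap.BilinMap.toQuadraticMap κ) (B k.swap)))
    (u : CliffordAlgebra (LinearMap.BilinMap.toQuadraticMap κ))
    (hu : u = ((List.finRange n).map fun j =>
      ι (LinearMap.BilinMap.toQuadraticMap κ) (bb j)).prod)
    (ρ : g) (hρ : ρ = (2 : ℂ)⁻¹ • ∑ j : Fin n, ⁅b j, bb j⁆) :
    (4 : ℂ)⁻¹ • (Θ * u - ((-1 : ℂ) ^ n) • (u * Θ)) =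
      (2 : ℂ)⁻¹ • (ι (LinearMap.BilinMap.toQuadraticMap κ) ρ * u +
        ((-1 : ℂ) ^ n) • (u * ι (LinearMap.BilinMap.toQuadraticMap κ) ρ)) := by
  classical
  -- scalar facts
  have hpair' : ∀ i j, κ (bb i) (b j) = if j = i then (1:ℂ) else 0 := fun i j => by
    rw [hsymm]; exact hpair j i
  have hpolar : ∀ x y : g, QuadraticMap.polar (LinearMap.BilinMap.toQuadraticMap κ) x y = κ x y + κ y x := fun x y =>
    LinearMap.BilinMap.polar_toQuadraticMap x y
  have hQbb : ∀ i, (LinearMap.BilinMap.toQuadraticMap κ) (bb i) = 0 := fun i => by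
    simpa using hbbiso i i
  have hpolbb : ∀ i j, QuadraticMap.polar (LinearMap.BilinMap.toQuadraticMap κ) (bb i) (bb j) = 0 := fun i j => by
    rw [hpolar, hbbiso, hbbiso, add_zero]
  have hcu : ∀ p, ι (LinearMap.BilinMap.toQuadraticMap κ) (bb p) * u = 0 := fun p => by
    rw [hu]; exact Stmt6Aux.left_ann hQbb hpolbb _ p (List.mem_finRange p)
  have huc : ∀ p, u * ι (LinearMap.BilinMap.toQuadraticMap κ) (bb p) = 0 := fun p => by
    rw [hu]; exact Stmt6Aux.right_ann hQbb hpolbb _ p (List.mem_finRange p)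
  have hca : ∀ p q, ι (LinearMap.BilinMap.toQuadraticMap κ) (bb p) * ι (LinearMap.BilinMap.toQuadraticMap κ) (b q)
      = algebraMap ℂ _ (if q = p then (2:ℂ) else 0) - ι (LinearMap.BilinMap.toQuadraticMap κ) (b q) * ι (LinearMap.BilinMap.toQuadraticMap κ) (bb p) := by
    intro p q
    rw [ι_mul_ι_comm, hpolar]
    congr 2
    rw [hpair' p q, hpair q p]
    by_cases h : q = p <;> simp [h] <;> norm_num
  have hac : ∀ q p, ι (LinearMap.BilinMap.toQuadraticMap κ) (b q) * ι (LinearMap.BilinMap.toQuadraticMap κ) (bb p)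
      = algebraMap ℂ _ (if q = p then (2:ℂ) else 0) - ι (LinearMap.BilinMap.toQuadraticMap κ) (bb p) * ι (LinearMap.BilinMap.toQuadraticMap κ) (b q) := by
    intro q p
    rw [ι_mul_ι_comm, hpolar]
    congr 2
    rw [hpair q p, hpair' p q]
    by_cases h : q = p <;> simp [h] <;> norm_num
  -- monomial lemmas (left: monomial * u)
  have hcau : ∀ p s, ι (LinearMap.BilinMap.toQuadraticMap κ) (bb p) * (ι (LinearMap.BilinMap.toQuadraticMap κ) (b s) * u) = (if s = p then (2:ℂ) else 0) • u := by
    intro p s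
    rw [← mul_assoc, hca, sub_mul, mul_assoc, hcu, mul_zero, sub_zero, ← Algebra.smul_def]
  have M4 : ∀ p q s, (ι (LinearMap.BilinMap.toQuadraticMap κ) (bb p) * ι (LinearMap.BilinMap.toQuadraticMap κ) (b q) * ι (LinearMap.BilinMap.toQuadraticMap κ) (b s)) * u
      = (if q = p then (2:ℂ) else 0) • (ι (LinearMap.BilinMap.toQuadraticMap κ) (b s) * u)
        - (if s = p then (2:ℂ) else 0) • (ι (LinearMap.BilinMap.toQuadraticMap κ) (b q) * u) := by
    intro p q s
    rw [mul_assoc (ι (LinearMap.BilinMap.toQuadraticMap κ) (bb p) * ι (LinearMap.BilinMap.toQuadraticMap κ) (b q)), hca p q, sub_mul, ← Algebra.smul_def,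
      mul_assoc, hcau p s, mul_smul_comm]
  have M6 : ∀ q p s, (ι (LinearMap.BilinMap.toQuadraticMap κ) (b q) * ι (LinearMap.BilinMap.toQuadraticMap κ) (bb p) * ι (LinearMap.BilinMap.toQuadraticMap κ) (b s)) * u
      = (if s = p then (2:ℂ) else 0) • (ι (LinearMap.BilinMap.toQuadraticMap κ) (b q) * u) := by
    intro q p s
    rw [mul_assoc, mul_assoc, hcau p s, mul_smul_comm]
  have M2 : ∀ p q s, (ι (LinearMap.BilinMap.toQuadraticMap κ) (bb p) * ι (LinearMap.BilinMap.toQuadraticMap κ) (bb q) * ι (LinearMap.BilinMap.toQuadraticMap κ) (b s)) * u = 0 := by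
    intro p q s
    rw [mul_assoc, mul_assoc, hcau q s, mul_smul_comm, hcu, smul_zero]
  have Mk : ∀ (x : CliffordAlgebra (LinearMap.BilinMap.toQuadraticMap κ)) (s : Fin n), (x * ι (LinearMap.BilinMap.toQuadraticMap κ) (bb s)) * u = 0 := by
    intro x s; rw [mul_assoc, hcu, mul_zero]
  -- monomial lemmas (right: u * monomial)
  have Mi : ∀ (p : Fin n) (x y : CliffordAlgebra (LinearMap.BilinMap.toQuadraticMap κ)), u * (ι (LinearMap.BilinMap.toQuadraticMap κ) (bb p) * x * y) = 0 := by
    intro p x y; rw [← mul_assoc, ← mul_assoc, huc, zero_mul, zero_mul]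
  have huac : ∀ q p, (u * ι (LinearMap.BilinMap.toQuadraticMap κ) (b q)) * ι (LinearMap.BilinMap.toQuadraticMap κ) (bb p) = (if q = p then (2:ℂ) else 0) • u := by
    intro q p
    rw [mul_assoc, hac q p, mul_sub, ← mul_assoc, huc, zero_mul, sub_zero,
      ← Algebra.commutes, ← Algebra.smul_def]
  have M'6 : ∀ q p s, u * (ι (LinearMap.BilinMap.toQuadraticMap κ) (b q) * ι (LinearMap.BilinMap.toQuadraticMap κ) (bb p) * ι (LinearMap.BilinMap.toQuadraticMap κ) (b s))
      = (if q = p then (2:ℂ) else 0) • (u * ι (LinearMap.BilinMap.toQuadraticMap κ) (b s)) := by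
    intro q p s
    rw [← mul_assoc, ← mul_assoc, huac q p, smul_mul_assoc]
  have M'8 : ∀ q p s, u * (ι (LinearMap.BilinMap.toQuadraticMap κ) (b q) * ι (LinearMap.BilinMap.toQuadraticMap κ) (bb p) * ι (LinearMap.BilinMap.toQuadraticMap κ) (bb s)) = 0 := by
    intro q p s
    rw [← mul_assoc, ← mul_assoc, huac q p, smul_mul_assoc, huc, smul_zero]
  have M'7 : ∀ q s p, u * (ι (LinearMap.BilinMap.toQuadraticMap κ) (b q) * ι (LinearMap.BilinMap.toQuadraticMap κ) (b s) * ι (LinearMap.BilinMap.toQuadraticMap κ) (bb p))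
      = (if s = p then (2:ℂ) else 0) • (u * ι (LinearMap.BilinMap.toQuadraticMap κ) (b q))
        - (if q = p then (2:ℂ) else 0) • (u * ι (LinearMap.BilinMap.toQuadraticMap κ) (b s)) := by
    intro q s p
    rw [← mul_assoc, ← mul_assoc, mul_assoc (u * ι (LinearMap.BilinMap.toQuadraticMap κ) (b q)), hac s p, mul_sub,
      ← Algebra.commutes, ← Algebra.smul_def, ← mul_assoc, huac q p, smul_mul_assoc]
  -- coefficient vanishing
  have hkb0 : ∀ p q s, κ (b p) ⁅b q, b s⁆ = 0 := by
    intro p q s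
    have h : ∀ x ∈ Submodule.span ℂ (Set.range b), κ (b p) x = 0 := by
      intro x hx
      induction hx using Submodule.span_induction with
      | mem y hy => obtain ⟨j, rfl⟩ := hy; exact hbiso p j
      | zero => simp
      | add y z _ _ hy hz => rw [map_add, hy, hz, add_zero]
      | smul t y _ hy => rw [map_smul, hy, smul_zero]
    exact h _ (hsubalg q s)
  have hkbb0 : ∀ p q s, κ (bb p) ⁅bb q, bb s⁆ = 0 := by
    intro p q s
    have h : ∀ x ∈ Submodule.span ℂ (Set.range bb), κ (bb p) x = 0 := by
      intro x hx
      induction hx using Submodule.span_induction with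
      | mem y hy => obtain ⟨j, rfl⟩ := hy; exact hbbiso p j
      | zero => simp
      | add y z _ _ hy hz => rw [map_add, hy, hz, add_zero]
      | smul t y _ hy => rw [map_smul, hy, smul_zero]
    exact h _ (hsubalgbar q s)
  -- ρ sums
  have hsumrho : ∑ j : Fin n, ⁅b j, bb j⁆ = (2:ℂ) • ρ := by
    rw [hρ, smul_smul]; norm_num
  have hbase : ∀ x : g, ∑ p, κ ⁅b p, bb p⁆ x = 2 * κ ρ x := by
    intro x
    rw [← LinearMap.sum_apply, ← map_sum, hsumrho, map_smul]
    simp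
  have hs1 : ∀ s, (∑ p, κ (b p) ⁅bb p, bb s⁆) = 2 * κ ρ (bb s) := by
    intro s
    have h : ∀ p, κ (b p) ⁅bb p, bb s⁆ = κ ⁅b p, bb p⁆ (bb s) := fun p =>
      (hinv (b p) (bb p) (bb s)).symm
    simp_rw [h]; exact hbase _
  have hs1' : ∀ q, (∑ p, κ (b p) ⁅bb q, bb p⁆) = -(2 * κ ρ (bb q)) := by
    intro q
    have h : ∀ p, κ (b p) ⁅bb q, bb p⁆ = -(κ ⁅b p, bb p⁆ (bb q)) := fun p => by
      have e : ⁅bb q, bb p⁆ = -⁅bb p, bb q⁆ := by rw [← lie_skew (bb p) (bb q), neg_neg]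
      rw [e, map_neg, ← hinv (b p) (bb p) (bb q)]
    simp_rw [h, Finset.sum_neg_distrib, hbase]
  have hs2 : ∀ q, (∑ p, κ (bb q) ⁅b p, bb p⁆) = 2 * κ ρ (bb q) := by
    intro q
    have h : ∀ p, κ (bb q) ⁅b p, bb p⁆ = κ ⁅b p, bb p⁆ (bb q) := fun p => hsymm _ _
    simp_rw [h]; exact hbase _
  have hs3 : ∀ s, (∑ p, κ (bb p) ⁅b p, bb s⁆) = -(2 * κ ρ (bb s)) := by
    intro s
    have h : ∀ p, κ (bb p) ⁅b p, bb s⁆ = -(κ ⁅b p, bb p⁆ (bb s)) := fun p => by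
      have e : ⁅bb p, b p⁆ = -⁅b p, bb p⁆ := by rw [← lie_skew (b p) (bb p), neg_neg]
      rw [← hinv (bb p) (b p) (bb s), e, map_neg, LinearMap.neg_apply]
    simp_rw [h, Finset.sum_neg_distrib, hbase]
  have hs4 : ∀ q, (∑ s, κ (bb q) ⁅bb s, b s⁆) = -(2 * κ ρ (bb q)) := by
    intro s
    have h : ∀ p, κ (bb s) ⁅bb p, b p⁆ = -(κ ⁅b p, bb p⁆ (bb s)) := fun p => by
      have e : ⁅bb p, b p⁆ = -⁅b p, bb p⁆ := by rw [← lie_skew (b p) (bb p), neg_neg]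
      rw [e, map_neg, hsymm (bb s)]
    simp_rw [h, Finset.sum_neg_distrib, hbase]
  have hs5 : ∀ s, (∑ q, κ (bb q) ⁅bb s, b q⁆) = 2 * κ ρ (bb s) := by
    intro s
    have h : ∀ q, κ (bb q) ⁅bb s, b q⁆ = κ (bb s) ⁅b q, bb q⁆ := fun q => by
      rw [hsymm, hinv]
    simp_rw [h]
    have h2 : ∀ q, κ (bb s) ⁅b q, bb q⁆ = κ ⁅b q, bb q⁆ (bb s) := fun q => hsymm _ _
    simp_rw [h2]; exact hbase _
  -- expansion of ρ in the basis
  have hrho : ρ = (∑ m, κ ρ (bb m) • b m) + (∑ m, κ ρ (b m) • bb m) := by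
    have hker : κ (ρ - ((∑ m, κ ρ (bb m) • b m) + ∑ m, κ ρ (b m) • bb m)) = 0 := by
      refine B.ext fun i => ?_
      rcases i with j | j
      · rw [← hb j]
        simp only [map_sub, map_add, LinearMap.sub_apply, LinearMap.add_apply, map_sum,
          LinearMap.smul_apply, map_smul, LinearMap.coe_sum, Finset.sum_apply,
          LinearMap.zero_apply, smul_eq_mul]
        have e1 : ∀ m : Fin n, κ (b m) (b j) = 0 := fun m => hbiso m j
        have e2 : ∀ m : Fin n, κ (bb m) (b j) = if j = m then (1:ℂ) else 0 := fun m => hpair' m j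
        simp [e1, e2, mul_ite, Finset.sum_ite_eq]
      · rw [← hbb j]
        simp only [map_sub, map_add, LinearMap.sub_apply, LinearMap.add_apply, map_sum,
          LinearMap.smul_apply, map_smul, LinearMap.coe_sum, Finset.sum_apply,
          LinearMap.zero_apply, smul_eq_mul]
        have e1 : ∀ m : Fin n, κ (b m) (bb j) = if m = j then (1:ℂ) else 0 := fun m => hpair m j
        have e2 : ∀ m : Fin n, κ (bb m) (bb j) = 0 := fun m => hbbiso m j
        simp [e1, e2, mul_ite, Finset.sum_ite_eq']
    have h0 : ρ - ((∑ m, κ ρ (bb m) • b m) + ∑ m, κ ρ (b m) • bb m) = 0 := by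
      refine hnd.1 _ fun z => ?_
      rw [hker]; rfl
    exact (sub_eq_zero.mp h0)
  have hexp : ι (LinearMap.BilinMap.toQuadraticMap κ) ρ * u = ∑ m, κ ρ (bb m) • (ι (LinearMap.BilinMap.toQuadraticMap κ) (b m) * u) := by
    conv_lhs => rw [hrho]
    rw [map_add, map_sum, map_sum, add_mul, Finset.sum_mul, Finset.sum_mul]
    simp only [map_smul, smul_mul_assoc, hcu, smul_zero, Finset.sum_const_zero, add_zero]
  have hexp' : u * ι (LinearMap.BilinMap.toQuadraticMap κ) ρ = ∑ m, κ ρ (bb m) • (u * ι (LinearMap.BilinMap.toQuadraticMap κ) (b m)) := by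
    conv_lhs => rw [hrho]
    rw [map_add, map_sum, map_sum, mul_add, Finset.mul_sum, Finset.mul_sum]
    simp only [map_smul, mul_smul_comm, huc, smul_zero, Finset.sum_const_zero, add_zero]
  -- left identity
  have hXsum : (∑ i : Fin n ⊕ Fin n, ∑ j : Fin n ⊕ Fin n, ∑ k : Fin n ⊕ Fin n,
      κ (B i) ⁅B j, B k⁆ • ((ι (LinearMap.BilinMap.toQuadraticMap κ) (B i.swap) * ι (LinearMap.BilinMap.toQuadraticMap κ) (B j.swap) * ι (LinearMap.BilinMap.toQuadraticMap κ) (B k.swap)) * u))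
      = (12:ℂ) • ∑ m, κ ρ (bb m) • (ι (LinearMap.BilinMap.toQuadraticMap κ) (b m) * u) := by
    simp only [Fintype.sum_sum_type, Sum.swap_inl, Sum.swap_inr, ← hb, ← hbb]
    simp only [hkb0, hkbb0, zero_smul, M2, M4, M6, Mk, smul_zero,
      Finset.sum_const_zero, add_zero, zero_add, smul_sub, smul_smul, mul_ite, mul_zero,
      ite_smul, zero_smul, Finset.sum_ite_irrel, Finset.sum_ite_eq',
      Finset.mem_univ, if_true, Finset.sum_sub_distrib, smul_ite, smul_smul]
    have TA : (∑ x : Fin n, ∑ y : Fin n, (κ (b x) ⁅bb x, bb y⁆ * 2) • (ι (LinearMap.BilinMap.toQuadraticMap κ) (b y) * u))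
        = ∑ m, (2 * κ ρ (bb m) * 2) • (ι (LinearMap.BilinMap.toQuadraticMap κ) (b m) * u) := by
      rw [Finset.sum_comm]
      refine Finset.sum_congr rfl fun m _ => ?_
      rw [← Finset.sum_smul, ← Finset.sum_mul, hs1 m]
    have TB : (∑ x : Fin n, ∑ y : Fin n, (κ (b x) ⁅bb y, bb x⁆ * 2) • (ι (LinearMap.BilinMap.toQuadraticMap κ) (b y) * u))
        = ∑ m, (-(2 * κ ρ (bb m)) * 2) • (ι (LinearMap.BilinMap.toQuadraticMap κ) (b m) * u) := by
      rw [Finset.sum_comm]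
      refine Finset.sum_congr rfl fun m _ => ?_
      rw [← Finset.sum_smul, ← Finset.sum_mul, hs1' m]
    have TC : (∑ x : Fin n, ∑ y : Fin n, (κ (bb x) ⁅b y, bb y⁆ * 2) • (ι (LinearMap.BilinMap.toQuadraticMap κ) (b x) * u))
        = ∑ m, (2 * κ ρ (bb m) * 2) • (ι (LinearMap.BilinMap.toQuadraticMap κ) (b m) * u) := by
      refine Finset.sum_congr rfl fun m _ => ?_
      rw [← Finset.sum_smul, ← Finset.sum_mul, hs2 m]
    rw [TA, TB, TC, Finset.smul_sum, ← Finset.sum_sub_distrib, ← Finset.sum_add_distrib]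
    refine Finset.sum_congr rfl fun m _ => ?_
    rw [smul_smul]
    module
  have hThetaU : Θ * u = (2:ℂ) • (ι (LinearMap.BilinMap.toQuadraticMap κ) ρ * u) := by
    rw [hΘ, smul_mul_assoc, Finset.sum_mul]
    simp only [Finset.sum_mul, smul_mul_assoc]
    rw [hXsum, smul_smul, hexp]
    norm_num
  -- right identity
  have hX'sum : (∑ i : Fin n ⊕ Fin n, ∑ j : Fin n ⊕ Fin n, ∑ k : Fin n ⊕ Fin n,
      κ (B i) ⁅B j, B k⁆ • (u * (ι (LinearMap.BilinMap.toQuadraticMap κ) (B i.swap) * ι (LinearMap.BilinMap.toQuadraticMap κ) (B j.swap) * ι (LinearMap.BilinMap.toQuadraticMap κ) (B k.swap))))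
      = (-12:ℂ) • ∑ m, κ ρ (bb m) • (u * ι (LinearMap.BilinMap.toQuadraticMap κ) (b m)) := by
    simp only [Fintype.sum_sum_type, Sum.swap_inl, Sum.swap_inr, ← hb, ← hbb]
    simp only [Mi, M'6, M'8, M'7, hkbb0, zero_smul, smul_zero, Finset.sum_const_zero,
      add_zero, zero_add, smul_sub, Finset.sum_sub_distrib, smul_ite, smul_smul,
      Finset.sum_ite_irrel, Finset.sum_ite_eq, Finset.sum_ite_eq', Finset.mem_univ, if_true]
    simp only [mul_ite, mul_zero, ite_smul, zero_smul, Finset.sum_ite_irrel,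
      Finset.sum_const_zero, Finset.sum_ite_eq, Finset.sum_ite_eq', Finset.mem_univ, if_true]
    simp only [Finset.sum_add_distrib, Finset.sum_sub_distrib]
    have TD : (∑ x : Fin n, ∑ y : Fin n, (κ (bb x) ⁅b x, bb y⁆ * 2) • (u * ι (LinearMap.BilinMap.toQuadraticMap κ) (b y)))
        = ∑ m, (-(2 * κ ρ (bb m)) * 2) • (u * ι (LinearMap.BilinMap.toQuadraticMap κ) (b m)) := by
      rw [Finset.sum_comm]
      refine Finset.sum_congr rfl fun m _ => ?_
      rw [← Finset.sum_smul, ← Finset.sum_mul, hs3 m]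
    have TE : (∑ x : Fin n, ∑ y : Fin n, (κ (bb x) ⁅bb y, b y⁆ * 2) • (u * ι (LinearMap.BilinMap.toQuadraticMap κ) (b x)))
        = ∑ m, (-(2 * κ ρ (bb m)) * 2) • (u * ι (LinearMap.BilinMap.toQuadraticMap κ) (b m)) := by
      refine Finset.sum_congr rfl fun m _ => ?_
      rw [← Finset.sum_smul, ← Finset.sum_mul, hs4 m]
    have TF : (∑ x : Fin n, ∑ y : Fin n, (κ (bb x) ⁅bb y, b x⁆ * 2) • (u * ι (LinearMap.BilinMap.toQuadraticMap κ) (b y)))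
        = ∑ m, (2 * κ ρ (bb m) * 2) • (u * ι (LinearMap.BilinMap.toQuadraticMap κ) (b m)) := by
      rw [Finset.sum_comm]
      refine Finset.sum_congr rfl fun m _ => ?_
      rw [← Finset.sum_smul, ← Finset.sum_mul, hs5 m]
    rw [TD, TE, TF, Finset.smul_sum, ← Finset.sum_sub_distrib, ← Finset.sum_add_distrib]
    refine Finset.sum_congr rfl fun m _ => ?_
    rw [smul_smul]
    module
  have hUTheta : u * Θ = (-2:ℂ) • (u * ι (LinearMap.BilinMap.toQuadraticMap κ) ρ) := by
    rw [hΘ, mul_smul_comm, Finset.mul_sum]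
    simp only [Finset.mul_sum, mul_smul_comm]
    rw [hX'sum, smul_smul, hexp']
    norm_num
  rw [hThetaU, hUTheta]
  module
end

section
/- With u := ι(b̄_1)···ι(b̄_n), ū := ι(b_1)···ι(b_n), v := u·ū and ρ := (1/2) Σ_{j=1}^n [b_j,b̄_j], one has (1/4)(Θ·v − v·Θ) = (1/2)(ι(ρ)·v − v·ι(ρ)) in Cl(g,κ). -/
open CliffordAlgebra

section Aux

variable {g : Type*} [AddCommGroup g] [Module ℂ g] {κ : LinearMap.BilinForm ℂ g}

private lemma clrel7 (x y : g) :
    ι (LinearMap.BilinMap.toQuadraticMap κ) x * ι (LinearMap.BilinMap.toQuadraticMap κ) y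
      = algebraMap ℂ _ (κ x y + κ y x)
        - ι (LinearMap.BilinMap.toQuadraticMap κ) y * ι (LinearMap.BilinMap.toQuadraticMap κ) x := by
  rw [ι_mul_ι_comm, LinearMap.BilinMap.polar_toQuadraticMap]

private lemma anti7 {x y : g} (h1 : κ x y = 0) (h2 : κ y x = 0) :
    ι (LinearMap.BilinMap.toQuadraticMap κ) x * ι (LinearMap.BilinMap.toQuadraticMap κ) y
      = -(ι (LinearMap.BilinMap.toQuadraticMap κ) y * ι (LinearMap.BilinMap.toQuadraticMap κ) x) := by
  rw [clrel7, h1, h2, add_zero, map_zero, zero_sub]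

private lemma sq07 {x : g} (h : κ x x = 0) :
    ι (LinearMap.BilinMap.toQuadraticMap κ) x * ι (LinearMap.BilinMap.toQuadraticMap κ) x = 0 := by
  rw [ι_sq_scalar, LinearMap.BilinMap.toQuadraticMap_apply, h, map_zero]

private lemma prod_anti7 (x : g) :
    ∀ L : List g, (∀ y ∈ L, κ x y = 0 ∧ κ y x = 0) →
      (L.map (ι (LinearMap.BilinMap.toQuadraticMap κ))).prod * ι (LinearMap.BilinMap.toQuadraticMap κ) x
        = ((-1 : ℂ) ^ L.length) •
            (ι (LinearMap.BilinMap.toQuadraticMap κ) x * (L.map (ι (LinearMap.BilinMap.toQuadraticMap κ))).prod)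
  | [], _ => by simp
  | y :: L, h => by
      have hy := h y (List.mem_cons_self)
      have ih := prod_anti7 x L (fun z hz => h z (List.mem_cons_of_mem _ hz))
      simp only [List.map_cons, List.prod_cons, List.length_cons]
      rw [mul_assoc, ih, mul_smul_comm, ← mul_assoc, anti7 hy.2 hy.1, neg_mul, mul_assoc,
        smul_neg, pow_succ, mul_neg_one, neg_smul]

private lemma mem_prod_zero7 (x : g) :
    ∀ L : List g, (∀ y ∈ L, ∀ z ∈ L, κ y z = 0) → x ∈ L →
      ι (LinearMap.BilinMap.toQuadraticMap κ) x * (L.map (ι (LinearMap.BilinMap.toQuadraticMap κ))).prod = 0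
  | [], _, hx => by cases hx
  | y :: L, h, hx => by
      simp only [List.map_cons, List.prod_cons]
      rcases List.mem_cons.mp hx with rfl | hx'
      · rw [← mul_assoc, sq07 (h x (List.mem_cons_self) x (List.mem_cons_self)), zero_mul]
      · have hxy : κ x y = 0 :=
          h x (List.mem_cons_of_mem _ hx') y (List.mem_cons_self)
        have hyx : κ y x = 0 :=
          h y (List.mem_cons_self) x (List.mem_cons_of_mem _ hx')
        have ih := mem_prod_zero7 x L
          (fun a ha c hc => h a (List.mem_cons_of_mem _ ha) c (List.mem_cons_of_mem _ hc)) hx'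
        rw [← mul_assoc, anti7 hxy hyx, neg_mul, mul_assoc, ih, mul_zero, neg_zero]

end Aux

open CliffordAlgebra in
/-- With `u := ι(b̄_1)···ι(b̄_n)`, `ū := ι(b_1)···ι(b_n)`, `v := u·ū`
and `ρ := (1/2) Σ_j [b_j,b̄_j]`, one has
`(1/4)(Θ·v − v·Θ) = (1/2)(ι(ρ)·v − v·ι(ρ))` in `Cl(g,κ)`. -/
theorem statement7 (g : Type*) [LieRing g] [LieAlgebra ℂ g] [FiniteDimensional ℂ g]
    (κ : LinearMap.BilinForm ℂ g)
    (hsymm : ∀ a b : g, κ a b = κ b a)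
    (hinv : ∀ a b c : g, κ ⁅a, b⁆ c = κ a ⁅b, c⁆)
    (hnd : κ.Nondegenerate)
    (n : ℕ) (B : Module.Basis (Fin n ⊕ Fin n) ℂ g)
    (b bb : Fin n → g)
    (hb : ∀ i, b i = B (Sum.inl i)) (hbb : ∀ i, bb i = B (Sum.inr i))
    (hbiso : ∀ i j, κ (b i) (b j) = 0)
    (hbbiso : ∀ i j, κ (bb i) (bb j) = 0)
    (hpair : ∀ i j, κ (b i) (bb j) = if i = j then (1 : ℂ) else 0)
    (hsubalg : ∀ i j, ⁅b i, b j⁆ ∈ Submodule.span ℂ (Set.range b))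
    (hsubalgbar : ∀ i j, ⁅bb i, bb j⁆ ∈ Submodule.span ℂ (Set.range bb))
    (Θ : CliffordAlgebra (LinearMap.BilinMap.toQuadraticMap κ))
    (hΘ : Θ = (6 : ℂ)⁻¹ •
      ∑ i : Fin n ⊕ Fin n, ∑ j : Fin n ⊕ Fin n, ∑ k : Fin n ⊕ Fin n,
        κ (B i) ⁅B j, B k⁆ •
          (ι (LinearMap.BilinMap.toQuadraticMap κ) (B i.swap) *
            ι (LinearMap.BilinMap.toQuadraticMap κ) (B j.swap) *
            ι (LinearMap.BilinMap.toQuadraticMap κ) (B k.swap)))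
    (u : CliffordAlgebra (LinearMap.BilinMap.toQuadraticMap κ))
    (hu : u = ((List.finRange n).map fun j =>
      ι (LinearMap.BilinMap.toQuadraticMap κ) (bb j)).prod)
    (ubar : CliffordAlgebra (LinearMap.BilinMap.toQuadraticMap κ))
    (hubar : ubar = ((List.finRange n).map fun j =>
      ι (LinearMap.BilinMap.toQuadraticMap κ) (b j)).prod)
    (v : CliffordAlgebra (LinearMap.BilinMap.toQuadraticMap κ))
    (hv : v = u * ubar)
    (ρ : g) (hρ : ρ = (2 : ℂ)⁻¹ • ∑ j : Fin n, ⁅b j, bb j⁆) :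
    (4 : ℂ)⁻¹ • (Θ * v - v * Θ) =
      (2 : ℂ)⁻¹ • (ι (LinearMap.BilinMap.toQuadraticMap κ) ρ * v -
        v * ι (LinearMap.BilinMap.toQuadraticMap κ) ρ) := by
  set I := ι (LinearMap.BilinMap.toQuadraticMap κ) with hI
  -- u as a mapped list of vectors
  have humap : u = (((List.finRange n).map bb).map I).prod := by
    rw [hu, List.map_map]; rfl
  have hubarmap : ubar = (((List.finRange n).map b).map I).prod := by
    rw [hubar, List.map_map]; rfl
  -- annihilation
  have hdu : ∀ p : Fin n, I (bb p) * u = 0 := by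
    intro p
    rw [humap]
    refine mem_prod_zero7 _ _ ?_ (List.mem_map.mpr ⟨p, List.mem_finRange p, rfl⟩)
    intro y hy z hz
    obtain ⟨i, -, rfl⟩ := List.mem_map.mp hy
    obtain ⟨j, -, rfl⟩ := List.mem_map.mp hz
    exact hbbiso i j
  have hdv : ∀ p : Fin n, I (bb p) * v = 0 := by
    intro p; rw [hv, ← mul_assoc, hdu, zero_mul]
  have hcubar : ∀ p : Fin n, ubar * I (b p) = 0 := by
    intro p
    rw [hubarmap, prod_anti7]
    · rw [mem_prod_zero7 _ _ ?_ (List.mem_map.mpr ⟨p, List.mem_finRange p, rfl⟩), smul_zero]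
      intro y hy z hz
      obtain ⟨i, -, rfl⟩ := List.mem_map.mp hy
      obtain ⟨j, -, rfl⟩ := List.mem_map.mp hz
      exact hbiso i j
    · intro y hy
      obtain ⟨i, -, rfl⟩ := List.mem_map.mp hy
      exact ⟨hbiso p i, hbiso i p⟩
  have hvc : ∀ p : Fin n, v * I (b p) = 0 := by
    intro p; rw [hv, mul_assoc, hcubar, mul_zero]
  -- contraction relations
  have hdc : ∀ q r : Fin n, I (bb q) * (I (b r) * v) = (2 * κ (b r) (bb q)) • v := by
    intro q r
    rw [← mul_assoc, clrel7, sub_mul, mul_assoc, hdv, mul_zero, sub_zero,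
      ← Algebra.smul_def, hsymm (bb q) (b r), two_mul]
  have hcd : ∀ p q : Fin n, (v * I (bb p)) * I (b q) = (2 * κ (b q) (bb p)) • v := by
    intro p q
    rw [mul_assoc, clrel7, mul_sub, ← mul_assoc, hvc, zero_mul, sub_zero,
      Algebra.algebraMap_eq_smul_one, mul_smul_comm, mul_one, hsymm (bb p) (b q), two_mul]
  -- coefficient vanishing on isotropic subalgebras
  have hcl : ∀ p q r : Fin n, κ (b p) ⁅b q, b r⁆ = 0 := by
    intro p q r
    have hle : Submodule.span ℂ (Set.range b) ≤ LinearMap.ker (κ (b p)) :=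
      Submodule.span_le.mpr (by rintro _ ⟨j, rfl⟩; exact hbiso p j)
    exact hle (hsubalg q r)
  have hcbb : ∀ p q r : Fin n, κ (bb p) ⁅bb q, bb r⁆ = 0 := by
    intro p q r
    have hle : Submodule.span ℂ (Set.range bb) ≤ LinearMap.ker (κ (bb p)) :=
      Submodule.span_le.mpr (by rintro _ ⟨j, rfl⟩; exact hbbiso p j)
    exact hle (hsubalgbar q r)
  have hpair' : ∀ i j, κ (bb i) (b j) = if j = i then (1 : ℂ) else 0 := by
    intro i j; rw [hsymm, hpair]
  -- coordinates via κ
  have hreprl : ∀ (x : g) (r : Fin n), κ x (bb r) = B.repr x (Sum.inl r) := by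
    intro x r
    conv_lhs => rw [← B.sum_repr x]
    simp only [map_sum, map_add, map_smul, LinearMap.sum_apply, LinearMap.add_apply,
      LinearMap.smul_apply, smul_eq_mul, Fintype.sum_sum_type, ← hb, ← hbb, hpair, hbbiso,
      mul_ite, mul_one, mul_zero, Finset.sum_ite_eq', Finset.mem_univ, if_true,
      Finset.sum_const_zero, add_zero]
  have hreprr : ∀ (x : g) (r : Fin n), κ x (b r) = B.repr x (Sum.inr r) := by
    intro x r
    conv_lhs => rw [← B.sum_repr x]
    simp only [map_sum, map_add, map_smul, LinearMap.sum_apply, LinearMap.add_apply,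
      LinearMap.smul_apply, smul_eq_mul, Fintype.sum_sum_type, ← hb, ← hbb, hpair', hbiso,
      mul_ite, mul_one, mul_zero, Finset.sum_ite_eq, Finset.mem_univ, if_true,
      Finset.sum_const_zero, zero_add]
  -- expansion of ι x against v
  have hexp : ∀ x : g, I x * v = ∑ r : Fin n, κ x (bb r) • (I (b r) * v) := by
    intro x
    conv_lhs => rw [← B.sum_repr x]
    rw [map_sum, Finset.sum_mul]
    simp only [map_smul, smul_mul_assoc, Fintype.sum_sum_type, ← hb, ← hbb, hdv, smul_zero,
      Finset.sum_const_zero, add_zero, ← hreprl]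
  have hexp' : ∀ x : g, v * I x = ∑ r : Fin n, κ x (b r) • (v * I (bb r)) := by
    intro x
    conv_lhs => rw [← B.sum_repr x]
    rw [map_sum, Finset.mul_sum]
    simp only [map_smul, mul_smul_comm, Fintype.sum_sum_type, ← hb, ← hbb, hvc, smul_zero,
      Finset.sum_const_zero, zero_add, ← hreprr]
  -- the ρ side
  have hρv : (2 : ℂ) • (I ρ * v)
      = ∑ q : Fin n, ∑ r : Fin n, κ (b q) ⁅bb q, bb r⁆ • (I (b r) * v) := by
    rw [hρ, map_smul, smul_mul_assoc, smul_smul]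
    norm_num
    rw [Finset.sum_mul]
    refine Finset.sum_congr rfl fun q _ => ?_
    rw [hexp]
    refine Finset.sum_congr rfl fun r _ => ?_
    rw [hinv]
  have hρv' : (2 : ℂ) • (v * I ρ)
      = ∑ q : Fin n, ∑ p : Fin n, κ (b p) ⁅b q, bb q⁆ • (v * I (bb p)) := by
    rw [hρ, map_smul, mul_smul_comm, smul_smul]
    norm_num
    rw [Finset.mul_sum]
    refine Finset.sum_congr rfl fun q _ => ?_
    rw [hexp']
    refine Finset.sum_congr rfl fun p _ => ?_
    rw [hsymm ⁅b q, bb q⁆ (b p)]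
  -- triple-product reduction
  have h4 : ∀ p q r : Fin n, I (bb p) * (I (b q) * (I (b r) * v))
      = (2 * κ (b q) (bb p)) • (I (b r) * v) - (2 * κ (b r) (bb p)) • (I (b q) * v) := by
    intro p q r
    rw [← mul_assoc, clrel7, sub_mul, Algebra.algebraMap_eq_smul_one, smul_mul_assoc, one_mul,
      mul_assoc, hdc, mul_smul_comm, hsymm (bb p) (b q), two_mul, two_mul]
  have hΘv : Θ * v = ∑ q : Fin n, ∑ r : Fin n, κ (b q) ⁅bb q, bb r⁆ • (I (b r) * v) := by
    rw [hΘ, smul_mul_assoc, Finset.sum_mul]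
    simp only [Finset.sum_mul, smul_mul_assoc, mul_assoc]
    simp only [Fintype.sum_sum_type, Sum.swap_inl, Sum.swap_inr, ← hb, ← hbb]
    simp only [hcl, hcbb, zero_smul, hdv, mul_zero, smul_zero, Finset.sum_const_zero,
      add_zero, zero_add, hdc, mul_smul_comm, h4]
    have collapseA : ∀ p : Fin n, (∑ q : Fin n, ∑ r : Fin n, κ (b p) ⁅bb q, bb r⁆ •
          ((2 * κ (b q) (bb p)) • (I (b r) * v)))
        = ∑ r : Fin n, (2 : ℂ) • (κ (b p) ⁅bb p, bb r⁆ • (I (b r) * v)) := by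
      intro p
      rw [Finset.sum_eq_single p]
      · refine Finset.sum_congr rfl fun r _ => ?_
        rw [hpair, if_pos rfl, mul_one, smul_smul, smul_smul, mul_comm]
      · intro q _ hq
        simp [hpair, if_neg hq]
      · intro h; exact absurd (Finset.mem_univ p) h
    have collapseB : ∀ p q : Fin n, (∑ r : Fin n, κ (b p) ⁅bb q, bb r⁆ •
          ((2 * κ (b r) (bb p)) • (I (b q) * v)))
        = (2 : ℂ) • (κ (b p) ⁅bb q, bb p⁆ • (I (b q) * v)) := by
      intro p q
      rw [Finset.sum_eq_single p]
      · rw [hpair, if_pos rfl, mul_one, smul_smul, smul_smul, mul_comm]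
      · intro r _ hr
        simp [hpair, if_neg hr]
      · intro h; exact absurd (Finset.mem_univ p) h
    have collapseC : ∀ p q : Fin n, (∑ r : Fin n, κ (bb p) ⁅b q, bb r⁆ •
          (2 * κ (b r) (bb q)) • (I (b p) * v))
        = (2 : ℂ) • (κ (bb p) ⁅b q, bb q⁆ • (I (b p) * v)) := by
      intro p q
      rw [Finset.sum_eq_single q]
      · rw [hpair, if_pos rfl, mul_one, smul_smul, smul_smul, mul_comm]
      · intro r _ hr
        simp [hpair, if_neg hr]
      · intro h; exact absurd (Finset.mem_univ q) h
    have hskew : ∀ p q : Fin n, κ (b p) ⁅bb q, bb p⁆ = -(κ (b p) ⁅bb p, bb q⁆) := by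
      intro p q; rw [← lie_skew, map_neg]
    have hflip : ∀ p q : Fin n, κ (bb p) ⁅b q, bb q⁆ = κ (b q) ⁅bb q, bb p⁆ := by
      intro p q; rw [hsymm, hinv]
    have e1 : (∑ p : Fin n, ∑ q : Fin n, ∑ r : Fin n, κ (b p) ⁅bb q, bb r⁆ •
          ((2 * κ (b q) (bb p)) • (I (b r) * v) - (2 * κ (b r) (bb p)) • (I (b q) * v)))
        = (4 : ℂ) • ∑ q : Fin n, ∑ r : Fin n, κ (b q) ⁅bb q, bb r⁆ • (I (b r) * v) := by
      simp only [smul_sub, Finset.sum_sub_distrib, collapseA, collapseB]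
      simp only [hskew, neg_smul, smul_neg, sub_neg_eq_add, ← Finset.smul_sum,
        Finset.sum_neg_distrib]
      module
    have e2 : (∑ p : Fin n, ∑ q : Fin n, ∑ r : Fin n, κ (bb p) ⁅b q, bb r⁆ •
          (2 * κ (b r) (bb q)) • (I (b p) * v))
        = (2 : ℂ) • ∑ q : Fin n, ∑ r : Fin n, κ (b q) ⁅bb q, bb r⁆ • (I (b r) * v) := by
      simp only [collapseC, hflip, ← Finset.smul_sum]
      rw [Finset.sum_comm]
    rw [e1, e2, ← add_smul, smul_smul]
    norm_num
  -- the mirror triple-product reduction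
  have h4' : ∀ p q r : Fin n, ((v * I (bb p)) * I (bb q)) * I (b r)
      = (2 * κ (b r) (bb q)) • (v * I (bb p)) - (2 * κ (b r) (bb p)) • (v * I (bb q)) := by
    intro p q r
    rw [mul_assoc, clrel7, mul_sub, Algebra.algebraMap_eq_smul_one, mul_smul_comm, mul_one,
      ← mul_assoc, hcd, smul_mul_assoc, hsymm (bb q) (b r), two_mul, two_mul]
  have hvΘ : v * Θ = ∑ q : Fin n, ∑ p : Fin n, κ (b p) ⁅b q, bb q⁆ • (v * I (bb p)) := by
    rw [hΘ, mul_smul_comm, Finset.mul_sum]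
    simp only [Finset.mul_sum, mul_smul_comm, ← mul_assoc]
    simp only [Fintype.sum_sum_type, Sum.swap_inl, Sum.swap_inr, ← hb, ← hbb]
    simp only [hvc, zero_mul, mul_zero, smul_zero, Finset.sum_const_zero, add_zero, zero_add,
      hcl, zero_smul, hcd, smul_mul_assoc, h4']
    rw [Finset.sum_add_distrib]
    have collapseA' : ∀ p q : Fin n, (∑ r : Fin n, κ (b p) ⁅b q, bb r⁆ •
          ((2 * κ (b r) (bb q)) • (v * I (bb p))))
        = (2 : ℂ) • (κ (b p) ⁅b q, bb q⁆ • (v * I (bb p))) := by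
      intro p q
      rw [Finset.sum_eq_single q]
      · rw [hpair, if_pos rfl, mul_one, smul_smul, smul_smul, mul_comm]
      · intro r _ hr
        simp [hpair, if_neg hr]
      · intro h; exact absurd (Finset.mem_univ q) h
    have collapseB' : ∀ p q : Fin n, (∑ r : Fin n, κ (b p) ⁅b q, bb r⁆ •
          ((2 * κ (b r) (bb p)) • (v * I (bb q))))
        = (2 : ℂ) • (κ (b p) ⁅b q, bb p⁆ • (v * I (bb q))) := by
      intro p q
      rw [Finset.sum_eq_single p]
      · rw [hpair, if_pos rfl, mul_one, smul_smul, smul_smul, mul_comm]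
      · intro r _ hr
        simp [hpair, if_neg hr]
      · intro h; exact absurd (Finset.mem_univ p) h
    have collapseC' : ∀ p : Fin n, (∑ q : Fin n, ∑ r : Fin n, κ (b p) ⁅bb q, b r⁆ •
          (2 * κ (b q) (bb p)) • (v * I (bb r)))
        = ∑ r : Fin n, (2 : ℂ) • (κ (b p) ⁅bb p, b r⁆ • (v * I (bb r))) := by
      intro p
      rw [Finset.sum_eq_single p]
      · refine Finset.sum_congr rfl fun r _ => ?_
        rw [hpair, if_pos rfl, mul_one, smul_smul, smul_smul, mul_comm]
      · intro q _ hq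
        simp [hpair, if_neg hq]
      · intro h; exact absurd (Finset.mem_univ p) h
    have hskew2 : ∀ p q : Fin n, κ (b p) ⁅b q, bb p⁆ = -(κ (b q) ⁅b p, bb p⁆) := by
      intro p q; rw [← hinv, ← hinv, ← lie_skew, map_neg, LinearMap.neg_apply]
    have hflip2 : ∀ p r : Fin n, κ (b p) ⁅bb p, b r⁆ = κ (b r) ⁅b p, bb p⁆ := by
      intro p r; rw [← hinv, hsymm]
    have e1' : (∑ p : Fin n, ∑ q : Fin n, ∑ r : Fin n, κ (b p) ⁅b q, bb r⁆ •
          ((2 * κ (b r) (bb q)) • (v * I (bb p)) - (2 * κ (b r) (bb p)) • (v * I (bb q))))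
        = (4 : ℂ) • ∑ q : Fin n, ∑ p : Fin n, κ (b p) ⁅b q, bb q⁆ • (v * I (bb p)) := by
      simp only [smul_sub, Finset.sum_sub_distrib, collapseA', collapseB']
      simp only [hskew2, neg_smul, smul_neg, ← Finset.smul_sum, Finset.sum_neg_distrib]
      rw [Finset.sum_comm]
      module
    have e2' : (∑ p : Fin n, ∑ q : Fin n, ∑ r : Fin n, κ (b p) ⁅bb q, b r⁆ •
          (2 * κ (b q) (bb p)) • (v * I (bb r)))
        = (2 : ℂ) • ∑ q : Fin n, ∑ p : Fin n, κ (b p) ⁅b q, bb q⁆ • (v * I (bb p)) := by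
      simp only [collapseC', hflip2, ← Finset.smul_sum]
    rw [e1', e2', ← add_smul, smul_smul]
    norm_num
  have h1 : Θ * v = (2 : ℂ) • (I ρ * v) := by rw [hΘv, ← hρv]
  have h2 : v * Θ = (2 : ℂ) • (v * I ρ) := by rw [hvΘ, ← hρv']
  rw [h1, h2, ← smul_sub, smul_smul]
  norm_num
end

section
/- Suppose in addition that h ∈ g and scalars λ_1,…,λ_n satisfy [h,b_j] = λ_j b_j and [h,b̄_j] = −λ_j b̄_j for all j. With u := ι(b̄_1)···ι(b̄_n), ρ := (1/2) Σ_{j=1}^n [b_j,b̄_j] and w := u·ι(h), one has (1/4)(Θ·w + (−1)^n w·Θ) = (1/2)(ι(ρ)·w + (−1)^{n+1} w·ι(ρ)) in Cl(g,κ). -/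
set_option maxHeartbeats 2000000 in
open CliffordAlgebra in
/-- Suppose moreover `[h,b_j] = λ_j b_j` and `[h,b̄_j] = −λ_j b̄_j`.
With `u := ι(b̄_1)···ι(b̄_n)`, `ρ := (1/2) Σ_j [b_j,b̄_j]` and `w := u·ι(h)`, one has
`(1/4)(Θ·w + (−1)^n w·Θ) = (1/2)(ι(ρ)·w + (−1)^{n+1} w·ι(ρ))` in `Cl(g,κ)`. -/
theorem statement8 (g : Type*) [LieRing g] [LieAlgebra ℂ g] [FiniteDimensional ℂ g]
    (κ : LinearMap.BilinForm ℂ g)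
    (hsymm : ∀ a b : g, κ a b = κ b a)
    (hinv : ∀ a b c : g, κ ⁅a, b⁆ c = κ a ⁅b, c⁆)
    (hnd : κ.Nondegenerate)
    (n : ℕ) (B : Module.Basis (Fin n ⊕ Fin n) ℂ g)
    (b bb : Fin n → g)
    (hb : ∀ i, b i = B (Sum.inl i)) (hbb : ∀ i, bb i = B (Sum.inr i))
    (hbiso : ∀ i j, κ (b i) (b j) = 0)
    (hbbiso : ∀ i j, κ (bb i) (bb j) = 0)
    (hpair : ∀ i j, κ (b i) (bb j) = if i = j then (1 : ℂ) else 0)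
    (hsubalg : ∀ i j, ⁅b i, b j⁆ ∈ Submodule.span ℂ (Set.range b))
    (hsubalgbar : ∀ i j, ⁅bb i, bb j⁆ ∈ Submodule.span ℂ (Set.range bb))
    (Θ : CliffordAlgebra (LinearMap.BilinMap.toQuadraticMap κ))
    (hΘ : Θ = (6 : ℂ)⁻¹ •
      ∑ i : Fin n ⊕ Fin n, ∑ j : Fin n ⊕ Fin n, ∑ k : Fin n ⊕ Fin n,
        κ (B i) ⁅B j, B k⁆ •
          (ι (LinearMap.BilinMap.toQuadraticMap κ) (B i.swap) *
            ι (LinearMap.BilinMap.toQuadraticMap κ) (B j.swap) *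
            ι (LinearMap.BilinMap.toQuadraticMap κ) (B k.swap)))
    (u : CliffordAlgebra (LinearMap.BilinMap.toQuadraticMap κ))
    (hu : u = ((List.finRange n).map fun j =>
      ι (LinearMap.BilinMap.toQuadraticMap κ) (bb j)).prod)
    (ρ : g) (hρ : ρ = (2 : ℂ)⁻¹ • ∑ j : Fin n, ⁅b j, bb j⁆)
    (h : g) (lam : Fin n → ℂ)
    (hhb : ∀ j, ⁅h, b j⁆ = lam j • b j)
    (hhbb : ∀ j, ⁅h, bb j⁆ = -(lam j) • bb j)
    (w : CliffordAlgebra (LinearMap.BilinMap.toQuadraticMap κ))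
    (hw : w = u * ι (LinearMap.BilinMap.toQuadraticMap κ) h) :
    (4 : ℂ)⁻¹ • (Θ * w + ((-1 : ℂ) ^ n) • (w * Θ)) =
      (2 : ℂ)⁻¹ • (ι (LinearMap.BilinMap.toQuadraticMap κ) ρ * w +
        ((-1 : ℂ) ^ (n + 1)) • (w * ι (LinearMap.BilinMap.toQuadraticMap κ) ρ)) := by
  
  revert hΘ hu hw
  revert Θ u w
  set Q := LinearMap.BilinMap.toQuadraticMap κ with hQ
  set J : g →ₗ[ℂ] CliffordAlgebra Q := ι Q with hJ
  intro Θ u w hΘ hu hw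
  -- basic anticommutation
  have hxy : ∀ x y : g, J x * J y = (2 * κ x y) • (1 : CliffordAlgebra Q) - J y * J x := by
    intro x y
    have h1 := CliffordAlgebra.ι_mul_ι_add_swap (Q := Q) x y
    have h2 : QuadraticMap.polar (⇑Q) x y = 2 * κ x y := by
      simp [QuadraticMap.polar, hQ, LinearMap.BilinMap.toQuadraticMap_apply, map_add,
        LinearMap.add_apply]
      ring_nf
      rw [hsymm y x]
      ring
    rw [h2] at h1
    rw [Algebra.algebraMap_eq_smul_one] at h1
    linear_combination (norm := module) h1
  -- pairings
  have pairBB : ∀ i j : Fin n ⊕ Fin n, κ (B i) (B j) = if j = i.swap then 1 else 0 := by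
    rintro (i | i) (j | j) <;>
      simp only [Sum.swap_inl, Sum.swap_inr, ← hb, ← hbb] <;>
      simp [hbiso, hbbiso, hpair, hsymm (bb i) (b j), eq_comm]
  have pairBB2 : ∀ i j : Fin n ⊕ Fin n, κ (B i.swap) (B j) = if j = i then 1 else 0 := by
    intro i j
    rw [pairBB, Sum.swap_swap]
  have repr1 : ∀ (v : g) (i : Fin n ⊕ Fin n), κ (B i) v = B.repr v i.swap := by
    intro v i
    conv_lhs => rw [← B.sum_repr v]
    rw [map_sum]
    simp [pairBB]
  have repr2 : ∀ (v : g) (i : Fin n ⊕ Fin n), κ (B i.swap) v = B.repr v i := by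
    intro v i
    conv_lhs => rw [← B.sum_repr v]
    rw [map_sum]
    simp [pairBB2]
  have expand : ∀ v : g, ∑ i : Fin n ⊕ Fin n, κ (B i) v • B i.swap = v := by
    intro v
    conv_rhs => rw [← B.sum_repr v]
    rw [← Equiv.sum_comp (Equiv.sumComm (Fin n) (Fin n)) (fun m => B.repr v m • B m)]
    refine Finset.sum_congr rfl fun i _ => ?_
    rw [repr1]
    rfl
  have expand2 : ∀ v : g, ∑ i : Fin n ⊕ Fin n, κ v (B i.swap) • B i = v := by
    intro v
    conv_rhs => rw [← B.sum_repr v]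
    refine Finset.sum_congr rfl fun i _ => ?_
    rw [hsymm, repr2]
  -- scalar contractions
  have ctr1 : ∀ x y : g, ∑ i : Fin n ⊕ Fin n, κ (B i) y * κ x (B i.swap) = κ x y := by
    intro x y
    conv_rhs => rw [← expand y, map_sum]
    refine Finset.sum_congr rfl fun i _ => ?_
    rw [map_smul]
    simp [mul_comm]
  have ctr2 : ∀ (x : g) (i k : Fin n ⊕ Fin n),
      ∑ j : Fin n ⊕ Fin n, κ (B i) ⁅B j, B k⁆ * κ x (B j.swap) = κ (B i) ⁅x, B k⁆ := by
    intro x i k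
    conv_rhs => rw [← expand2 x]
    have hadl : ∀ v : g, ⁅v, B k⁆ = (LieAlgebra.ad ℂ g : g →ₗ[ℂ] Module.End ℂ g) v (B k) := fun v => rfl
    rw [hadl, map_sum, LinearMap.coe_sum, Finset.sum_apply, map_sum]
    refine Finset.sum_congr rfl fun j _ => ?_
    rw [map_smul, LinearMap.smul_apply, ← hadl, map_smul]
    simp [mul_comm]
  have ctr3 : ∀ (x : g) (i j : Fin n ⊕ Fin n),
      ∑ k : Fin n ⊕ Fin n, κ (B i) ⁅B j, B k⁆ * κ x (B k.swap) = κ (B i) ⁅B j, x⁆ := by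
    intro x i j
    conv_rhs => rw [← expand2 x]
    have : ∀ v : g, ⁅B j, v⁆ = LieAlgebra.ad ℂ g (B j) v := fun v => rfl
    rw [this, map_sum, map_sum]
    refine Finset.sum_congr rfl fun k _ => ?_
    rw [← this, lie_smul, map_smul]
    simp [mul_comm]
  -- squared and swap lemmas for the isotropic bb family
  have sq0 : ∀ k2 : Fin n, J (bb k2) * J (bb k2) = 0 := by
    intro k2
    rw [hJ, CliffordAlgebra.ι_sq_scalar]
    rw [hQ, LinearMap.BilinMap.toQuadraticMap_apply, hbbiso, map_zero]
  have swap0 : ∀ j k2 : Fin n, J (bb j) * J (bb k2) = -(J (bb k2) * J (bb j)) := by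
    intro j k2
    rw [hxy, hbbiso]
    simp
  have killL : ∀ (l : List (Fin n)), ∀ k2 ∈ l,
      J (bb k2) * (l.map fun j => J (bb j)).prod = 0 := by
    intro l
    induction l with
    | nil => simp
    | cons a t ih =>
      intro k2 hk2
      rw [List.map_cons, List.prod_cons, ← mul_assoc]
      rcases List.mem_cons.mp hk2 with hk | hk
      · rw [hk, sq0, zero_mul]
      · rw [swap0 k2 a, neg_mul, mul_assoc, ih k2 hk, mul_zero, neg_zero]
  have comm4 : ∀ (l : List (Fin n)) (k2 : Fin n),
      (l.map fun j => J (bb j)).prod * J (bb k2) =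
        ((-1 : ℂ) ^ l.length) • (J (bb k2) * (l.map fun j => J (bb j)).prod) := by
    intro l k2
    induction l with
    | nil => simp
    | cons a t ih =>
      rw [List.map_cons, List.prod_cons, mul_assoc, ih, mul_smul_comm, ← mul_assoc,
        swap0 a k2, neg_mul, mul_assoc]
      rw [List.length_cons, pow_succ, mul_smul, neg_one_smul, smul_neg]
  have killR : ∀ (l : List (Fin n)), ∀ k2 ∈ l,
      (l.map fun j => J (bb j)).prod * J (bb k2) = 0 := by
    intro l k2 hk2
    rw [comm4, killL l k2 hk2, smul_zero]
  have uJbb : ∀ k2 : Fin n, u * J (bb k2) = 0 := by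
    intro k2
    rw [hu]
    exact killR _ _ (List.mem_finRange _)
  have Jbbu : ∀ k2 : Fin n, J (bb k2) * u = 0 := by
    intro k2
    rw [hu]
    exact killL _ _ (List.mem_finRange _)
  -- span coefficient vanishing
  have kbbspan : ∀ (p : Fin n) (v : g), v ∈ Submodule.span ℂ (Set.range bb) →
      κ (bb p) v = 0 := by
    intro p v hv
    induction hv using Submodule.span_induction with
    | mem x hx => obtain ⟨q, rfl⟩ := hx; exact hbbiso p q
    | zero => simp
    | add x y _ _ hx hy => rw [map_add, hx, hy, add_zero]
    | smul c x _ hx => rw [map_smul, hx, smul_zero]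
  -- pair collapses
  have u_pair : ∀ p q2 : Fin n, u * (J (b p) * J (bb q2)) =
      (2 * κ (b p) (bb q2)) • u := by
    intro p q2
    rw [hxy (b p) (bb q2), mul_sub, mul_smul_comm, mul_one, ← mul_assoc, uJbb, zero_mul,
      sub_zero]
  have pairL : ∀ q2 r : Fin n, J (bb q2) * (J (b r) * u) =
      (2 * κ (bb q2) (b r)) • u := by
    intro q2 r
    rw [← mul_assoc, hxy (bb q2) (b r), sub_mul, smul_mul_assoc, one_mul, mul_assoc,
      Jbbu, mul_zero, sub_zero]
  -- Clifford anticommutation helpers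
  have anti1 : ∀ (x y : g) (z : CliffordAlgebra Q),
      J x * (J y * z) = (2 * κ x y) • z - J y * (J x * z) := by
    intro x y z
    rw [← mul_assoc, hxy x y, sub_mul, smul_mul_assoc, one_mul, mul_assoc]
  have anti3 : ∀ x a c d : g,
      (J a * J c * J d) * J x + J x * (J a * J c * J d) =
        (2 * κ x a) • (J c * J d) - (2 * κ x c) • (J a * J d) +
          (2 * κ x d) • (J a * J c) := by
    intro x a c d
    have e3 := hxy x d
    calc (J a * J c * J d) * J x + J x * (J a * J c * J d)
        = (J a * (J c * (J d * J x))) + J x * (J a * (J c * J d)) := by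
          simp only [mul_assoc]
      _ = (J a * (J c * (J d * J x))) +
            ((2 * κ x a) • (J c * J d) - J a * (J x * (J c * J d))) := by rw [anti1 x a (J c * J d)]
      _ = (J a * (J c * (J d * J x))) +
            ((2 * κ x a) • (J c * J d) -
              J a * ((2 * κ x c) • J d - J c * (J x * J d))) := by rw [anti1 x c (J d)]
      _ = (J a * (J c * (J d * J x))) +
            ((2 * κ x a) • (J c * J d) -
              J a * ((2 * κ x c) • J d - J c * ((2 * κ x d) • 1 - J d * J x))) := by
          rw [← e3]
      _ = (2 * κ x a) • (J c * J d) - (2 * κ x c) • (J a * J d) +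
          (2 * κ x d) • (J a * J c) := by
          simp only [mul_sub, mul_smul_comm, mul_one, mul_assoc]
          module
  -- invariance helpers
  have hinv' : ∀ a c d : g, κ a ⁅c, d⁆ = κ ⁅a, c⁆ d := fun a c d => (hinv a c d).symm
  have inv2 : ∀ a c d : g, κ a ⁅c, d⁆ = -κ c ⁅a, d⁆ := by
    intro a c d
    rw [hinv', hinv', ← lie_skew a c, map_neg, LinearMap.neg_apply]
  have inv3 : ∀ a c d : g, κ a ⁅c, d⁆ = κ d ⁅a, c⁆ := by
    intro a c d
    rw [hinv', hsymm]
  -- Lemma A : anticommutator of Θ with a generator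
  have lemA : ∀ x : g, Θ * J x + J x * Θ =
      ∑ j : Fin n ⊕ Fin n, ∑ k : Fin n ⊕ Fin n,
        κ x ⁅B j, B k⁆ • (J (B j.swap) * J (B k.swap)) := by
    intro x
    rw [hΘ, smul_mul_assoc, mul_smul_comm, ← smul_add]
    have main : (∑ i : Fin n ⊕ Fin n, ∑ j : Fin n ⊕ Fin n, ∑ k : Fin n ⊕ Fin n,
          κ (B i) ⁅B j, B k⁆ • (J (B i.swap) * J (B j.swap) * J (B k.swap))) * J x +
        J x * (∑ i : Fin n ⊕ Fin n, ∑ j : Fin n ⊕ Fin n, ∑ k : Fin n ⊕ Fin n,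
          κ (B i) ⁅B j, B k⁆ • (J (B i.swap) * J (B j.swap) * J (B k.swap))) =
        ∑ i : Fin n ⊕ Fin n, ∑ j : Fin n ⊕ Fin n, ∑ k : Fin n ⊕ Fin n,
          ((κ (B i) ⁅B j, B k⁆ * (2 * κ x (B i.swap))) •
              (J (B j.swap) * J (B k.swap)) -
            (κ (B i) ⁅B j, B k⁆ * (2 * κ x (B j.swap))) •
              (J (B i.swap) * J (B k.swap)) +
            (κ (B i) ⁅B j, B k⁆ * (2 * κ x (B k.swap))) •
              (J (B i.swap) * J (B j.swap))) := by
      rw [Finset.sum_mul, Finset.mul_sum, ← Finset.sum_add_distrib]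
      refine Finset.sum_congr rfl fun i _ => ?_
      rw [Finset.sum_mul, Finset.mul_sum, ← Finset.sum_add_distrib]
      refine Finset.sum_congr rfl fun j _ => ?_
      rw [Finset.sum_mul, Finset.mul_sum, ← Finset.sum_add_distrib]
      refine Finset.sum_congr rfl fun k _ => ?_
      rw [smul_mul_assoc, mul_smul_comm, ← smul_add, anti3]
      rw [smul_add, smul_sub, smul_smul, smul_smul, smul_smul]
    rw [main]
    simp only [Finset.sum_add_distrib, Finset.sum_sub_distrib]
    have hS1 : ∑ i : Fin n ⊕ Fin n, ∑ j : Fin n ⊕ Fin n, ∑ k : Fin n ⊕ Fin n,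
        (κ (B i) ⁅B j, B k⁆ * (2 * κ x (B i.swap))) • (J (B j.swap) * J (B k.swap)) =
        ∑ j : Fin n ⊕ Fin n, ∑ k : Fin n ⊕ Fin n,
          (2 * κ x ⁅B j, B k⁆) • (J (B j.swap) * J (B k.swap)) := by
      rw [Finset.sum_comm]
      refine Finset.sum_congr rfl fun j _ => ?_
      rw [Finset.sum_comm]
      refine Finset.sum_congr rfl fun k _ => ?_
      rw [← Finset.sum_smul]
      congr 1
      rw [← ctr1 x ⁅B j, B k⁆, Finset.mul_sum]
      exact Finset.sum_congr rfl fun i _ => by ring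
    have hS2 : ∑ i : Fin n ⊕ Fin n, ∑ j : Fin n ⊕ Fin n, ∑ k : Fin n ⊕ Fin n,
        (κ (B i) ⁅B j, B k⁆ * (2 * κ x (B j.swap))) • (J (B i.swap) * J (B k.swap)) =
        ∑ i : Fin n ⊕ Fin n, ∑ k : Fin n ⊕ Fin n,
          (-(2 * κ x ⁅B i, B k⁆)) • (J (B i.swap) * J (B k.swap)) := by
      refine Finset.sum_congr rfl fun i _ => ?_
      rw [Finset.sum_comm]
      refine Finset.sum_congr rfl fun k _ => ?_
      rw [← Finset.sum_smul]
      congr 1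
      have e : -(2 * κ x ⁅B i, B k⁆) = 2 * κ (B i) ⁅x, B k⁆ := by
        rw [inv2 (B i) x (B k)]; ring
      rw [e, ← ctr2 x i k, Finset.mul_sum]
      exact Finset.sum_congr rfl fun j _ => by ring
    have hS3 : ∑ i : Fin n ⊕ Fin n, ∑ j : Fin n ⊕ Fin n, ∑ k : Fin n ⊕ Fin n,
        (κ (B i) ⁅B j, B k⁆ * (2 * κ x (B k.swap))) • (J (B i.swap) * J (B j.swap)) =
        ∑ i : Fin n ⊕ Fin n, ∑ j : Fin n ⊕ Fin n,
          (2 * κ x ⁅B i, B j⁆) • (J (B i.swap) * J (B j.swap)) := by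
      refine Finset.sum_congr rfl fun i _ => ?_
      refine Finset.sum_congr rfl fun j _ => ?_
      rw [← Finset.sum_smul]
      congr 1
      have e : 2 * κ x ⁅B i, B j⁆ = 2 * κ (B i) ⁅B j, x⁆ := by
        rw [inv3 (B i) (B j) x]
      rw [e, ← ctr3 x i j, Finset.mul_sum]
      exact Finset.sum_congr rfl fun k _ => by ring
    rw [hS1, hS2, hS3, ← Finset.sum_sub_distrib, ← Finset.sum_add_distrib, Finset.smul_sum]
    refine Finset.sum_congr rfl fun j _ => ?_
    rw [← Finset.sum_sub_distrib, ← Finset.sum_add_distrib, Finset.smul_sum]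
    refine Finset.sum_congr rfl fun k _ => ?_
    rw [← sub_smul, ← add_smul, smul_smul]
    congr 1
    ring
  -- ρ sum facts
  have hsumρ : ∑ p : Fin n, ⁅b p, bb p⁆ = (2 : ℂ) • ρ := by
    rw [hρ, smul_smul]
    norm_num
  have hsumρ' : ∑ p : Fin n, ⁅bb p, b p⁆ = (-2 : ℂ) • ρ := by
    calc ∑ p : Fin n, ⁅bb p, b p⁆ = ∑ p : Fin n, -⁅b p, bb p⁆ :=
          Finset.sum_congr rfl fun p _ => by rw [← lie_skew]
      _ = -((2:ℂ) • ρ) := by rw [Finset.sum_neg_distrib, hsumρ]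
      _ = (-2 : ℂ) • ρ := by module
  -- scalar contractions against ρ
  have cA : ∀ v : g, ∑ p : Fin n, κ (bb p) ⁅b p, v⁆ = -2 * κ ρ v := by
    intro v
    have e : ∀ p : Fin n, κ (bb p) ⁅b p, v⁆ = κ ⁅bb p, b p⁆ v := fun p => hinv' _ _ _
    rw [Finset.sum_congr rfl fun p _ => e p, ← LinearMap.sum_apply, ← map_sum, hsumρ',
      map_smul, LinearMap.smul_apply, smul_eq_mul]
  have cB : ∀ p : Fin n, ∑ q : Fin n, κ (bb p) ⁅bb q, b q⁆ = -2 * κ ρ (bb p) := by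
    intro p
    rw [← map_sum, hsumρ', map_smul, smul_eq_mul, hsymm (bb p) ρ]
  have cC : ∀ q : Fin n, ∑ p : Fin n, κ (bb p) ⁅bb q, b p⁆ = 2 * κ ρ (bb q) := by
    intro q
    have e : ∀ p : Fin n, κ (bb p) ⁅bb q, b p⁆ = -κ (bb p) ⁅b p, bb q⁆ := by
      intro p
      rw [← lie_skew, map_neg]
    rw [Finset.sum_congr rfl fun p _ => e p, Finset.sum_neg_distrib, cA]
    ring
  have cA' : ∀ v : g, ∑ p : Fin n, κ (b p) ⁅bb p, v⁆ = 2 * κ ρ v := by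
    intro v
    have e : ∀ p : Fin n, κ (b p) ⁅bb p, v⁆ = κ ⁅b p, bb p⁆ v := fun p => hinv' _ _ _
    rw [Finset.sum_congr rfl fun p _ => e p, ← LinearMap.sum_apply, ← map_sum, hsumρ,
      map_smul, LinearMap.smul_apply, smul_eq_mul]
  have cB' : ∀ p : Fin n, ∑ q : Fin n, κ (bb p) ⁅b q, bb q⁆ = 2 * κ ρ (bb p) := by
    intro p
    rw [← map_sum, hsumρ, map_smul, smul_eq_mul, hsymm (bb p) ρ]
  have cC' : ∀ q : Fin n, ∑ p : Fin n, κ (b p) ⁅bb q, bb p⁆ = -2 * κ ρ (bb q) := by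
    intro q
    have e : ∀ p : Fin n, κ (b p) ⁅bb q, bb p⁆ = -κ (b p) ⁅bb p, bb q⁆ := by
      intro p
      rw [← lie_skew, map_neg]
    rw [Finset.sum_congr rfl fun p _ => e p, Finset.sum_neg_distrib, cA']
    ring
  -- expansions of products with J ρ
  have uJρ : u * J ρ = ∑ p : Fin n, κ (bb p) ρ • (u * J (b p)) := by
    conv_lhs => rw [← expand ρ, map_sum]
    rw [Finset.mul_sum, Fintype.sum_sum_type]
    simp only [map_smul, mul_smul_comm, Sum.swap_inl, Sum.swap_inr, ← hb, ← hbb]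
    simp only [uJbb, smul_zero, Finset.sum_const_zero, zero_add]
  have Jρu : J ρ * u = ∑ p : Fin n, κ (bb p) ρ • (J (b p) * u) := by
    conv_lhs => rw [← expand ρ, map_sum]
    rw [Finset.sum_mul, Fintype.sum_sum_type]
    simp only [map_smul, smul_mul_assoc, Sum.swap_inl, Sum.swap_inr, ← hb, ← hbb]
    simp only [Jbbu, smul_zero, Finset.sum_const_zero, zero_add]
  -- left-assoc pair lemmas and coefficient vanishing
  have u_pairLA : ∀ p q2 : Fin n, u * J (b p) * J (bb q2) = (2 * κ (b p) (bb q2)) • u := by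
    intro p q2
    rw [mul_assoc]
    exact u_pair p q2
  have u3 : ∀ p q2 r : Fin n, u * J (b p) * J (b q2) * J (bb r) =
      (2 * κ (b q2) (bb r)) • (u * J (b p)) - (2 * κ (b p) (bb r)) • (u * J (b q2)) := by
    intro p q2 r
    rw [mul_assoc (u * J (b p)), hxy (b q2) (bb r), mul_sub, mul_smul_comm, mul_one,
      ← mul_assoc, u_pairLA, smul_mul_assoc]
  have coefbbb : ∀ p q2 r : Fin n, κ (bb p) ⁅bb q2, bb r⁆ = 0 :=
    fun p q2 r => kbbspan p _ (hsubalgbar q2 r)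
  -- Computation (2) : u * Θ
  have comp2 : u * Θ = (-2 : ℂ) • (u * J ρ) := by
    rw [hΘ, mul_smul_comm]
    simp only [Finset.mul_sum, mul_smul_comm, ← mul_assoc]
    simp only [Fintype.sum_sum_type, Sum.swap_inl, Sum.swap_inr, ← hb, ← hbb]
    simp only [uJbb, zero_mul, smul_zero, Finset.sum_const_zero, zero_add, add_zero,
      u_pairLA, smul_mul_assoc, u3, coefbbb, zero_smul]
    simp only [smul_smul, smul_sub, Finset.sum_sub_distrib, Finset.sum_add_distrib]
    have hT1 : ∑ p : Fin n, ∑ q : Fin n, ∑ r : Fin n,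
        (κ (bb p) ⁅b q, bb r⁆ * (2 * κ (b p) (bb q))) • (u * J (b r)) =
        ∑ r : Fin n, (-4 * κ ρ (bb r)) • (u * J (b r)) := by
      have step : ∀ p : Fin n, ∑ q : Fin n, ∑ r : Fin n,
          (κ (bb p) ⁅b q, bb r⁆ * (2 * κ (b p) (bb q))) • (u * J (b r)) =
          ∑ r : Fin n, (κ (bb p) ⁅b p, bb r⁆ * 2) • (u * J (b r)) := by
        intro p
        rw [Finset.sum_comm]
        refine Finset.sum_congr rfl fun r _ => ?_
        rw [← Finset.sum_smul]
        congr 1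
        simp [hpair, mul_ite, mul_one, mul_zero, eq_comm]
      rw [Finset.sum_congr rfl fun p _ => step p, Finset.sum_comm]
      refine Finset.sum_congr rfl fun r _ => ?_
      rw [← Finset.sum_smul]
      congr 1
      rw [← Finset.sum_mul, cA]
      ring
    have hT2 : ∑ p : Fin n, ∑ q : Fin n, ∑ r : Fin n,
        (κ (bb p) ⁅bb q, b r⁆ * (2 * κ (b q) (bb r))) • (u * J (b p)) =
        ∑ p : Fin n, (-4 * κ ρ (bb p)) • (u * J (b p)) := by
      refine Finset.sum_congr rfl fun p _ => ?_
      rw [Finset.sum_congr rfl fun q (_ : q ∈ Finset.univ) =>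
        (Finset.sum_smul (s := Finset.univ)
          (f := fun r => κ (bb p) ⁅bb q, b r⁆ * (2 * κ (b q) (bb r)))).symm,
        ← Finset.sum_smul]
      congr 1
      have col : ∀ q : Fin n, ∑ r : Fin n, κ (bb p) ⁅bb q, b r⁆ * (2 * κ (b q) (bb r)) =
          κ (bb p) ⁅bb q, b q⁆ * 2 := by
        intro q
        simp [hpair, mul_ite, mul_one, mul_zero]
      rw [Finset.sum_congr rfl fun q _ => col q, ← Finset.sum_mul, cB]
      ring
    have hT3 : ∑ p : Fin n, ∑ q : Fin n, ∑ r : Fin n,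
        (κ (bb p) ⁅bb q, b r⁆ * (2 * κ (b p) (bb r))) • (u * J (b q)) =
        ∑ q : Fin n, (4 * κ ρ (bb q)) • (u * J (b q)) := by
      have step : ∀ p : Fin n, ∑ q : Fin n, ∑ r : Fin n,
          (κ (bb p) ⁅bb q, b r⁆ * (2 * κ (b p) (bb r))) • (u * J (b q)) =
          ∑ q : Fin n, (κ (bb p) ⁅bb q, b p⁆ * 2) • (u * J (b q)) := by
        intro p
        refine Finset.sum_congr rfl fun q _ => ?_
        rw [← Finset.sum_smul]
        congr 1
        simp [hpair, mul_ite, mul_one, mul_zero, eq_comm]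
      rw [Finset.sum_congr rfl fun p _ => step p, Finset.sum_comm]
      refine Finset.sum_congr rfl fun q _ => ?_
      rw [← Finset.sum_smul]
      congr 1
      rw [← Finset.sum_mul, cC]
      ring
    rw [hT1, hT2, hT3, uJρ, ← Finset.sum_sub_distrib, ← Finset.sum_add_distrib,
      Finset.smul_sum, Finset.smul_sum]
    refine Finset.sum_congr rfl fun r _ => ?_
    rw [hsymm (bb r) ρ]
    module
  have hpair' : ∀ i j : Fin n, κ (bb i) (b j) = if j = i then (1:ℂ) else 0 := by
    intro i j
    rw [hsymm, hpair]
  have u3L : ∀ p q2 r : Fin n, J (bb p) * (J (b q2) * (J (b r) * u)) =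
      (2 * κ (bb p) (b q2)) • (J (b r) * u) - (2 * κ (bb p) (b r)) • (J (b q2) * u) := by
    intro p q2 r
    rw [anti1 (bb p) (b q2) (J (b r) * u), pairL, mul_smul_comm]
  -- Computation (1) : Θ * u
  have comp1 : Θ * u = (2 : ℂ) • (J ρ * u) := by
    rw [hΘ, smul_mul_assoc]
    simp only [Finset.sum_mul, smul_mul_assoc, mul_assoc]
    simp only [Fintype.sum_sum_type, Sum.swap_inl, Sum.swap_inr, ← hb, ← hbb]
    simp only [Jbbu, mul_zero, smul_zero, Finset.sum_const_zero, zero_add, add_zero,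
      pairL, mul_smul_comm, u3L, coefbbb, zero_smul]
    simp only [smul_smul, smul_sub, Finset.sum_sub_distrib, Finset.sum_add_distrib]
    have hU1 : ∑ p : Fin n, ∑ q : Fin n, ∑ r : Fin n,
        (κ (b p) ⁅bb q, bb r⁆ * (2 * κ (bb p) (b q))) • (J (b r) * u) =
        ∑ r : Fin n, (4 * κ ρ (bb r)) • (J (b r) * u) := by
      have step : ∀ p : Fin n, ∑ q : Fin n, ∑ r : Fin n,
          (κ (b p) ⁅bb q, bb r⁆ * (2 * κ (bb p) (b q))) • (J (b r) * u) =
          ∑ r : Fin n, (κ (b p) ⁅bb p, bb r⁆ * 2) • (J (b r) * u) := by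
        intro p
        rw [Finset.sum_comm]
        refine Finset.sum_congr rfl fun r _ => ?_
        rw [← Finset.sum_smul]
        congr 1
        simp [hpair', mul_ite, mul_one, mul_zero]
      rw [Finset.sum_congr rfl fun p _ => step p, Finset.sum_comm]
      refine Finset.sum_congr rfl fun r _ => ?_
      rw [← Finset.sum_smul]
      congr 1
      rw [← Finset.sum_mul, cA']
      ring
    have hU2 : ∑ p : Fin n, ∑ q : Fin n, ∑ r : Fin n,
        (κ (b p) ⁅bb q, bb r⁆ * (2 * κ (bb p) (b r))) • (J (b q) * u) =
        ∑ q : Fin n, (-4 * κ ρ (bb q)) • (J (b q) * u) := by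
      have step : ∀ p : Fin n, ∑ q : Fin n, ∑ r : Fin n,
          (κ (b p) ⁅bb q, bb r⁆ * (2 * κ (bb p) (b r))) • (J (b q) * u) =
          ∑ q : Fin n, (κ (b p) ⁅bb q, bb p⁆ * 2) • (J (b q) * u) := by
        intro p
        refine Finset.sum_congr rfl fun q _ => ?_
        rw [← Finset.sum_smul]
        congr 1
        simp [hpair', mul_ite, mul_one, mul_zero]
      rw [Finset.sum_congr rfl fun p _ => step p, Finset.sum_comm]
      refine Finset.sum_congr rfl fun q _ => ?_
      rw [← Finset.sum_smul]
      congr 1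
      rw [← Finset.sum_mul, cC']
      ring
    have hU3 : ∑ p : Fin n, ∑ q : Fin n, ∑ r : Fin n,
        (κ (bb p) ⁅b q, bb r⁆ * (2 * κ (bb q) (b r))) • (J (b p) * u) =
        ∑ p : Fin n, (4 * κ ρ (bb p)) • (J (b p) * u) := by
      refine Finset.sum_congr rfl fun p _ => ?_
      rw [Finset.sum_congr rfl fun q (_ : q ∈ Finset.univ) =>
        (Finset.sum_smul (s := Finset.univ)
          (f := fun r => κ (bb p) ⁅b q, bb r⁆ * (2 * κ (bb q) (b r)))).symm,
        ← Finset.sum_smul]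
      congr 1
      have col : ∀ q : Fin n, ∑ r : Fin n, κ (bb p) ⁅b q, bb r⁆ * (2 * κ (bb q) (b r)) =
          κ (bb p) ⁅b q, bb q⁆ * 2 := by
        intro q
        simp [hpair', mul_ite, mul_one, mul_zero]
      rw [Finset.sum_congr rfl fun q _ => col q, ← Finset.sum_mul, cB']
      ring
    rw [hU1, hU2, hU3, Jρu, ← Finset.sum_sub_distrib, ← Finset.sum_add_distrib,
      Finset.smul_sum, Finset.smul_sum]
    refine Finset.sum_congr rfl fun r _ => ?_
    rw [hsymm (bb r) ρ]
    module
  -- coefficients involving h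
  have coefhbb : ∀ q2 r : Fin n, κ h ⁅bb q2, bb r⁆ = 0 := by
    intro q2 r
    rw [hinv', hhbb, map_smul, LinearMap.smul_apply, hbbiso, smul_zero]
  have hlamq : ∀ q2 : Fin n, κ h ⁅bb q2, b q2⁆ = -lam q2 := by
    intro q2
    rw [hinv', hhbb, map_smul, LinearMap.smul_apply, hpair']
    simp
  -- Computation (3) : u * (anticommutator of Θ and J h)
  have comp3 : u * (∑ j : Fin n ⊕ Fin n, ∑ k : Fin n ⊕ Fin n,
      κ h ⁅B j, B k⁆ • (J (B j.swap) * J (B k.swap))) =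
      (-2 * ∑ j : Fin n, lam j) • u := by
    simp only [Finset.mul_sum, mul_smul_comm, ← mul_assoc]
    simp only [Fintype.sum_sum_type, Sum.swap_inl, Sum.swap_inr, ← hb, ← hbb]
    simp only [uJbb, zero_mul, smul_zero, Finset.sum_const_zero, zero_add, add_zero,
      u_pairLA, coefhbb, zero_smul]
    simp only [smul_smul]
    have col : ∀ q2 : Fin n, ∑ r : Fin n, (κ h ⁅bb q2, b r⁆ * (2 * κ (b q2) (bb r))) • u =
        (-2 * lam q2) • u := by
      intro q2
      rw [← Finset.sum_smul]
      congr 1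
      have : ∑ r : Fin n, κ h ⁅bb q2, b r⁆ * (2 * κ (b q2) (bb r)) =
          κ h ⁅bb q2, b q2⁆ * 2 := by
        simp [hpair, mul_ite, mul_one, mul_zero]
      rw [this, hlamq]
      ring
    rw [Finset.sum_congr rfl fun q2 _ => col q2, ← Finset.sum_smul]
  have hκhρ : 2 * κ h ρ = ∑ j : Fin n, lam j := by
    rw [hρ, map_smul, smul_eq_mul, map_sum]
    have : ∀ j : Fin n, κ h ⁅b j, bb j⁆ = lam j := by
      intro j
      rw [hinv', hhb, map_smul, LinearMap.smul_apply, hpair]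
      simp
    rw [Finset.sum_congr rfl fun j _ => this j]
    ring
  -- assembly
  have hΘw : Θ * w = (2 : ℂ) • (J ρ * u * J h) := by
    rw [hw, ← mul_assoc, comp1, smul_mul_assoc]
  have hwΘ : w * Θ = (-2 * ∑ j : Fin n, lam j) • u + (2 : ℂ) • (u * J ρ * J h) := by
    rw [hw, mul_assoc, eq_sub_of_add_eq' (lemA h), mul_sub, comp3, ← mul_assoc, comp2,
      smul_mul_assoc]
    module
  have hwρ : w * J ρ = (∑ j : Fin n, lam j) • u - u * J ρ * J h := by
    rw [hw, mul_assoc, hxy h ρ, mul_sub, mul_smul_comm, mul_one, ← mul_assoc, hκhρ]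
  rw [hΘw, hwΘ, hwρ, hw, ← mul_assoc (J ρ)]
  simp only [pow_succ]
  module
end

section
/- Let W ⊆ V be an isotropic subspace (κ(w,w') = 0 for all w,w' ∈ W) with basis c_1,…,c_m, and set s := ι(c_1)···ι(c_m) ∈ Cl(V,κ). Then s ≠ 0, and for every x ∈ V: ι(x)·s = 0 if and only if x ∈ W, and s·ι(x) = 0 if and only if x ∈ W. -/
open CliffordAlgebra

section Aux

variable {V : Type*} [AddCommGroup V] [Module ℂ V] {Q : QuadraticForm ℂ V}

private lemma aux_contract_prod_eq_zero (d : Module.Dual ℂ V) :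
    ∀ l : List V, (∀ w ∈ l, d w = 0) →
      contractLeft (Q := Q) d (l.map (ι Q)).prod = 0
  | [], _ => by simp [contractLeft_one]
  | w :: t, h => by
    simp only [List.map_cons, List.prod_cons, contractLeft_ι_mul]
    rw [h w (by simp), aux_contract_prod_eq_zero d t (fun w' hw' => h w' (by simp [hw'])),
      zero_smul, mul_zero, sub_zero]

private lemma aux_prod_ne_zero {m : ℕ} (c : Fin m → V) (d : Fin m → Module.Dual ℂ V)
    (hd : ∀ i j, d i (c j) = if i = j then 1 else 0) :
    ∀ il : List (Fin m), il.Nodup → ((il.map fun i => ι Q (c i)).prod) ≠ 0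
  | [], _ => by simp
  | i :: t, hnd => by
    have hIH := aux_prod_ne_zero c d hd t (List.Nodup.of_cons hnd)
    intro h0
    apply hIH
    have key : contractLeft (Q := Q) (d i)
        (((i :: t).map fun j => ι Q (c j)).prod) = ((t.map fun j => ι Q (c j)).prod) := by
      simp only [List.map_cons, List.prod_cons, contractLeft_ι_mul]
      have ht : contractLeft (Q := Q) (d i) ((t.map fun j => ι Q (c j)).prod) = 0 := by
        have := aux_contract_prod_eq_zero (Q := Q) (d i) (t.map c) ?_
        · simpa [List.map_map, Function.comp_def] using this
        · intro w hw
          obtain ⟨j, hj, rfl⟩ := List.mem_map.1 hw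
          have hij : i ≠ j := fun h => (List.nodup_cons.1 hnd).1 (h ▸ hj)
          rw [hd i j, if_neg hij]
      rw [ht, mul_zero, sub_zero, hd i i, if_pos rfl, one_smul]
    rw [← key, h0, map_zero]

private lemma aux_mul_prod_eq_zero (v : V) (hQv : Q v = 0) :
    ∀ l : List V, (∀ w ∈ l, QuadraticMap.polar Q v w = 0) → v ∈ l →
      ι Q v * (l.map (ι Q)).prod = 0
  | [], _, hv => by simp at hv
  | w :: t, hpol, hv => by
    simp only [List.map_cons, List.prod_cons]
    rcases List.mem_cons.1 hv with rfl | hv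
    · rw [← mul_assoc, ι_sq_scalar, hQv, map_zero, zero_mul]
    · have hanti : ι Q v * ι Q w = -(ι Q w * ι Q v) := by
        have := ι_mul_ι_add_swap (Q := Q) v w
        rw [hpol w (by simp)] at this
        simp only [map_zero] at this
        linear_combination (norm := noncomm_ring) this
      rw [← mul_assoc, hanti, neg_mul, mul_assoc,
        aux_mul_prod_eq_zero v hQv t (fun w' hw' => hpol w' (by simp [hw'])) hv,
        mul_zero, neg_zero]

end Aux

open CliffordAlgebra in
/-- Let `W ⊆ V` be an isotropic subspace with basis `c_1,…,c_m`, and set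
`s := ι(c_1)···ι(c_m) ∈ Cl(V,κ)`.  Then `s ≠ 0`, and for every `x ∈ V`:
`ι(x)·s = 0 ↔ x ∈ W` and `s·ι(x) = 0 ↔ x ∈ W`. -/
theorem statement9 (V : Type*) [AddCommGroup V] [Module ℂ V] [FiniteDimensional ℂ V]
    (κ : LinearMap.BilinForm ℂ V)
    (hsymm : ∀ x y : V, κ x y = κ y x)
    (hnd : κ.Nondegenerate)
    (W : Submodule ℂ V)
    (hiso : ∀ w ∈ W, ∀ w' ∈ W, κ w w' = 0)
    (m : ℕ) (c : Fin m → V)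
    (hmem : ∀ i, c i ∈ W)
    (hli : LinearIndependent ℂ c)
    (hspan : Submodule.span ℂ (Set.range c) = W)
    (s : CliffordAlgebra (LinearMap.BilinMap.toQuadraticMap κ))
    (hs : s = ((List.finRange m).map fun i =>
      ι (LinearMap.BilinMap.toQuadraticMap κ) (c i)).prod) :
    s ≠ 0 ∧ ∀ x : V,
      (ι (LinearMap.BilinMap.toQuadraticMap κ) x * s = 0 ↔ x ∈ W) ∧
      (s * ι (LinearMap.BilinMap.toQuadraticMap κ) x = 0 ↔ x ∈ W) := by
  subst hs
  set Q := LinearMap.BilinMap.toQuadraticMap κ with hQ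
  have hrefl : κ.IsRefl := fun x y h => by rw [hsymm]; exact h
  have hQc0 : ∀ i, Q (c i) = 0 := fun i => by
    rw [hQ, LinearMap.BilinMap.toQuadraticMap_apply]
    exact hiso _ (hmem i) _ (hmem i)
  -- construct a dual family
  have hli' : LinearIndependent ℂ (fun i => (⟨c i, hmem i⟩ : W)) :=
    LinearIndependent.of_comp W.subtype hli
  have hmap : Submodule.map W.subtype
      (Submodule.span ℂ (Set.range fun i => (⟨c i, hmem i⟩ : W))) = W := by
    rw [Submodule.map_span, ← Set.range_comp]
    exact hspan
  have hspan' : ⊤ ≤ Submodule.span ℂ (Set.range (fun i => (⟨c i, hmem i⟩ : W))) := by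
    rintro ⟨w, hw⟩ -
    have hw2 : w ∈ Submodule.map W.subtype
        (Submodule.span ℂ (Set.range fun i => (⟨c i, hmem i⟩ : W))) := by
      rw [hmap]; exact hw
    obtain ⟨u, hu, hu2⟩ := hw2
    have : u = ⟨w, hw⟩ := Subtype.ext hu2
    rwa [← this]
  let b : Module.Basis (Fin m) ℂ W := Module.Basis.mk hli' hspan'
  have hdex : ∀ i : Fin m, ∃ g : V →ₗ[ℂ] ℂ, g.comp W.subtype = b.coord i :=
    fun i => LinearMap.exists_extend (b.coord i)
  choose d hd using hdex
  have hdd : ∀ i j, d i (c j) = if i = j then 1 else 0 := by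
    intro i j
    have : d i (c j) = (b.coord i) ⟨c j, hmem j⟩ := by
      rw [← hd i]; rfl
    rw [this]
    have hbj : (⟨c j, hmem j⟩ : W) = b j := by rw [Module.Basis.mk_apply]
    rw [hbj, Module.Basis.coord_apply, Module.Basis.repr_self]
    simp [Finsupp.single_apply, eq_comm]
  -- key lemma for an arbitrary ordering of the basis
  have key : ∀ il : List (Fin m), il.Nodup → (∀ i, i ∈ il) →
      ((il.map fun i => ι Q (c i)).prod ≠ 0 ∧
        ∀ x : V, (ι Q x * (il.map fun i => ι Q (c i)).prod = 0 ↔ x ∈ W)) := by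
    intro il hndp hcomp
    set p := (il.map fun i => ι Q (c i)).prod with hp
    have hpne : p ≠ 0 := aux_prod_ne_zero c d hdd il hndp
    refine ⟨hpne, fun x => ⟨fun h0 => ?_, fun hx => ?_⟩⟩
    · have hmem2 : x ∈ κ.orthogonal (κ.orthogonal W) := by
        intro y hy
        have hcp : contractLeft (Q := Q) (κ y) p = 0 := by
          have := aux_contract_prod_eq_zero (Q := Q) (κ y) (il.map c) ?_
          · simpa [hp, List.map_map, Function.comp_def] using this
          · intro w hw
            obtain ⟨j, hj, rfl⟩ := List.mem_map.1 hw
            rw [hsymm]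
            exact hy (c j) (hmem j)
        have := contractLeft_ι_mul (Q := Q) (d := κ y) x p
        rw [h0, map_zero, hcp, mul_zero, sub_zero] at this
        have h2 : κ y x = 0 := by
          rcases smul_eq_zero.mp this.symm with h | h
          · exact h
          · exact absurd h hpne
        exact h2
      rwa [LinearMap.BilinForm.orthogonal_orthogonal hnd hrefl] at hmem2
    · have hker : W ≤ LinearMap.ker ((LinearMap.mulRight ℂ p).comp (ι Q)) := by
        rw [← hspan, Submodule.span_le]
        rintro _ ⟨i, rfl⟩
        simp only [SetLike.mem_coe, LinearMap.mem_ker, LinearMap.comp_apply,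
          LinearMap.mulRight_apply]
        have := aux_mul_prod_eq_zero (Q := Q) (c i) (hQc0 i) (il.map c) ?_ ?_
        · simpa [hp, List.map_map, Function.comp_def] using this
        · intro w hw
          obtain ⟨j, hj, rfl⟩ := List.mem_map.1 hw
          rw [hQ, LinearMap.BilinMap.polar_toQuadraticMap,
            hiso _ (hmem i) _ (hmem j), hiso _ (hmem j) _ (hmem i), add_zero]
        · exact List.mem_map_of_mem (f := c) (hcomp i)
      have := hker hx
      simpa using this
  obtain ⟨h1, h2⟩ := key (List.finRange m) (List.nodup_finRange m) List.mem_finRange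
  obtain ⟨h1', h2'⟩ := key (List.finRange m).reverse
    (List.nodup_reverse.2 (List.nodup_finRange m))
    (fun i => List.mem_reverse.2 (List.mem_finRange i))
  have hrev : reverse (Q := Q) ((List.map (fun i => ι Q (c i)) (List.finRange m)).prod)
      = (((List.finRange m).reverse).map fun i => ι Q (c i)).prod := by
    have h3 : (List.map (fun i => ι Q (c i)) (List.finRange m))
        = ((List.finRange m).map c).map (ι Q) := by
      rw [List.map_map]; rfl
    have h4 : (((List.finRange m).reverse).map fun i => ι Q (c i))
        = (((List.finRange m).map c).reverse).map (ι Q) := by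
      rw [← List.map_reverse, List.map_map]; rfl
    rw [h3, h4, reverse_prod_map_ι, List.map_reverse]
  refine ⟨h1, fun x => ⟨h2 x, ?_⟩⟩
  constructor
  · intro h
    have := congrArg (reverse (Q := Q)) h
    rw [reverse.map_mul, reverse_ι, map_zero, hrev] at this
    exact (h2' x).1 this
  · intro hx
    have h5 := (h2' x).2 hx
    rw [← hrev] at h5
    have := congrArg (reverse (Q := Q)) h5
    rw [reverse.map_mul, reverse_reverse, reverse_ι, map_zero] at this
    exact this
end

section
/- One has τ·u = −(n i/2)·u and u·τ' = (n i/2)·u in Cl(V,κ); consequently τ·u − u·τ' = −i n·u and τ·u + u·τ' = 0. -/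
section aux
variable {A : Type*} [Ring A]

lemma mul_listProd_eq_zero {ι' : Type*} (g : ι' → A)
    (hsq : ∀ i, g i * g i = 0)
    (hanti : ∀ i j, g i * g j = -(g j * g i)) :
    ∀ (L : List ι') (j : ι'), j ∈ L → g j * (L.map g).prod = 0 := by
  intro L
  induction L with
  | nil => intro j hj; simp at hj
  | cons a L ih =>
    intro j hj
    rcases List.mem_cons.mp hj with h | h
    · subst h
      simp [List.map_cons, List.prod_cons, ← mul_assoc, hsq j]
    · have := ih j h
      simp only [List.map_cons, List.prod_cons, ← mul_assoc, hanti j a]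
      rw [neg_mul, mul_assoc, this, mul_zero, neg_zero]

lemma listProd_mul_eq_zero {ι' : Type*} (g : ι' → A)
    (hsq : ∀ i, g i * g i = 0)
    (hanti : ∀ i j, g i * g j = -(g j * g i)) :
    ∀ (L : List ι') (j : ι'), j ∈ L → (L.map g).prod * g j = 0 := by
  intro L
  induction L using List.reverseRecOn with
  | nil => intro j hj; simp at hj
  | append_singleton L a ih =>
    intro j hj
    rw [List.mem_append] at hj
    rcases hj with h | h
    · have := ih j h
      by_cases hja : j = a
      · subst hja
        simp [List.map_append, List.prod_append, mul_assoc, hsq j]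
      · simp only [List.map_append, List.prod_append, List.map_cons, List.map_nil,
          List.prod_cons, List.prod_nil, mul_one]
        rw [mul_assoc, hanti a j, mul_neg, ← mul_assoc, this, zero_mul, neg_zero]
    · simp only [List.mem_singleton] at h
      subst h
      simp [List.map_append, List.prod_append, mul_assoc, hsq j]
end aux

open CliffordAlgebra in
/-- With `u := ι(b̄_1)···ι(b̄_n)`,
`τ := −(ni/2)·1 + (i/2) Σ_j ι(b_j)ι(b̄_j)` and `τ' := (ni/2)·1 − (i/2) Σ_j ι(b̄_j)ι(b_j)`,
one has `τ·u = −(ni/2)·u` and `u·τ' = (ni/2)·u`; consequently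
`τ·u − u·τ' = −in·u` and `τ·u + u·τ' = 0`. -/
theorem statement10 (V : Type*) [AddCommGroup V] [Module ℂ V] [FiniteDimensional ℂ V]
    (κ : LinearMap.BilinForm ℂ V)
    (hsymm : ∀ x y : V, κ x y = κ y x)
    (hnd : κ.Nondegenerate)
    (n : ℕ) (B : Module.Basis (Fin n ⊕ Fin n) ℂ V)
    (b bb : Fin n → V)
    (hb : ∀ i, b i = B (Sum.inl i)) (hbb : ∀ i, bb i = B (Sum.inr i))
    (hbiso : ∀ i j, κ (b i) (b j) = 0)
    (hbbiso : ∀ i j, κ (bb i) (bb j) = 0)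
    (hpair : ∀ i j, κ (b i) (bb j) = if i = j then (1 : ℂ) else 0)
    (u : CliffordAlgebra (LinearMap.BilinMap.toQuadraticMap κ))
    (hu : u = ((List.finRange n).map fun j =>
      ι (LinearMap.BilinMap.toQuadraticMap κ) (bb j)).prod)
    (τ τ' : CliffordAlgebra (LinearMap.BilinMap.toQuadraticMap κ))
    (hτ : τ = algebraMap ℂ _ (-((n : ℂ) * Complex.I) / 2) +
      (Complex.I / 2) • ∑ j : Fin n,
        ι (LinearMap.BilinMap.toQuadraticMap κ) (b j) *
          ι (LinearMap.BilinMap.toQuadraticMap κ) (bb j))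
    (hτ' : τ' = algebraMap ℂ _ (((n : ℂ) * Complex.I) / 2) -
      (Complex.I / 2) • ∑ j : Fin n,
        ι (LinearMap.BilinMap.toQuadraticMap κ) (bb j) *
          ι (LinearMap.BilinMap.toQuadraticMap κ) (b j)) :
    τ * u = (-((n : ℂ) * Complex.I) / 2) • u ∧
    u * τ' = (((n : ℂ) * Complex.I) / 2) • u ∧
    τ * u - u * τ' = (-(Complex.I * (n : ℂ))) • u ∧
    τ * u + u * τ' = 0 := by
  set g : Fin n → CliffordAlgebra (LinearMap.BilinMap.toQuadraticMap κ) :=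
    fun j => ι (LinearMap.BilinMap.toQuadraticMap κ) (bb j) with hg
  have hsq : ∀ i, g i * g i = 0 := by
    intro i
    show ι (LinearMap.BilinMap.toQuadraticMap κ) (bb i) *
      ι (LinearMap.BilinMap.toQuadraticMap κ) (bb i) = 0
    rw [ι_sq_scalar, LinearMap.BilinMap.toQuadraticMap_apply, hbbiso, map_zero]
  have hanti : ∀ i j, g i * g j = -(g j * g i) := by
    intro i j
    have h := ι_mul_ι_add_swap (Q := LinearMap.BilinMap.toQuadraticMap κ) (bb i) (bb j)
    rw [LinearMap.BilinMap.polar_toQuadraticMap, hbbiso, hbbiso, add_zero, map_zero] at h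
    exact eq_neg_of_add_eq_zero_left h
  have hl : ∀ j, g j * u = 0 := fun j => by
    rw [hu]; exact mul_listProd_eq_zero g hsq hanti _ j (List.mem_finRange j)
  have hr : ∀ j, u * g j = 0 := fun j => by
    rw [hu]; exact listProd_mul_eq_zero g hsq hanti _ j (List.mem_finRange j)
  have h1 : τ * u = (-((n : ℂ) * Complex.I) / 2) • u := by
    rw [hτ, add_mul, smul_mul_assoc, Finset.sum_mul]
    have : ∀ j ∈ Finset.univ, (ι (LinearMap.BilinMap.toQuadraticMap κ) (b j) * ι (LinearMap.BilinMap.toQuadraticMap κ) (bb j)) * u = 0 := by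
      intro j _
      rw [mul_assoc]
      rw [show ι (LinearMap.BilinMap.toQuadraticMap κ) (bb j) = g j from rfl, hl j, mul_zero]
    rw [Finset.sum_congr rfl this, Finset.sum_const_zero, smul_zero, add_zero,
      Algebra.smul_def]
  have h2 : u * τ' = (((n : ℂ) * Complex.I) / 2) • u := by
    rw [hτ', mul_sub, mul_smul_comm, Finset.mul_sum]
    have : ∀ j ∈ Finset.univ, u * (ι (LinearMap.BilinMap.toQuadraticMap κ) (bb j) * ι (LinearMap.BilinMap.toQuadraticMap κ) (b j)) = 0 := by
      intro j _
      rw [← mul_assoc, show ι (LinearMap.BilinMap.toQuadraticMap κ) (bb j) = g j from rfl, hr j, zero_mul]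
    rw [Finset.sum_congr rfl this, Finset.sum_const_zero, smul_zero, sub_zero,
      Algebra.smul_def, Algebra.commutes]
  refine ⟨h1, h2, ?_, ?_⟩
  · rw [h1, h2, ← sub_smul]
    congr 1
    ring
  · rw [h1, h2, ← add_smul]
    rw [show (-((n : ℂ) * Complex.I) / 2) + (((n : ℂ) * Complex.I) / 2) = 0 by ring, zero_smul]
end

section
/- For subsets P, Q ⊆ {1,…,n}, let u_{P,Q} := (∏_{j∈P} ι(b_j))·u·(∏_{j∈Q} ι(b_j)), where each product is taken in increasing order of indices. Then τ·u_{P,Q} − u_{P,Q}·τ' = i(|P| + |Q| − n)·u_{P,Q} and τ·u_{P,Q} + u_{P,Q}·τ' = i(|P| − |Q|)·u_{P,Q}. -/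
private lemma aux_prod_left {A : Type*} [Ring A] [Algebra ℂ A] {I : Type*} [DecidableEq I]
    (e : A) (g : I → A) (j : I) (c : ℂ)
    (hcomm : ∀ k, k ≠ j → e * g k = g k * e)
    (hhit : e * g j = c • g j) :
    ∀ l : List I, e * (l.map g).prod =
      if j ∈ l then c • (l.map g).prod else (l.map g).prod * e := by
  intro l
  induction l with
  | nil => simp
  | cons k l ih =>
    simp only [List.map_cons, List.prod_cons]
    rcases eq_or_ne k j with hk | hk
    · subst hk
      rw [if_pos (List.mem_cons_self), ← mul_assoc, hhit, smul_mul_assoc]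
    · rw [← mul_assoc, hcomm k hk, mul_assoc, ih]
      by_cases hj : j ∈ l
      · rw [if_pos hj, if_pos (List.mem_cons_of_mem _ hj), mul_smul_comm]
      · rw [if_neg hj, if_neg (by simp [hj, Ne.symm hk]), ← mul_assoc]

private lemma aux_prod_right {A : Type*} [Ring A] [Algebra ℂ A] {I : Type*} [DecidableEq I]
    (e : A) (g : I → A) (j : I) (c : ℂ)
    (hcomm : ∀ k, k ≠ j → e * g k = g k * e)
    (hhit : g j * e = c • g j) :
    ∀ l : List I, (l.map g).prod * e =
      if j ∈ l then c • (l.map g).prod else e * (l.map g).prod := by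
  intro l
  induction l with
  | nil => simp
  | cons k l ih =>
    simp only [List.map_cons, List.prod_cons]
    rw [mul_assoc, ih]
    by_cases hj : j ∈ l
    · rw [if_pos hj, if_pos (List.mem_cons_of_mem _ hj), mul_smul_comm]
    · rcases eq_or_ne k j with hk | hk
      · subst hk
        rw [if_neg hj, if_pos (List.mem_cons_self), ← mul_assoc, hhit, smul_mul_assoc]
      · rw [if_neg hj, if_neg (by simp [hj, Ne.symm hk]), ← mul_assoc, ← hcomm k hk, mul_assoc]

open CliffordAlgebra in
/-- For subsets `P, Q ⊆ {1,…,n}`, let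
`u_{P,Q} := (∏_{j∈P} ι(b_j))·u·(∏_{j∈Q} ι(b_j))` (products in increasing index order).
Then `τ·u_{P,Q} − u_{P,Q}·τ' = i(|P| + |Q| − n)·u_{P,Q}` and
`τ·u_{P,Q} + u_{P,Q}·τ' = i(|P| − |Q|)·u_{P,Q}`. -/
theorem statement11 (V : Type*) [AddCommGroup V] [Module ℂ V] [FiniteDimensional ℂ V]
    (κ : LinearMap.BilinForm ℂ V)
    (hsymm : ∀ x y : V, κ x y = κ y x)
    (hnd : κ.Nondegenerate)
    (n : ℕ) (B : Module.Basis (Fin n ⊕ Fin n) ℂ V)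
    (b bb : Fin n → V)
    (hb : ∀ i, b i = B (Sum.inl i)) (hbb : ∀ i, bb i = B (Sum.inr i))
    (hbiso : ∀ i j, κ (b i) (b j) = 0)
    (hbbiso : ∀ i j, κ (bb i) (bb j) = 0)
    (hpair : ∀ i j, κ (b i) (bb j) = if i = j then (1 : ℂ) else 0)
    (u : CliffordAlgebra (LinearMap.BilinMap.toQuadraticMap κ))
    (hu : u = ((List.finRange n).map fun j =>
      ι (LinearMap.BilinMap.toQuadraticMap κ) (bb j)).prod)
    (τ τ' : CliffordAlgebra (LinearMap.BilinMap.toQuadraticMap κ))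
    (hτ : τ = algebraMap ℂ _ (-((n : ℂ) * Complex.I) / 2) +
      (Complex.I / 2) • ∑ j : Fin n,
        ι (LinearMap.BilinMap.toQuadraticMap κ) (b j) *
          ι (LinearMap.BilinMap.toQuadraticMap κ) (bb j))
    (hτ' : τ' = algebraMap ℂ _ (((n : ℂ) * Complex.I) / 2) -
      (Complex.I / 2) • ∑ j : Fin n,
        ι (LinearMap.BilinMap.toQuadraticMap κ) (bb j) *
          ι (LinearMap.BilinMap.toQuadraticMap κ) (b j))
    (U : Finset (Fin n) → Finset (Fin n) → CliffordAlgebra (LinearMap.BilinMap.toQuadraticMap κ))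
    (hU : ∀ P Q : Finset (Fin n), U P Q =
      ((P.sort (· ≤ ·)).map fun j =>
        ι (LinearMap.BilinMap.toQuadraticMap κ) (b j)).prod * u *
      ((Q.sort (· ≤ ·)).map fun j =>
        ι (LinearMap.BilinMap.toQuadraticMap κ) (b j)).prod) :
    ∀ P Q : Finset (Fin n),
      τ * U P Q - U P Q * τ' =
        (Complex.I * ((P.card : ℂ) + (Q.card : ℂ) - (n : ℂ))) • U P Q ∧
      τ * U P Q + U P Q * τ' =
        (Complex.I * ((P.card : ℂ) - (Q.card : ℂ))) • U P Q := by
  -- basic squares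
  have hsq_b : ∀ j, ι (LinearMap.BilinMap.toQuadraticMap κ) (b j) * ι (LinearMap.BilinMap.toQuadraticMap κ) (b j) = 0 := by
    intro j
    rw [ι_sq_scalar, LinearMap.BilinMap.toQuadraticMap_apply, hbiso, map_zero]
  have hsq_bb : ∀ j, ι (LinearMap.BilinMap.toQuadraticMap κ) (bb j) * ι (LinearMap.BilinMap.toQuadraticMap κ) (bb j) = 0 := by
    intro j
    rw [ι_sq_scalar, LinearMap.BilinMap.toQuadraticMap_apply, hbbiso, map_zero]
  -- polar identity
  have hpolar : ∀ x y, ι (LinearMap.BilinMap.toQuadraticMap κ) x * ι (LinearMap.BilinMap.toQuadraticMap κ) y + ι (LinearMap.BilinMap.toQuadraticMap κ) y * ι (LinearMap.BilinMap.toQuadraticMap κ) x = algebraMap ℂ _ (κ x y + κ y x) := by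
    intro x y
    rw [ι_mul_ι_add_swap, LinearMap.BilinMap.polar_toQuadraticMap]
  have hanti : ∀ x y, κ x y = 0 → ι (LinearMap.BilinMap.toQuadraticMap κ) x * ι (LinearMap.BilinMap.toQuadraticMap κ) y = -(ι (LinearMap.BilinMap.toQuadraticMap κ) y * ι (LinearMap.BilinMap.toQuadraticMap κ) x) := by
    intro x y h1
    have h2 : κ y x = 0 := by rw [hsymm]; exact h1
    have := hpolar x y
    rw [h1, h2, add_zero, map_zero] at this
    exact eq_neg_of_add_eq_zero_left this
  have hbk : ∀ j k, ι (LinearMap.BilinMap.toQuadraticMap κ) (b j) * ι (LinearMap.BilinMap.toQuadraticMap κ) (b k) = -(ι (LinearMap.BilinMap.toQuadraticMap κ) (b k) * ι (LinearMap.BilinMap.toQuadraticMap κ) (b j)) :=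
    fun j k => hanti _ _ (hbiso j k)
  have hbbk : ∀ j k, ι (LinearMap.BilinMap.toQuadraticMap κ) (bb j) * ι (LinearMap.BilinMap.toQuadraticMap κ) (bb k) = -(ι (LinearMap.BilinMap.toQuadraticMap κ) (bb k) * ι (LinearMap.BilinMap.toQuadraticMap κ) (bb j)) :=
    fun j k => hanti _ _ (hbbiso j k)
  have hmix : ∀ j k, j ≠ k → ι (LinearMap.BilinMap.toQuadraticMap κ) (b j) * ι (LinearMap.BilinMap.toQuadraticMap κ) (bb k) = -(ι (LinearMap.BilinMap.toQuadraticMap κ) (bb k) * ι (LinearMap.BilinMap.toQuadraticMap κ) (b j)) := by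
    intro j k hjk
    exact hanti _ _ (by rw [hpair]; simp [hjk])
  have hmix' : ∀ j k, j ≠ k → ι (LinearMap.BilinMap.toQuadraticMap κ) (bb k) * ι (LinearMap.BilinMap.toQuadraticMap κ) (b j) = -(ι (LinearMap.BilinMap.toQuadraticMap κ) (b j) * ι (LinearMap.BilinMap.toQuadraticMap κ) (bb k)) := by
    intro j k hjk
    exact hanti _ _ (by rw [hsymm, hpair]; simp [hjk])
  have hjj : ∀ j, ι (LinearMap.BilinMap.toQuadraticMap κ) (bb j) * ι (LinearMap.BilinMap.toQuadraticMap κ) (b j) = algebraMap ℂ _ 2 - ι (LinearMap.BilinMap.toQuadraticMap κ) (b j) * ι (LinearMap.BilinMap.toQuadraticMap κ) (bb j) := by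
    intro j
    have hval : κ (b j) (bb j) + κ (bb j) (b j) = 2 := by
      rw [hsymm (bb j) (b j), hpair]; norm_num
    have h := hpolar (b j) (bb j)
    rw [hval] at h
    exact eq_sub_of_add_eq' h
  -- the elements e j = ι(b j) ι(bb j)
  -- left action on generators
  have E1 : ∀ j k, k ≠ j → (ι (LinearMap.BilinMap.toQuadraticMap κ) (b j) * ι (LinearMap.BilinMap.toQuadraticMap κ) (bb j)) * ι (LinearMap.BilinMap.toQuadraticMap κ) (b k)
      = ι (LinearMap.BilinMap.toQuadraticMap κ) (b k) * (ι (LinearMap.BilinMap.toQuadraticMap κ) (b j) * ι (LinearMap.BilinMap.toQuadraticMap κ) (bb j)) := by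
    intro j k hk
    have h : ι (LinearMap.BilinMap.toQuadraticMap κ) (bb j) * ι (LinearMap.BilinMap.toQuadraticMap κ) (b k) = -(ι (LinearMap.BilinMap.toQuadraticMap κ) (b k) * ι (LinearMap.BilinMap.toQuadraticMap κ) (bb j)) :=
      hmix' k j hk
    rw [mul_assoc, h, mul_neg, ← mul_assoc, hbk j k, neg_mul, neg_neg, mul_assoc]
  have E2 : ∀ j, (ι (LinearMap.BilinMap.toQuadraticMap κ) (b j) * ι (LinearMap.BilinMap.toQuadraticMap κ) (bb j)) * ι (LinearMap.BilinMap.toQuadraticMap κ) (b j) = (2 : ℂ) • ι (LinearMap.BilinMap.toQuadraticMap κ) (b j) := by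
    intro j
    rw [mul_assoc, hjj j, mul_sub, ← mul_assoc, hsq_b j, zero_mul, sub_zero,
      ← Algebra.commutes, ← Algebra.smul_def]
  have E3 : ∀ j k, k ≠ j → (ι (LinearMap.BilinMap.toQuadraticMap κ) (b j) * ι (LinearMap.BilinMap.toQuadraticMap κ) (bb j)) * ι (LinearMap.BilinMap.toQuadraticMap κ) (bb k)
      = ι (LinearMap.BilinMap.toQuadraticMap κ) (bb k) * (ι (LinearMap.BilinMap.toQuadraticMap κ) (b j) * ι (LinearMap.BilinMap.toQuadraticMap κ) (bb j)) := by
    intro j k hk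
    rw [mul_assoc, hbbk j k, mul_neg, ← mul_assoc, hmix j k (Ne.symm hk),
      neg_mul, neg_neg, mul_assoc]
  have E4 : ∀ j, (ι (LinearMap.BilinMap.toQuadraticMap κ) (b j) * ι (LinearMap.BilinMap.toQuadraticMap κ) (bb j)) * ι (LinearMap.BilinMap.toQuadraticMap κ) (bb j) = (0 : ℂ) • ι (LinearMap.BilinMap.toQuadraticMap κ) (bb j) := by
    intro j
    rw [mul_assoc, hsq_bb, mul_zero, zero_smul]
  have F2 : ∀ j, ι (LinearMap.BilinMap.toQuadraticMap κ) (b j) * (ι (LinearMap.BilinMap.toQuadraticMap κ) (b j) * ι (LinearMap.BilinMap.toQuadraticMap κ) (bb j)) = (0 : ℂ) • ι (LinearMap.BilinMap.toQuadraticMap κ) (b j) := by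
    intro j
    rw [← mul_assoc, hsq_b, zero_mul, zero_smul]
  have F4 : ∀ j, ι (LinearMap.BilinMap.toQuadraticMap κ) (bb j) * (ι (LinearMap.BilinMap.toQuadraticMap κ) (b j) * ι (LinearMap.BilinMap.toQuadraticMap κ) (bb j)) = (2 : ℂ) • ι (LinearMap.BilinMap.toQuadraticMap κ) (bb j) := by
    intro j
    rw [← mul_assoc, hjj j, sub_mul, mul_assoc, hsq_bb, mul_zero, sub_zero,
      ← Algebra.smul_def]
  -- action of e j on u
  have heu : ∀ j, (ι (LinearMap.BilinMap.toQuadraticMap κ) (b j) * ι (LinearMap.BilinMap.toQuadraticMap κ) (bb j)) * u = 0 := by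
    intro j
    rw [hu, aux_prod_left _ _ j 0 (fun k hk => E3 j k hk) (E4 j),
      if_pos (List.mem_finRange j), zero_smul]
  have hue : ∀ j, u * (ι (LinearMap.BilinMap.toQuadraticMap κ) (b j) * ι (LinearMap.BilinMap.toQuadraticMap κ) (bb j)) = (2 : ℂ) • u := by
    intro j
    rw [hu, aux_prod_right _ _ j 2 (fun k hk => E3 j k hk) (F4 j),
      if_pos (List.mem_finRange j)]
  intro P Q
  -- action of e j on U P Q
  have heU : ∀ j, (ι (LinearMap.BilinMap.toQuadraticMap κ) (b j) * ι (LinearMap.BilinMap.toQuadraticMap κ) (bb j)) * U P Q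
      = if j ∈ P then (2 : ℂ) • U P Q else 0 := by
    intro j
    rw [hU, ← mul_assoc, ← mul_assoc,
      aux_prod_left _ _ j 2 (fun k hk => E1 j k hk) (E2 j)]
    by_cases hj : j ∈ P
    · rw [if_pos ((Finset.mem_sort _).2 hj), if_pos hj, smul_mul_assoc, smul_mul_assoc]
    · rw [if_neg (fun h => hj ((Finset.mem_sort _).1 h)), if_neg hj,
        mul_assoc _ _ u, heu, mul_zero, zero_mul]
  have hUe : ∀ j, U P Q * (ι (LinearMap.BilinMap.toQuadraticMap κ) (b j) * ι (LinearMap.BilinMap.toQuadraticMap κ) (bb j))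
      = if j ∈ Q then 0 else (2 : ℂ) • U P Q := by
    intro j
    rw [hU, mul_assoc,
      aux_prod_right _ _ j 0 (fun k hk => E1 j k hk) (F2 j)]
    by_cases hj : j ∈ Q
    · rw [if_pos ((Finset.mem_sort _).2 hj), if_pos hj, zero_smul, mul_zero]
    · rw [if_neg (fun h => hj ((Finset.mem_sort _).1 h)), if_neg hj,
        ← mul_assoc, mul_assoc _ u, hue, mul_smul_comm, smul_mul_assoc]
  -- sums
  have hTU : (∑ j : Fin n, ι (LinearMap.BilinMap.toQuadraticMap κ) (b j) * ι (LinearMap.BilinMap.toQuadraticMap κ) (bb j)) * U P Q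
      = ((2 : ℂ) * (P.card : ℂ)) • U P Q := by
    rw [Finset.sum_mul]
    simp only [heU]
    rw [Finset.sum_ite_mem, Finset.univ_inter, Finset.sum_const,
      ← Nat.cast_smul_eq_nsmul ℂ, smul_smul, mul_comm]
  have hUT : U P Q * (∑ j : Fin n, ι (LinearMap.BilinMap.toQuadraticMap κ) (b j) * ι (LinearMap.BilinMap.toQuadraticMap κ) (bb j))
      = ((2 : ℂ) * ((n : ℂ) - (Q.card : ℂ))) • U P Q := by
    rw [Finset.mul_sum]
    simp only [hUe]
    rw [Finset.sum_ite, Finset.sum_const_zero, zero_add, Finset.sum_const]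
    have hfilter : (Finset.univ.filter (fun j : Fin n => ¬ j ∈ Q)) = Qᶜ := by
      ext x; simp [Finset.mem_compl]
    rw [hfilter, Finset.card_compl, Fintype.card_fin,
      ← Nat.cast_smul_eq_nsmul ℂ, Nat.cast_sub (by
        simpa [Finset.card_univ] using Finset.card_le_univ Q), smul_smul, mul_comm]
  -- τ' = τ
  have hτeq : τ' = τ := by
    have hsum : (∑ j : Fin n, ι (LinearMap.BilinMap.toQuadraticMap κ) (bb j) * ι (LinearMap.BilinMap.toQuadraticMap κ) (b j))
        = algebraMap ℂ _ (2 * n) - ∑ j : Fin n, ι (LinearMap.BilinMap.toQuadraticMap κ) (b j) * ι (LinearMap.BilinMap.toQuadraticMap κ) (bb j) := by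
      rw [Finset.sum_congr rfl (fun j _ => hjj j), Finset.sum_sub_distrib,
        Finset.sum_const, Finset.card_univ, Fintype.card_fin,
        ← Nat.cast_smul_eq_nsmul ℂ, Algebra.smul_def, ← map_mul, mul_comm]
    rw [hτ', hτ, hsum, smul_sub]
    have h1 : (Complex.I / 2) • (algebraMap ℂ (CliffordAlgebra (LinearMap.BilinMap.toQuadraticMap κ)) (2 * n))
        = algebraMap ℂ _ (Complex.I * n) := by
      rw [Algebra.smul_def, ← map_mul]; congr 1; ring
    have h2 : algebraMap ℂ (CliffordAlgebra (LinearMap.BilinMap.toQuadraticMap κ)) ((n : ℂ) * Complex.I / 2)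
        - algebraMap ℂ _ (Complex.I * n) = algebraMap ℂ _ (-((n : ℂ) * Complex.I) / 2) := by
      rw [← map_sub]; congr 1; ring
    rw [h1, ← h2]
    abel
  -- τ * U and U * τ
  have hτU : τ * U P Q
      = (Complex.I * (P.card : ℂ) - (n : ℂ) * Complex.I / 2) • U P Q := by
    rw [hτ, add_mul, smul_mul_assoc, hTU, ← Algebra.smul_def, smul_smul, ← add_smul]
    congr 1; ring
  have hUτ : U P Q * τ
      = ((n : ℂ) * Complex.I / 2 - Complex.I * (Q.card : ℂ)) • U P Q := by
    rw [hτ, mul_add, mul_smul_comm, hUT, ← Algebra.commutes, ← Algebra.smul_def,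
      smul_smul, ← add_smul]
    congr 1; ring
  constructor
  · rw [hτeq, hτU, hUτ, ← sub_smul]
    congr 1; ring
  · rw [hτeq, hτU, hUτ, ← add_smul]
    congr 1; ring
end

section
/- For 0 ≤ p, q ≤ n, the subspace 𝔘_{p,q} := span_ℂ{u_{P,Q} : P, Q ⊆ {1,…,n}, |P| = p, |Q| = q}, where u_{P,Q} := (∏_{j∈P} ι(b_j))·u·(∏_{j∈Q} ι(b_j)) (products in increasing order of indices), is exactly the joint eigenspace {w ∈ Cl(V,κ) : τ·w − w·τ' = i(p + q − n)·w and τ·w + w·τ' = i(p − q)·w}. -/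
section Aux

variable {A : Type*} [Ring A] [Algebra ℂ A] {ιt : Type*}

private lemma anti_sq (z : ιt → A) (hz : ∀ a b, z a * z b + z b * z a = 0) (a : ιt) :
    z a * z a = 0 := by
  have h := hz a a
  have h2 : (2 : ℂ) • (z a * z a) = 0 := by
    rw [two_smul]; exact h
  simpa using (smul_eq_zero.mp h2).resolve_left (by norm_num)

private lemma mem_mul_prod_eq_zero (z : ιt → A) (hz : ∀ a b, z a * z b + z b * z a = 0)
    {x : ιt} : ∀ {l : List ιt}, x ∈ l → z x * (l.map z).prod = 0 := by
  intro l
  induction l with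
  | nil => intro h; simp at h
  | cons a t ih =>
    intro hmem
    rcases List.mem_cons.mp hmem with h | h
    · subst h
      rw [List.map_cons, List.prod_cons, ← mul_assoc, anti_sq z hz, zero_mul]
    · have hanti : z x * z a = -(z a * z x) := eq_neg_of_add_eq_zero_left (hz x a)
      rw [List.map_cons, List.prod_cons, ← mul_assoc, hanti, neg_mul, mul_assoc, ih h,
        mul_zero, neg_zero]

private lemma prod_eq_zero_of_not_nodup (z : ιt → A) (hz : ∀ a b, z a * z b + z b * z a = 0) :
    ∀ {l : List ιt}, ¬ l.Nodup → (l.map z).prod = 0 := by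
  intro l
  induction l with
  | nil => intro h; exact absurd List.nodup_nil h
  | cons a t ih =>
    intro h
    rw [List.nodup_cons] at h
    push_neg at h
    rw [List.map_cons, List.prod_cons]
    by_cases ha : a ∈ t
    · exact mem_mul_prod_eq_zero z hz ha
    · rw [ih (h ha), mul_zero]

private lemma perm_prod_smul (z : ιt → A) (hz : ∀ a b, z a * z b + z b * z a = 0)
    {l₁ l₂ : List ιt} (h : l₁.Perm l₂) :
    ∃ c : ℂ, (l₁.map z).prod = c • (l₂.map z).prod := by
  induction h with
  | nil => exact ⟨1, by simp⟩
  | cons a _ ih =>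
    obtain ⟨c, hc⟩ := ih
    exact ⟨c, by simp [List.prod_cons, hc, mul_smul_comm]⟩
  | swap a b l =>
    refine ⟨-1, ?_⟩
    have : z b * z a = -(z a * z b) := eq_neg_of_add_eq_zero_left (hz b a)
    simp [List.prod_cons, ← mul_assoc, this, neg_smul]
  | trans _ _ ih₁ ih₂ =>
    obtain ⟨c₁, hc₁⟩ := ih₁
    obtain ⟨c₂, hc₂⟩ := ih₂
    exact ⟨c₁ * c₂, by rw [hc₁, hc₂, smul_smul]⟩

private lemma reduce_prod [LinearOrder ιt] (z : ιt → A)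
    (hz : ∀ a b, z a * z b + z b * z a = 0) (l : List ιt) :
    ∃ (c : ℂ) (P : Finset ιt), (l.map z).prod = c • ((P.sort (· ≤ ·)).map z).prod := by
  by_cases hnd : l.Nodup
  · obtain ⟨c, hc⟩ := perm_prod_smul z hz
      (List.perm_of_nodup_nodup_toFinset_eq hnd (l.toFinset.sort_nodup (· ≤ ·))
        (by rw [Finset.sort_toFinset]))
    exact ⟨c, l.toFinset, hc⟩
  · exact ⟨0, ∅, by rw [prod_eq_zero_of_not_nodup z hz hnd, zero_smul]⟩

private lemma extract_component {M : Type*} [AddCommGroup M] [Module ℂ M]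
    (E G : ℕ → Submodule ℂ M) (hGE : ∀ i, G i ≤ E i) (hind : iSupIndep E)
    {p : ℕ} {w : M} (hwE : w ∈ E p) (hw : w ∈ ⨆ i, G i) : w ∈ G p := by
  obtain ⟨v, hv, hsum⟩ := (Submodule.mem_iSup_iff_exists_finsupp G w).mp hw
  have hzero : ∀ j, j ≠ p → v j = 0 := by
    intro j hj
    have h1 : v j ∈ E j := hGE j (hv j)
    have h2 : v j ∈ ⨆ (i) (_ : i ≠ j), E i := by
      have hwmem : w ∈ ⨆ (i) (_ : i ≠ j), E i :=
        (le_iSup₂ (f := fun (i : ℕ) (_ : i ≠ j) => E i) p (fun h => hj h.symm)) hwE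
      have hrest : (∑ i ∈ v.support.erase j, v i) ∈ ⨆ (i) (_ : i ≠ j), E i := by
        refine Submodule.sum_mem _ (fun i hi => ?_)
        exact (le_iSup₂ (f := fun (i : ℕ) (_ : i ≠ j) => E i) i
          (Finset.ne_of_mem_erase hi)) (hGE i (hv i))
      have hj' : v j = w - ∑ i ∈ v.support.erase j, v i := by
        rw [← hsum, Finsupp.sum]
        by_cases hjs : j ∈ v.support
        · rw [← Finset.add_sum_erase _ _ hjs]; abel
        · rw [Finset.erase_eq_self.mpr hjs, sub_self]
          exact Finsupp.notMem_support_iff.mp hjs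
      rw [hj']
      exact sub_mem hwmem hrest
    exact (Submodule.disjoint_def.mp (iSupIndep_def.mp hind j)) _ h1 h2
  have hwp : w = v p := by
    rw [← hsum, Finsupp.sum]
    exact Finset.sum_eq_single p (fun i _ hi => hzero i hi)
      (fun hp => Finsupp.notMem_support_iff.mp hp)
  rw [hwp]
  exact hv p

end Aux

section Key

open CliffordAlgebra in
private theorem key {A : Type*} [Ring A] [Algebra ℂ A]
    (n : ℕ) (X Y : Fin n → A)
    (hXX : ∀ i j, X i * X j + X j * X i = 0)
    (hYY : ∀ i j, Y i * Y j + Y j * Y i = 0)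
    (hXY : ∀ i j, X i * Y j + Y j * X i = if i = j then algebraMap ℂ A 2 else 0)
    (hadj : Algebra.adjoin ℂ (Set.range X ∪ Set.range Y) = ⊤)
    (u : A) (hu : u = ((List.finRange n).map Y).prod)
    (τ τ' : A)
    (hτ : τ = algebraMap ℂ A (-((n : ℂ) * Complex.I) / 2) +
      (Complex.I / 2) • ∑ j : Fin n, X j * Y j)
    (hτ' : τ' = algebraMap ℂ A (((n : ℂ) * Complex.I) / 2) -
      (Complex.I / 2) • ∑ j : Fin n, Y j * X j)
    (U : Finset (Fin n) → Finset (Fin n) → A)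
    (hU : ∀ P Q : Finset (Fin n), U P Q =
      ((P.sort (· ≤ ·)).map X).prod * u * ((Q.sort (· ≤ ·)).map X).prod)
    (p q : ℕ) :
    (Submodule.span ℂ
        {w | ∃ P Q : Finset (Fin n), P.card = p ∧ Q.card = q ∧ w = U P Q} : Set A) =
    {w | τ * w - w * τ' = (Complex.I * ((p : ℂ) + (q : ℂ) - (n : ℂ))) • w ∧
         τ * w + w * τ' = (Complex.I * ((p : ℂ) - (q : ℂ))) • w} := by
  classical
  -- basic consequences of the relations
  have hXXneg : ∀ i j, X i * X j = -(X j * X i) :=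
    fun i j => eq_neg_of_add_eq_zero_left (hXX i j)
  have hYYneg : ∀ i j, Y i * Y j = -(Y j * Y i) :=
    fun i j => eq_neg_of_add_eq_zero_left (hYY i j)
  have hXsq : ∀ i, X i * X i = 0 := anti_sq X hXX
  have hYsq : ∀ i, Y i * Y i = 0 := anti_sq Y hYY
  have hXYne : ∀ i j, i ≠ j → X i * Y j = -(Y j * X i) := by
    intro i j hij
    have h := hXY i j
    rw [if_neg hij] at h
    exact eq_neg_of_add_eq_zero_left h
  have hYXne : ∀ i j, i ≠ j → Y j * X i = -(X i * Y j) := by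
    intro i j hij
    rw [hXYne i j hij, neg_neg]
  have hYX_self : ∀ j, Y j * X j = algebraMap ℂ A 2 - X j * Y j := by
    intro j
    have h := hXY j j
    rw [if_pos rfl] at h
    exact eq_sub_of_add_eq' h
  have hXY_self : ∀ j, X j * Y j = algebraMap ℂ A 2 - Y j * X j := by
    intro j
    have h := hXY j j
    rw [if_pos rfl] at h
    exact eq_sub_of_add_eq h
  -- commutation of c j := X j * Y j and d j := Y j * X j with other generators
  have hcX : ∀ j k, k ≠ j → (X j * Y j) * X k = X k * (X j * Y j) := by
    intro j k hkj
    calc X j * Y j * X k = X j * (Y j * X k) := by rw [mul_assoc]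
      _ = X j * -(X k * Y j) := by rw [hYXne k j hkj]
      _ = -(X j * X k) * Y j := by rw [mul_neg, neg_mul, mul_assoc]
      _ = (X k * X j) * Y j := by rw [hXXneg j k, neg_neg]
      _ = X k * (X j * Y j) := by rw [mul_assoc]
  have hcY : ∀ j k, k ≠ j → (X j * Y j) * Y k = Y k * (X j * Y j) := by
    intro j k hkj
    calc X j * Y j * Y k = X j * (Y j * Y k) := by rw [mul_assoc]
      _ = X j * -(Y k * Y j) := by rw [hYYneg j k]
      _ = -(X j * Y k) * Y j := by rw [mul_neg, neg_mul, mul_assoc]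
      _ = (Y k * X j) * Y j := by rw [hXYne j k (fun h => hkj h.symm), neg_neg]
      _ = Y k * (X j * Y j) := by rw [mul_assoc]
  have hdX : ∀ j k, k ≠ j → X k * (Y j * X j) = (Y j * X j) * X k := by
    intro j k hkj
    calc X k * (Y j * X j) = (X k * Y j) * X j := by rw [mul_assoc]
      _ = -(Y j * X k) * X j := by rw [hXYne k j hkj]
      _ = -(Y j * (X k * X j)) := by rw [neg_mul, mul_assoc]
      _ = Y j * (X j * X k) := by rw [hXXneg k j, mul_neg, neg_neg]
      _ = (Y j * X j) * X k := by rw [mul_assoc]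
  have hdY : ∀ j k, k ≠ j → Y k * (Y j * X j) = (Y j * X j) * Y k := by
    intro j k hkj
    calc Y k * (Y j * X j) = (Y k * Y j) * X j := by rw [mul_assoc]
      _ = -(Y j * Y k) * X j := by rw [hYYneg k j]
      _ = -(Y j * (Y k * X j)) := by rw [neg_mul, mul_assoc]
      _ = Y j * (X j * Y k) := by rw [hYXne j k (fun h => hkj h.symm), mul_neg, neg_neg]
      _ = (Y j * X j) * Y k := by rw [mul_assoc]
  have hcXs : ∀ j, (X j * Y j) * X j = (2 : ℂ) • X j := by
    intro j
    calc X j * Y j * X j = X j * (Y j * X j) := by rw [mul_assoc]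
      _ = X j * (algebraMap ℂ A 2 - X j * Y j) := by rw [hYX_self]
      _ = X j * algebraMap ℂ A 2 - (X j * X j) * Y j := by rw [mul_sub, mul_assoc]
      _ = (2 : ℂ) • X j - 0 := by rw [hXsq, zero_mul, ← Algebra.commutes, ← Algebra.smul_def]
      _ = (2 : ℂ) • X j := by rw [sub_zero]
  have hcYs : ∀ j, (X j * Y j) * Y j = 0 := by
    intro j
    rw [mul_assoc, hYsq, mul_zero]
  have hXds : ∀ j, X j * (Y j * X j) = (2 : ℂ) • X j := by
    intro j
    rw [← mul_assoc]
    exact hcXs j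
  have hYds : ∀ j, Y j * (Y j * X j) = 0 := by
    intro j
    rw [← mul_assoc, hYsq, zero_mul]
  -- list lemmas : left multiplication by c j
  have hcl_mem : ∀ (j : Fin n) (l : List (Fin n)), j ∈ l →
      (X j * Y j) * (l.map X).prod = (2 : ℂ) • (l.map X).prod := by
    intro j l
    induction l with
    | nil => intro h; simp at h
    | cons a t ih =>
      intro hmem
      rw [List.map_cons, List.prod_cons]
      by_cases haj : a = j
      · subst haj
        rw [← mul_assoc, hcXs, smul_mul_assoc]
      · have hat : j ∈ t := (List.mem_cons.mp hmem).resolve_left (fun h => haj h.symm)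
        rw [← mul_assoc, hcX j a haj, mul_assoc, ih hat, mul_smul_comm]
  have hcl_not : ∀ (j : Fin n) (l : List (Fin n)), j ∉ l →
      (X j * Y j) * (l.map X).prod = (l.map X).prod * (X j * Y j) := by
    intro j l
    induction l with
    | nil => intro _; simp
    | cons a t ih =>
      intro hmem
      have haj : a ≠ j := fun h => hmem (h ▸ List.mem_cons_self)
      have hat : j ∉ t := fun h => hmem (List.mem_cons_of_mem a h)
      rw [List.map_cons, List.prod_cons, ← mul_assoc, hcX j a haj, mul_assoc, ih hat,
        ← mul_assoc]
  have hcy_mem : ∀ (j : Fin n) (l : List (Fin n)), j ∈ l →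
      (X j * Y j) * (l.map Y).prod = 0 := by
    intro j l
    induction l with
    | nil => intro h; simp at h
    | cons a t ih =>
      intro hmem
      rw [List.map_cons, List.prod_cons]
      by_cases haj : a = j
      · subst haj
        rw [← mul_assoc, hcYs, zero_mul]
      · have hat : j ∈ t := (List.mem_cons.mp hmem).resolve_left (fun h => haj h.symm)
        rw [← mul_assoc, hcY j a haj, mul_assoc, ih hat, mul_zero]
  have hcu : ∀ j : Fin n, (X j * Y j) * u = 0 := by
    intro j
    rw [hu]
    exact hcy_mem j _ (List.mem_finRange j)
  -- list lemmas : right multiplication by d j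
  have hdl_not : ∀ (j : Fin n) (l : List (Fin n)), j ∉ l →
      (l.map X).prod * (Y j * X j) = (Y j * X j) * (l.map X).prod := by
    intro j l
    induction l with
    | nil => intro _; simp
    | cons a t ih =>
      intro hmem
      have haj : a ≠ j := fun h => hmem (h ▸ List.mem_cons_self)
      have hat : j ∉ t := fun h => hmem (List.mem_cons_of_mem a h)
      rw [List.map_cons, List.prod_cons, mul_assoc, ih hat, ← mul_assoc, hdX j a haj,
        mul_assoc]
  have hdl_mem : ∀ (j : Fin n) (l : List (Fin n)), j ∈ l →
      (l.map X).prod * (Y j * X j) = (2 : ℂ) • (l.map X).prod := by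
    intro j l
    induction l with
    | nil => intro h; simp at h
    | cons a t ih =>
      intro hmem
      rw [List.map_cons, List.prod_cons]
      by_cases hat : j ∈ t
      · rw [mul_assoc, ih hat, mul_smul_comm]
      · have haj : a = j := by
          rcases List.mem_cons.mp hmem with h | h
          · exact h.symm
          · exact absurd h hat
        subst haj
        rw [mul_assoc, hdl_not a t hat, ← mul_assoc, hXds, smul_mul_assoc]
  have hdy_not : ∀ (j : Fin n) (l : List (Fin n)), j ∉ l →
      (l.map Y).prod * (Y j * X j) = (Y j * X j) * (l.map Y).prod := by
    intro j l
    induction l with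
    | nil => intro _; simp
    | cons a t ih =>
      intro hmem
      have haj : a ≠ j := fun h => hmem (h ▸ List.mem_cons_self)
      have hat : j ∉ t := fun h => hmem (List.mem_cons_of_mem a h)
      rw [List.map_cons, List.prod_cons, mul_assoc, ih hat, ← mul_assoc, hdY j a haj,
        mul_assoc]
  have hdy_mem : ∀ (j : Fin n) (l : List (Fin n)), j ∈ l →
      (l.map Y).prod * (Y j * X j) = 0 := by
    intro j l
    induction l with
    | nil => intro h; simp at h
    | cons a t ih =>
      intro hmem
      rw [List.map_cons, List.prod_cons]
      by_cases hat : j ∈ t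
      · rw [mul_assoc, ih hat, mul_zero]
      · have haj : a = j := by
          rcases List.mem_cons.mp hmem with h | h
          · exact h.symm
          · exact absurd h hat
        subst haj
        rw [mul_assoc, hdy_not a t hat, ← mul_assoc, hYds, zero_mul]
  have hud : ∀ j : Fin n, u * (Y j * X j) = 0 := by
    intro j
    rw [hu]
    exact hdy_mem j _ (List.mem_finRange j)
  -- action on the U P Q
  have hcU : ∀ (j : Fin n) (P Q : Finset (Fin n)),
      (X j * Y j) * U P Q = (if j ∈ P then (2 : ℂ) else 0) • U P Q := by
    intro j P Q
    rw [hU]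
    by_cases hj : j ∈ P
    · rw [if_pos hj, ← mul_assoc, ← mul_assoc,
        hcl_mem j _ ((Finset.mem_sort _).mpr hj), smul_mul_assoc, smul_mul_assoc]
    · rw [if_neg hj, zero_smul, ← mul_assoc, ← mul_assoc,
        hcl_not j _ (fun h => hj ((Finset.mem_sort _).mp h)), mul_assoc _ _ u, hcu,
        mul_zero, zero_mul]
  have hUd : ∀ (j : Fin n) (P Q : Finset (Fin n)),
      U P Q * (Y j * X j) = (if j ∈ Q then (2 : ℂ) else 0) • U P Q := by
    intro j P Q
    rw [hU]
    by_cases hj : j ∈ Q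
    · rw [if_pos hj, mul_assoc, hdl_mem j _ ((Finset.mem_sort _).mpr hj), mul_smul_comm]
    · rw [if_neg hj, zero_smul, mul_assoc,
        hdl_not j _ (fun h => hj ((Finset.mem_sort _).mp h)), ← mul_assoc,
        mul_assoc _ u _, hud, mul_zero, zero_mul]
  -- eigenvalue equations for the generators
  have hτU : ∀ P Q : Finset (Fin n),
      τ * U P Q = (Complex.I * (2 * (P.card : ℂ) - (n : ℂ)) / 2) • U P Q := by
    intro P Q
    have hsum : (∑ j : Fin n, X j * Y j) * U P Q = ((P.card : ℂ) * 2) • U P Q := by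
      rw [Finset.sum_mul, Finset.sum_congr rfl (fun j _ => hcU j P Q), ← Finset.sum_smul,
        Finset.sum_ite_mem, Finset.univ_inter, Finset.sum_const, nsmul_eq_mul]
    rw [hτ, add_mul, smul_mul_assoc, hsum, ← Algebra.smul_def, smul_smul, ← add_smul]
    congr 1
    ring
  have hUτ' : ∀ P Q : Finset (Fin n),
      U P Q * τ' = (Complex.I * ((n : ℂ) - 2 * (Q.card : ℂ)) / 2) • U P Q := by
    intro P Q
    have hsum : U P Q * (∑ j : Fin n, Y j * X j) = ((Q.card : ℂ) * 2) • U P Q := by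
      rw [Finset.mul_sum, Finset.sum_congr rfl (fun j _ => hUd j P Q), ← Finset.sum_smul,
        Finset.sum_ite_mem, Finset.univ_inter, Finset.sum_const, nsmul_eq_mul]
    have halg : U P Q * algebraMap ℂ A (((n : ℂ) * Complex.I) / 2)
        = (((n : ℂ) * Complex.I) / 2) • U P Q := by
      rw [← Algebra.commutes, ← Algebra.smul_def]
    rw [hτ', mul_sub, mul_smul_comm, hsum, smul_smul, halg, ← sub_smul]
    congr 1
    ring
  -- the span of all products (X l) * u * (X r)
  set S' : Submodule ℂ A := Submodule.span ℂ
    {w | ∃ l r : List (Fin n), w = (l.map X).prod * u * (r.map X).prod} with hS'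
  have hmapmem : ∀ (T : A →ₗ[ℂ] A),
      (∀ g ∈ {w | ∃ l r : List (Fin n), w = (l.map X).prod * u * (r.map X).prod}, T g ∈ S') →
      ∀ w ∈ S', T w ∈ S' := by
    intro T hT w hw
    have h1 : T w ∈ Submodule.map T S' := Submodule.mem_map_of_mem hw
    rw [hS', Submodule.map_span] at h1
    refine Submodule.span_le.mpr ?_ h1
    rintro _ ⟨g, hg, rfl⟩
    exact hT g hg
  have hx_left : ∀ (j : Fin n), ∀ w ∈ S', X j * w ∈ S' := by
    intro j
    refine hmapmem (LinearMap.mulLeft ℂ (X j)) ?_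
    rintro g ⟨l, r, rfl⟩
    refine Submodule.subset_span ⟨j :: l, r, ?_⟩
    simp only [LinearMap.mulLeft_apply, List.map_cons, List.prod_cons, mul_assoc]
  have hx_right : ∀ (j : Fin n), ∀ w ∈ S', w * X j ∈ S' := by
    intro j
    refine hmapmem (LinearMap.mulRight ℂ (X j)) ?_
    rintro g ⟨l, r, rfl⟩
    refine Submodule.subset_span ⟨l, r ++ [j], ?_⟩
    simp only [LinearMap.mulRight_apply, List.map_append, List.prod_append, List.map_cons,
      List.prod_cons, List.map_nil, List.prod_nil, mul_one, mul_assoc]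
  have hygen : ∀ (j : Fin n) (l r : List (Fin n)),
      Y j * ((l.map X).prod * u * (r.map X).prod) ∈ S' := by
    intro j l
    induction l with
    | nil =>
      intro r
      have h0 : Y j * u = 0 := by
        rw [hu]
        exact mem_mul_prod_eq_zero Y hYY (List.mem_finRange j)
      rw [List.map_nil, List.prod_nil, one_mul, ← mul_assoc, h0, zero_mul]
      exact S'.zero_mem
    | cons a t ih =>
      intro r
      rw [List.map_cons, List.prod_cons]
      have h1 : Y j * (X a * (t.map X).prod * u * (r.map X).prod)
          = (Y j * X a) * ((t.map X).prod * u * (r.map X).prod) := by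
        simp only [mul_assoc]
      rw [h1]
      have h2 : Y j * X a = (if a = j then algebraMap ℂ A 2 else 0) - X a * Y j :=
        eq_sub_of_add_eq' (hXY a j)
      rw [h2, sub_mul]
      refine sub_mem ?_ ?_
      · by_cases haj : a = j
        · rw [if_pos haj, ← Algebra.smul_def]
          exact S'.smul_mem _ (Submodule.subset_span ⟨t, r, rfl⟩)
        · rw [if_neg haj, zero_mul]
          exact S'.zero_mem
      · rw [mul_assoc]
        exact hx_left a _ (ih r)
  have hy_left : ∀ (j : Fin n), ∀ w ∈ S', Y j * w ∈ S' := by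
    intro j
    refine hmapmem (LinearMap.mulLeft ℂ (Y j)) ?_
    rintro g ⟨l, r, rfl⟩
    exact hygen j l r
  have hygenR : ∀ (j : Fin n) (r l : List (Fin n)),
      ((l.map X).prod * u * (r.map X).prod) * Y j ∈ S' := by
    intro j r
    induction r using List.reverseRecOn with
    | nil =>
      intro l
      have h0 : u * Y j = 0 := by
        have hnd : ¬ (List.finRange n ++ [j]).Nodup := by
          intro hnd
          rw [List.nodup_append] at hnd
          exact hnd.2.2 j (List.mem_finRange j) j (List.mem_singleton_self j) rfl
        have h1 := prod_eq_zero_of_not_nodup Y hYY hnd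
        rw [List.map_append, List.prod_append, List.map_cons, List.map_nil, List.prod_cons,
          List.prod_nil, mul_one, ← hu] at h1
        exact h1
      rw [List.map_nil, List.prod_nil, mul_one, mul_assoc, h0, mul_zero]
      exact S'.zero_mem
    | append_singleton t a ih =>
      intro l
      have h1 : (l.map X).prod * u * ((t ++ [a]).map X).prod * Y j
          = ((l.map X).prod * u * (t.map X).prod) * (X a * Y j) := by
        simp only [List.map_append, List.prod_append, List.map_cons, List.map_nil,
          List.prod_cons, List.prod_nil, mul_one, mul_assoc]
      rw [h1]
      have h2 : X a * Y j = (if a = j then algebraMap ℂ A 2 else 0) - Y j * X a :=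
        eq_sub_of_add_eq (hXY a j)
      rw [h2, mul_sub]
      refine sub_mem ?_ ?_
      · by_cases haj : a = j
        · rw [if_pos haj, ← Algebra.commutes, ← Algebra.smul_def]
          exact S'.smul_mem _ (Submodule.subset_span ⟨l, t, rfl⟩)
        · rw [if_neg haj, mul_zero]
          exact S'.zero_mem
      · rw [← mul_assoc]
        exact hx_right a _ (ih l)
  have hy_right : ∀ (j : Fin n), ∀ w ∈ S', w * Y j ∈ S' := by
    intro j
    refine hmapmem (LinearMap.mulRight ℂ (Y j)) ?_
    rintro g ⟨l, r, rfl⟩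
    exact hygenR j r l
  -- moving X j across a product of Y's with different indices
  have hmove : ∀ (j : Fin n) (l : List (Fin n)), (∀ k ∈ l, k ≠ j) →
      X j * (l.map Y).prod = ((-1 : ℂ)) ^ l.length • ((l.map Y).prod * X j) := by
    intro j l
    induction l with
    | nil => intro _; simp
    | cons a t ih =>
      intro hall
      have haj : a ≠ j := hall a (List.mem_cons_self)
      rw [List.map_cons, List.prod_cons, ← mul_assoc, hXYne j a (fun h => haj h.symm),
        neg_mul, mul_assoc, ih (fun k hk => hall k (List.mem_cons_of_mem a hk)),
        mul_smul_comm, ← neg_smul, List.length_cons, pow_succ, mul_neg_one, neg_smul,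
        mul_assoc]
      exact (neg_smul _ _).symm
  have hdropfact : ∀ (m : ℕ) (hm : m < n),
      (List.finRange n).drop m = (⟨m, hm⟩ : Fin n) :: (List.finRange n).drop (m + 1) := by
    intro m hm
    have hlen : m < (List.finRange n).length := by simpa using hm
    rw [List.drop_eq_getElem_cons hlen]
    congr 1
    simp [List.getElem_finRange]
  have hdropmem : ∀ (m : ℕ) (k : Fin n), k ∈ (List.finRange n).drop m → m ≤ (k : ℕ) := by
    intro m k hk
    obtain ⟨i, hi, hik⟩ := List.getElem_of_mem hk
    rw [List.getElem_drop, List.getElem_finRange] at hik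
    have := congrArg Fin.val hik
    simp at this
    omega
  have houter : ∀ m, m ≤ n → ∀ l : List (Fin n), l.Nodup →
      (((List.finRange n).drop m).map Y).prod * (l.map X).prod ∈ S' := by
    intro m
    induction m with
    | zero =>
      intro _ l _
      refine Submodule.subset_span ⟨[], l, ?_⟩
      rw [List.drop_zero, ← hu, List.map_nil, List.prod_nil, one_mul]
    | succ m ihm =>
      intro hm1 l hl
      have hm : m < n := hm1
      set μ : Fin n := ⟨m, hm⟩ with hμdef
      have hYt : Y μ * (((List.finRange n).drop (m + 1)).map Y).prod
          = (((List.finRange n).drop m).map Y).prod := by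
        rw [hdropfact m hm, List.map_cons, List.prod_cons]
      have hall : ∀ k ∈ (List.finRange n).drop (m + 1), k ≠ μ := by
        intro k hk heq
        have h1 := hdropmem (m + 1) k hk
        rw [heq] at h1
        simp only [hμdef, Fin.val_mk] at h1
        omega
      have hXYid : X μ * Y μ + Y μ * X μ = algebraMap ℂ A 2 := by
        have h := hXY μ μ
        rwa [if_pos rfl] at h
      have hkey : ∀ z : A, (2 : ℂ) • z = X μ * (Y μ * z) + Y μ * (X μ * z) := by
        intro z
        calc (2 : ℂ) • z = algebraMap ℂ A 2 * z := Algebra.smul_def 2 z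
          _ = (X μ * Y μ + Y μ * X μ) * z := by rw [hXYid]
          _ = X μ * (Y μ * z) + Y μ * (X μ * z) := by rw [add_mul, mul_assoc, mul_assoc]
      have hmemcase : ∀ l' : List (Fin n), l'.Nodup → μ ∈ l' →
          (((List.finRange n).drop (m + 1)).map Y).prod * (l'.map X).prod ∈ S' := by
        intro l' hl' hμl'
        have hYz : Y μ * ((((List.finRange n).drop (m + 1)).map Y).prod * (l'.map X).prod)
            = (((List.finRange n).drop m).map Y).prod * (l'.map X).prod := by
          rw [← mul_assoc, hYt]
        have hXz : X μ * ((((List.finRange n).drop (m + 1)).map Y).prod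
            * (l'.map X).prod) = 0 := by
          rw [← mul_assoc, hmove μ _ hall, smul_mul_assoc, mul_assoc,
            mem_mul_prod_eq_zero X hXX hμl', mul_zero, smul_zero]
        have h2z := hkey ((((List.finRange n).drop (m + 1)).map Y).prod * (l'.map X).prod)
        rw [hYz, hXz, mul_zero, add_zero] at h2z
        have heq : (((List.finRange n).drop (m + 1)).map Y).prod * (l'.map X).prod
            = ((1 : ℂ) / 2) • (X μ * ((((List.finRange n).drop m).map Y).prod
              * (l'.map X).prod)) := by
          rw [← h2z, smul_smul]
          norm_num
        rw [heq]
        exact S'.smul_mem _ (hx_left μ _ (ihm (Nat.le_of_lt hm) l' hl'))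
      have hinner : ∀ k (l' : List (Fin n)), l'.Nodup → n - l'.length ≤ k →
          (((List.finRange n).drop (m + 1)).map Y).prod * (l'.map X).prod ∈ S' := by
        intro k
        induction k with
        | zero =>
          intro l' hl' hlen
          refine hmemcase l' hl' ?_
          have hle : l'.length ≤ n := by
            have h := hl'.length_le_card
            simpa using h
          have huniv : l'.toFinset = Finset.univ := by
            apply Finset.eq_univ_of_card
            rw [List.toFinset_card_of_nodup hl', Fintype.card_fin]
            omega
          rw [← List.mem_toFinset, huniv]
          exact Finset.mem_univ μ
        | succ k ihk =>
          intro l' hl' hlen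
          by_cases hμl' : μ ∈ l'
          · exact hmemcase l' hl' hμl'
          · have hle : l'.length ≤ n := by
              have h := hl'.length_le_card
              simpa using h
            have hlt : l'.length < n := by
              rcases lt_or_eq_of_le hle with h | h
              · exact h
              · exfalso
                apply hμl'
                have huniv : l'.toFinset = Finset.univ := by
                  apply Finset.eq_univ_of_card
                  rw [List.toFinset_card_of_nodup hl', Fintype.card_fin]
                  exact h
                rw [← List.mem_toFinset, huniv]
                exact Finset.mem_univ μ
            have hYz : Y μ * ((((List.finRange n).drop (m + 1)).map Y).prod * (l'.map X).prod)
                = (((List.finRange n).drop m).map Y).prod * (l'.map X).prod := by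
              rw [← mul_assoc, hYt]
            have hXz : X μ * ((((List.finRange n).drop (m + 1)).map Y).prod * (l'.map X).prod)
                = ((-1 : ℂ)) ^ ((List.finRange n).drop (m + 1)).length •
                  ((((List.finRange n).drop (m + 1)).map Y).prod
                    * ((μ :: l').map X).prod) := by
              rw [← mul_assoc, hmove μ _ hall, smul_mul_assoc, mul_assoc, List.map_cons,
                List.prod_cons]
            have hrec : (((List.finRange n).drop (m + 1)).map Y).prod
                * ((μ :: l').map X).prod ∈ S' := by
              refine ihk (μ :: l') (List.nodup_cons.mpr ⟨hμl', hl'⟩) ?_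
              rw [List.length_cons]
              omega
            have h2z := hkey ((((List.finRange n).drop (m + 1)).map Y).prod * (l'.map X).prod)
            rw [hYz, hXz] at h2z
            have heq : (((List.finRange n).drop (m + 1)).map Y).prod * (l'.map X).prod
                = ((1 : ℂ) / 2) • ((2 : ℂ) • ((((List.finRange n).drop (m + 1)).map Y).prod
                  * (l'.map X).prod)) := by
              rw [smul_smul]
              norm_num
            rw [heq, h2z]
            refine S'.smul_mem _ (add_mem ?_ ?_)
            · exact hx_left μ _ (ihm (Nat.le_of_lt hm) l' hl')
            · rw [mul_smul_comm]
              exact S'.smul_mem _ (hy_left μ _ hrec)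
      exact hinner (n - l.length) l hl le_rfl
  have h1mem : (1 : A) ∈ S' := by
    have h := houter n le_rfl [] List.nodup_nil
    have hdn : (List.finRange n).drop n = [] := by
      apply List.drop_eq_nil_of_le
      simp
    rw [hdn] at h
    simpa using h
  have halg : ∀ a : A, ∀ w ∈ S', a * w ∈ S' := by
    have hAll : ∀ a ∈ Algebra.adjoin ℂ (Set.range X ∪ Set.range Y), ∀ w ∈ S', a * w ∈ S' := by
      intro a ha
      induction ha using Algebra.adjoin_induction with
      | mem g hg =>
        rcases hg with ⟨j, rfl⟩ | ⟨j, rfl⟩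
        · exact hx_left j
        · exact hy_left j
      | algebraMap r =>
        intro w hw
        rw [← Algebra.smul_def]
        exact S'.smul_mem r hw
      | add x y hx hy ihx ihy =>
        intro w hw
        rw [add_mul]
        exact add_mem (ihx w hw) (ihy w hw)
      | mul x y hx hy ihx ihy =>
        intro w hw
        rw [mul_assoc]
        exact ihx _ (ihy w hw)
    intro a
    exact hAll a (by rw [hadj]; trivial)
  have htopS : S' = ⊤ := by
    rw [eq_top_iff]
    intro a _
    have h := halg a 1 h1mem
    rwa [mul_one] at h
  -- eigenspace bounds for the graded pieces
  have hTE : ∀ p' q' : ℕ,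
      Submodule.span ℂ {w | ∃ P Q : Finset (Fin n), P.card = p' ∧ Q.card = q' ∧ w = U P Q}
        ≤ Module.End.eigenspace (LinearMap.mulLeft ℂ τ)
            (Complex.I * (2 * (p' : ℂ) - (n : ℂ)) / 2) := by
    intro p' q'
    refine Submodule.span_le.mpr ?_
    rintro w ⟨P, Q, hP, hQ, rfl⟩
    rw [SetLike.mem_coe, Module.End.mem_eigenspace_iff]
    simp only [LinearMap.mulLeft_apply]
    rw [← hP]
    exact hτU P Q
  have hTF : ∀ p' q' : ℕ,
      Submodule.span ℂ {w | ∃ P Q : Finset (Fin n), P.card = p' ∧ Q.card = q' ∧ w = U P Q}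
        ≤ Module.End.eigenspace (LinearMap.mulRight ℂ τ')
            (Complex.I * ((n : ℂ) - 2 * (q' : ℂ)) / 2) := by
    intro p' q'
    refine Submodule.span_le.mpr ?_
    rintro w ⟨P, Q, hP, hQ, rfl⟩
    rw [SetLike.mem_coe, Module.End.mem_eigenspace_iff]
    simp only [LinearMap.mulRight_apply]
    rw [← hQ]
    exact hUτ' P Q
  -- everything is a sum of graded pieces
  have hSle : S' ≤ ⨆ p' : ℕ, ⨆ q' : ℕ,
      Submodule.span ℂ {w | ∃ P Q : Finset (Fin n), P.card = p' ∧ Q.card = q' ∧ w = U P Q} := by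
    rw [hS']
    refine Submodule.span_le.mpr ?_
    rintro w ⟨l, r, rfl⟩
    obtain ⟨c1, P, hP⟩ := reduce_prod X hXX l
    obtain ⟨c2, Q, hQ⟩ := reduce_prod X hXX r
    rw [SetLike.mem_coe]
    have heq : (l.map X).prod * u * (r.map X).prod = (c1 * c2) • U P Q := by
      rw [hP, hQ, hU, smul_mul_assoc, smul_mul_assoc, mul_smul_comm, smul_smul]
    rw [heq]
    refine Submodule.smul_mem _ _ ?_
    refine Submodule.mem_iSup_of_mem P.card ?_
    refine Submodule.mem_iSup_of_mem Q.card ?_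
    exact Submodule.subset_span ⟨P, Q, rfl, rfl, rfl⟩
  -- injectivity of the eigenvalue maps
  have hinj1 : Function.Injective
      (fun k : ℕ => Complex.I * (2 * (k : ℂ) - (n : ℂ)) / 2) := by
    intro a b hab
    simp only at hab
    have h2 : Complex.I * (2 * (a : ℂ) - n) = Complex.I * (2 * (b : ℂ) - n) := by
      linear_combination 2 * hab
    have h3 := mul_left_cancel₀ Complex.I_ne_zero h2
    have h4 : (a : ℂ) = (b : ℂ) := by linear_combination h3 / 2
    exact_mod_cast h4
  have hinj2 : Function.Injective
      (fun k : ℕ => Complex.I * ((n : ℂ) - 2 * (k : ℂ)) / 2) := by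
    intro a b hab
    simp only at hab
    have h2 : Complex.I * ((n : ℂ) - 2 * a) = Complex.I * ((n : ℂ) - 2 * b) := by
      linear_combination 2 * hab
    have h3 := mul_left_cancel₀ Complex.I_ne_zero h2
    have h4 : (a : ℂ) = (b : ℂ) := by linear_combination -h3 / 2
    exact_mod_cast h4
  have hind1 : iSupIndep (fun k : ℕ =>
      Module.End.eigenspace (LinearMap.mulLeft ℂ τ)
        (Complex.I * (2 * (k : ℂ) - (n : ℂ)) / 2)) :=
    (Module.End.eigenspaces_iSupIndep (LinearMap.mulLeft ℂ τ)).comp hinj1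
  have hind2 : iSupIndep (fun k : ℕ =>
      Module.End.eigenspace (LinearMap.mulRight ℂ τ')
        (Complex.I * ((n : ℂ) - 2 * (k : ℂ)) / 2)) :=
    (Module.End.eigenspaces_iSupIndep (LinearMap.mulRight ℂ τ')).comp hinj2
  -- the two directions
  ext w
  simp only [SetLike.mem_coe, Set.mem_setOf_eq]
  constructor
  · intro hw
    have h1 : τ * w = (Complex.I * (2 * (p : ℂ) - (n : ℂ)) / 2) • w := by
      have hmem := hTE p q hw
      rw [Module.End.mem_eigenspace_iff] at hmem
      simpa using hmem
    have h2 : w * τ' = (Complex.I * ((n : ℂ) - 2 * (q : ℂ)) / 2) • w := by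
      have hmem := hTF p q hw
      rw [Module.End.mem_eigenspace_iff] at hmem
      simpa using hmem
    constructor
    · rw [h1, h2, ← sub_smul]
      congr 1
      ring
    · rw [h1, h2, ← add_smul]
      congr 1
      ring
  · rintro ⟨heq1, heq2⟩
    have hf : τ * w = (Complex.I * (2 * (p : ℂ) - (n : ℂ)) / 2) • w := by
      have h3 : (2 : ℂ) • (τ * w)
          = ((Complex.I * ((p : ℂ) + (q : ℂ) - (n : ℂ)))
            + (Complex.I * ((p : ℂ) - (q : ℂ)))) • w := by
        rw [add_smul, ← heq1, ← heq2, two_smul]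
        abel
      calc τ * w = ((1 : ℂ) / 2) • ((2 : ℂ) • (τ * w)) := by
            rw [smul_smul]; norm_num
        _ = ((1 : ℂ) / 2) • (((Complex.I * ((p : ℂ) + (q : ℂ) - (n : ℂ)))
            + (Complex.I * ((p : ℂ) - (q : ℂ)))) • w) := by rw [h3]
        _ = (Complex.I * (2 * (p : ℂ) - (n : ℂ)) / 2) • w := by
            rw [smul_smul]; congr 1; ring
    have hg : w * τ' = (Complex.I * ((n : ℂ) - 2 * (q : ℂ)) / 2) • w := by
      have h3 : (2 : ℂ) • (w * τ')
          = ((Complex.I * ((p : ℂ) - (q : ℂ)))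
            - (Complex.I * ((p : ℂ) + (q : ℂ) - (n : ℂ)))) • w := by
        rw [sub_smul, ← heq1, ← heq2, two_smul]
        abel
      calc w * τ' = ((1 : ℂ) / 2) • ((2 : ℂ) • (w * τ')) := by
            rw [smul_smul]; norm_num
        _ = ((1 : ℂ) / 2) • (((Complex.I * ((p : ℂ) - (q : ℂ)))
            - (Complex.I * ((p : ℂ) + (q : ℂ) - (n : ℂ)))) • w) := by rw [h3]
        _ = (Complex.I * ((n : ℂ) - 2 * (q : ℂ)) / 2) • w := by
            rw [smul_smul]; congr 1; ring
    have hwE : w ∈ Module.End.eigenspace (LinearMap.mulLeft ℂ τ)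
        (Complex.I * (2 * (p : ℂ) - (n : ℂ)) / 2) := by
      rw [Module.End.mem_eigenspace_iff]
      simpa using hf
    have hwF : w ∈ Module.End.eigenspace (LinearMap.mulRight ℂ τ')
        (Complex.I * ((n : ℂ) - 2 * (q : ℂ)) / 2) := by
      rw [Module.End.mem_eigenspace_iff]
      simpa using hg
    have hstep1 : w ∈ ⨆ q' : ℕ, Submodule.span ℂ
        {w | ∃ P Q : Finset (Fin n), P.card = p ∧ Q.card = q' ∧ w = U P Q} := by
      refine extract_component
        (fun k : ℕ => Module.End.eigenspace (LinearMap.mulLeft ℂ τ)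
          (Complex.I * (2 * (k : ℂ) - (n : ℂ)) / 2))
        (fun k : ℕ => ⨆ q' : ℕ, Submodule.span ℂ
          {w | ∃ P Q : Finset (Fin n), P.card = k ∧ Q.card = q' ∧ w = U P Q})
        (fun k => iSup_le (fun q' => hTE k q')) hind1 hwE ?_
      exact hSle (by rw [htopS]; trivial)
    exact extract_component
      (fun k : ℕ => Module.End.eigenspace (LinearMap.mulRight ℂ τ')
        (Complex.I * ((n : ℂ) - 2 * (k : ℂ)) / 2))
      (fun k : ℕ => Submodule.span ℂ
        {w | ∃ P Q : Finset (Fin n), P.card = p ∧ Q.card = k ∧ w = U P Q})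
      (fun k => hTF p k) hind2 hwF hstep1

end Key

open CliffordAlgebra in
/-- For `0 ≤ p, q ≤ n`, the subspace
`𝔘_{p,q} := span_ℂ {u_{P,Q} : |P| = p, |Q| = q}` is exactly the joint eigenspace
`{w : τ·w − w·τ' = i(p+q−n)·w and τ·w + w·τ' = i(p−q)·w}`. -/
theorem statement13 (V : Type*) [AddCommGroup V] [Module ℂ V] [FiniteDimensional ℂ V]
    (κ : LinearMap.BilinForm ℂ V)
    (hsymm : ∀ x y : V, κ x y = κ y x)
    (hnd : κ.Nondegenerate)
    (n : ℕ) (B : Module.Basis (Fin n ⊕ Fin n) ℂ V)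
    (b bb : Fin n → V)
    (hb : ∀ i, b i = B (Sum.inl i)) (hbb : ∀ i, bb i = B (Sum.inr i))
    (hbiso : ∀ i j, κ (b i) (b j) = 0)
    (hbbiso : ∀ i j, κ (bb i) (bb j) = 0)
    (hpair : ∀ i j, κ (b i) (bb j) = if i = j then (1 : ℂ) else 0)
    (u : CliffordAlgebra (LinearMap.BilinMap.toQuadraticMap κ))
    (hu : u = ((List.finRange n).map fun j =>
      ι (LinearMap.BilinMap.toQuadraticMap κ) (bb j)).prod)
    (τ τ' : CliffordAlgebra (LinearMap.BilinMap.toQuadraticMap κ))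
    (hτ : τ = algebraMap ℂ _ (-((n : ℂ) * Complex.I) / 2) +
      (Complex.I / 2) • ∑ j : Fin n,
        ι (LinearMap.BilinMap.toQuadraticMap κ) (b j) *
          ι (LinearMap.BilinMap.toQuadraticMap κ) (bb j))
    (hτ' : τ' = algebraMap ℂ _ (((n : ℂ) * Complex.I) / 2) -
      (Complex.I / 2) • ∑ j : Fin n,
        ι (LinearMap.BilinMap.toQuadraticMap κ) (bb j) *
          ι (LinearMap.BilinMap.toQuadraticMap κ) (b j))
    (U : Finset (Fin n) → Finset (Fin n) → CliffordAlgebra (LinearMap.BilinMap.toQuadraticMap κ))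
    (hU : ∀ P Q : Finset (Fin n), U P Q =
      ((P.sort (· ≤ ·)).map fun j =>
        ι (LinearMap.BilinMap.toQuadraticMap κ) (b j)).prod * u *
      ((Q.sort (· ≤ ·)).map fun j =>
        ι (LinearMap.BilinMap.toQuadraticMap κ) (b j)).prod) :
    ∀ p q : ℕ, p ≤ n → q ≤ n →
      (Submodule.span ℂ
          {w | ∃ P Q : Finset (Fin n), P.card = p ∧ Q.card = q ∧ w = U P Q} :
        Set (CliffordAlgebra (LinearMap.BilinMap.toQuadraticMap κ))) =
      {w | τ * w - w * τ' = (Complex.I * ((p : ℂ) + (q : ℂ) - (n : ℂ))) • w ∧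
           τ * w + w * τ' = (Complex.I * ((p : ℂ) - (q : ℂ))) • w} := by
  intro p q hp hq
  classical
  have hpolar : ∀ v w : V,
      ι (LinearMap.BilinMap.toQuadraticMap κ) v * ι (LinearMap.BilinMap.toQuadraticMap κ) w
        + ι (LinearMap.BilinMap.toQuadraticMap κ) w * ι (LinearMap.BilinMap.toQuadraticMap κ) v
        = algebraMap ℂ _ (κ v w + κ w v) := by
    intro v w
    rw [CliffordAlgebra.ι_mul_ι_add_swap, LinearMap.BilinMap.polar_toQuadraticMap]
  refine key n (fun j => ι (LinearMap.BilinMap.toQuadraticMap κ) (b j))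
    (fun j => ι (LinearMap.BilinMap.toQuadraticMap κ) (bb j)) ?_ ?_ ?_ ?_
    u hu τ τ' hτ hτ' U hU p q
  · intro i j
    rw [hpolar, hbiso i j, hbiso j i]
    simp
  · intro i j
    rw [hpolar, hbbiso i j, hbbiso j i]
    simp
  · intro i j
    rw [hpolar, hpair i j, hsymm (bb j) (b i), hpair i j]
    by_cases hij : i = j
    · rw [if_pos hij, if_pos hij]
      norm_num
    · rw [if_neg hij, if_neg hij]
      simp
  · rw [eq_top_iff]
    intro a ha
    clear ha
    induction a using CliffordAlgebra.induction with
    | algebraMap r => exact Subalgebra.algebraMap_mem _ r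
    | ι v =>
      have hgen : ∀ x ∈ Submodule.span ℂ (Set.range B),
          ι (LinearMap.BilinMap.toQuadraticMap κ) x ∈
            Algebra.adjoin ℂ
              (Set.range (fun j => ι (LinearMap.BilinMap.toQuadraticMap κ) (b j)) ∪
               Set.range (fun j => ι (LinearMap.BilinMap.toQuadraticMap κ) (bb j))) := by
        intro x hx
        induction hx using Submodule.span_induction with
        | mem y hy =>
          obtain ⟨i, rfl⟩ := hy
          cases i with
          | inl i =>
            exact Algebra.subset_adjoin (Or.inl ⟨i, by simp [hb]⟩)
          | inr i =>
            exact Algebra.subset_adjoin (Or.inr ⟨i, by simp [hbb]⟩)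
        | zero => rw [map_zero]; exact Subalgebra.zero_mem _
        | add y z hy hz ihy ihz => rw [map_add]; exact add_mem ihy ihz
        | smul c y hy ihy => rw [map_smul]; exact Subalgebra.smul_mem _ ihy c
      exact hgen v (by rw [B.span_eq]; trivial)
    | mul a c iha ihc => exact mul_mem iha ihc
    | add a c iha ihc => exact add_mem iha ihc
end
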